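/- arXiv:1307.6147 — 4 statements merged into one kernel-verified Lean document; each statement's English description precedes it below -/
import Mathlib

section
/- If T and T̃ are standard Young tableaux with n boxes whose underlying Young diagrams (shapes) are different, then Y_T · σ · Y_{T̃} = 0 in ℂ[S_n] for every permutation σ ∈ S_n; in particular Y_T · Y_{T̃} = 0. -/
open scoped Classical

/-- A standard Young tableau with `n` boxes: the boxes of a Young diagram are filled
bijectively with the numbers `1, …, n`, increasing along each row and down each column.
The entry function is `0` outside the diagram, making the representation canonical. -/
structure SYT (n : ℕ) where
  shape : YoungDiagram
  entry : ℕ × ℕ → ℕ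
  zero_outside : ∀ c : ℕ × ℕ, c ∉ shape.cells → entry c = 0
  bijOn : Set.BijOn entry (shape.cells : Set (ℕ × ℕ)) (Set.Icc 1 n)
  row_lt : ∀ i j₁ j₂ : ℕ, j₁ < j₂ → (i, j₂) ∈ shape.cells → entry (i, j₁) < entry (i, j₂)
  col_lt : ∀ i₁ i₂ j : ℕ, i₁ < i₂ → (i₂, j) ∈ shape.cells → entry (i₁, j) < entry (i₂, j)

namespace SYT

/-- The row index of the box of `T` containing the number `x + 1`. -/
def rowOf {n : ℕ} (T : SYT n) (x : Fin n) : ℕ :=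
  (T.shape.cells.filter fun c => T.entry c = (x : ℕ) + 1).sup Prod.fst

/-- The column index of the box of `T` containing the number `x + 1`. -/
def colOf {n : ℕ} (T : SYT n) (x : Fin n) : ℕ :=
  (T.shape.cells.filter fun c => T.entry c = (x : ℕ) + 1).sup Prod.snd

/-- A permutation is horizontal for `T` (i.e. belongs to the row group `R(T)`)
if it preserves the set of numbers in each row of `T`. -/
def IsHorizontal {n : ℕ} (T : SYT n) (σ : Equiv.Perm (Fin n)) : Prop :=
  ∀ x, T.rowOf (σ x) = T.rowOf x

/-- A permutation is vertical for `T` (i.e. belongs to the column group `C(T)`)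
if it preserves the set of numbers in each column of `T`. -/
def IsVertical {n : ℕ} (T : SYT n) (σ : Equiv.Perm (Fin n)) : Prop :=
  ∀ x, T.colOf (σ x) = T.colOf x

/-- The row symmetrizer `s_T = ∑_{h ∈ R(T)} h` in `ℂ[S_n]`. -/
noncomputable def rowSym {n : ℕ} (T : SYT n) : MonoidAlgebra ℂ (Equiv.Perm (Fin n)) :=
  ∑ σ ∈ Finset.univ.filter (fun σ => T.IsHorizontal σ),
    MonoidAlgebra.of ℂ (Equiv.Perm (Fin n)) σ

/-- The column antisymmetrizer `a_T = ∑_{v ∈ C(T)} sgn(v)·v` in `ℂ[S_n]`. -/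
noncomputable def colAntisym {n : ℕ} (T : SYT n) : MonoidAlgebra ℂ (Equiv.Perm (Fin n)) :=
  ∑ σ ∈ Finset.univ.filter (fun σ => T.IsVertical σ),
    ((Equiv.Perm.sign σ : ℤ) : ℂ) • MonoidAlgebra.of ℂ (Equiv.Perm (Fin n)) σ

end SYT

/-- The hook length of the box `c` of the Young diagram `μ`: the number of boxes to its
right in its row, plus the number of boxes below it in its column, plus one. -/
def hookLength (μ : YoungDiagram) (c : ℕ × ℕ) : ℕ :=
  (μ.rowLen c.1 - (c.2 + 1)) + (μ.colLen c.2 - (c.1 + 1)) + 1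

/-- `H(T)`: the product of the hook lengths of the boxes of the Young diagram `μ`. -/
def hookProd (μ : YoungDiagram) : ℕ :=
  ∏ c ∈ μ.cells, hookLength μ c

/-- The Young operator `Y_T = (1/H(T)) · s_T · a_T ∈ ℂ[S_n]`. -/
noncomputable def youngOp {n : ℕ} (T : SYT n) : MonoidAlgebra ℂ (Equiv.Perm (Fin n)) :=
  ((hookProd T.shape : ℂ))⁻¹ • (T.rowSym * T.colAntisym)

/-- `f_T(N) = ∏_{(j,k)} (N + k − j)`, the product running over the boxes of the Young
diagram `μ` in row `j` and column `k` (here boxes `c = (c.1, c.2)` are 0-indexed,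
with `c.1` the row and `c.2` the column, so the content `k - j` is `c.2 - c.1`). -/
noncomputable def fPoly (μ : YoungDiagram) (N : ℕ) : ℂ :=
  ∏ c ∈ μ.cells, ((N : ℂ) + (c.2 : ℂ) - (c.1 : ℂ))

theorem Equiv.Perm.apply_inv_self {α : Type*} (f : Equiv.Perm α) (x : α) : f (f⁻¹ x) = x :=
  Equiv.apply_symm_apply f x

section AuxProof

open Finset Equiv

variable {n : ℕ}

namespace SYT

lemma exists_cell (T : SYT n) (x : Fin n) :
    ∃ c ∈ T.shape.cells, T.entry c = (x : ℕ) + 1 := by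
  have hx : ((x : ℕ) + 1) ∈ Set.Icc 1 n := ⟨Nat.le_add_left 1 _, x.2⟩
  obtain ⟨c, hc, hce⟩ := T.bijOn.surjOn hx
  exact ⟨c, Finset.mem_coe.mp hc, hce⟩

/-- The cell of `T` containing `x+1`. -/
noncomputable def cellOf (T : SYT n) (x : Fin n) : ℕ × ℕ :=
  (T.exists_cell x).choose

lemma cellOf_mem (T : SYT n) (x : Fin n) : T.cellOf x ∈ T.shape.cells :=
  (T.exists_cell x).choose_spec.1

lemma entry_cellOf (T : SYT n) (x : Fin n) : T.entry (T.cellOf x) = (x : ℕ) + 1 :=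
  (T.exists_cell x).choose_spec.2

lemma cellOf_eq_of (T : SYT n) {x : Fin n} {c : ℕ × ℕ} (hc : c ∈ T.shape.cells)
    (he : T.entry c = (x : ℕ) + 1) : T.cellOf x = c :=
  T.bijOn.injOn (Finset.mem_coe.mpr (T.cellOf_mem x)) (Finset.mem_coe.mpr hc)
    (by rw [T.entry_cellOf, he])

lemma rowOf_eq (T : SYT n) (x : Fin n) : T.rowOf x = (T.cellOf x).1 := by
  have h : (T.shape.cells.filter fun c => T.entry c = (x : ℕ) + 1) = {T.cellOf x} := by
    ext c
    simp only [Finset.mem_filter, Finset.mem_singleton]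
    constructor
    · rintro ⟨hc, he⟩; exact (T.cellOf_eq_of hc he).symm
    · rintro rfl; exact ⟨T.cellOf_mem x, T.entry_cellOf x⟩
  rw [rowOf, h, Finset.sup_singleton]

lemma colOf_eq (T : SYT n) (x : Fin n) : T.colOf x = (T.cellOf x).2 := by
  have h : (T.shape.cells.filter fun c => T.entry c = (x : ℕ) + 1) = {T.cellOf x} := by
    ext c
    simp only [Finset.mem_filter, Finset.mem_singleton]
    constructor
    · rintro ⟨hc, he⟩; exact (T.cellOf_eq_of hc he).symm
    · rintro rfl; exact ⟨T.cellOf_mem x, T.entry_cellOf x⟩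
  rw [colOf, h, Finset.sup_singleton]

lemma cellOf_injective (T : SYT n) : Function.Injective T.cellOf := by
  intro x y h
  have hx := T.entry_cellOf x
  rw [h, T.entry_cellOf y] at hx
  exact Fin.ext (by omega)

lemma exists_cellOf (T : SYT n) {c : ℕ × ℕ} (hc : c ∈ T.shape.cells) :
    ∃ x : Fin n, T.cellOf x = c := by
  obtain ⟨h1, h2⟩ := T.bijOn.mapsTo (Finset.mem_coe.mpr hc)
  refine ⟨⟨T.entry c - 1, by omega⟩, T.cellOf_eq_of hc ?_⟩
  show T.entry c = T.entry c - 1 + 1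
  omega

lemma card_rowOf_fiber (T : SYT n) (i : ℕ) :
    (Finset.univ.filter fun x : Fin n => T.rowOf x = i).card = T.shape.rowLen i := by
  rw [T.shape.rowLen_eq_card]
  apply Finset.card_bij (fun x _ => T.cellOf x)
  · intro x hx
    rw [Finset.mem_filter] at hx
    rw [YoungDiagram.mem_row_iff]
    exact ⟨(YoungDiagram.mem_cells _).mp (T.cellOf_mem x), by rw [← T.rowOf_eq x]; exact hx.2⟩
  · intro x _ y _ h
    exact T.cellOf_injective h
  · intro c hc
    rw [YoungDiagram.mem_row_iff] at hc
    obtain ⟨x, rfl⟩ := T.exists_cellOf ((YoungDiagram.mem_cells _).mpr hc.1)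
    exact ⟨x, Finset.mem_filter.mpr ⟨Finset.mem_univ _, by rw [T.rowOf_eq]; exact hc.2⟩, rfl⟩

lemma card_colOf_fiber (T : SYT n) (j : ℕ) :
    (Finset.univ.filter fun x : Fin n => T.colOf x = j).card = T.shape.colLen j := by
  rw [T.shape.colLen_eq_card]
  apply Finset.card_bij (fun x _ => T.cellOf x)
  · intro x hx
    rw [Finset.mem_filter] at hx
    rw [YoungDiagram.mem_col_iff]
    exact ⟨(YoungDiagram.mem_cells _).mp (T.cellOf_mem x), by rw [← T.colOf_eq x]; exact hx.2⟩
  · intro x _ y _ h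
    exact T.cellOf_injective h
  · intro c hc
    rw [YoungDiagram.mem_col_iff] at hc
    obtain ⟨x, rfl⟩ := T.exists_cellOf ((YoungDiagram.mem_cells _).mpr hc.1)
    exact ⟨x, Finset.mem_filter.mpr ⟨Finset.mem_univ _, by rw [T.colOf_eq]; exact hc.2⟩, rfl⟩

lemma IsHorizontal.mul {T : SYT n} {g h : Equiv.Perm (Fin n)} (hg : T.IsHorizontal g)
    (hh : T.IsHorizontal h) : T.IsHorizontal (g * h) := fun x => by
  rw [Equiv.Perm.mul_apply]
  exact (hg (h x)).trans (hh x)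

lemma IsHorizontal.inv {T : SYT n} {g : Equiv.Perm (Fin n)} (hg : T.IsHorizontal g) :
    T.IsHorizontal g⁻¹ := fun x => by
  have h := hg (g⁻¹ x)
  rw [Equiv.Perm.apply_inv_self] at h
  exact h.symm

lemma IsVertical.mul {T : SYT n} {g h : Equiv.Perm (Fin n)} (hg : T.IsVertical g)
    (hh : T.IsVertical h) : T.IsVertical (g * h) := fun x => by
  rw [Equiv.Perm.mul_apply]
  exact (hg (h x)).trans (hh x)

lemma IsVertical.inv {T : SYT n} {g : Equiv.Perm (Fin n)} (hg : T.IsVertical g) :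
    T.IsVertical g⁻¹ := fun x => by
  have h := hg (g⁻¹ x)
  rw [Equiv.Perm.apply_inv_self] at h
  exact h.symm

lemma isHorizontal_swap (T : SYT n) {x y : Fin n} (h : T.rowOf x = T.rowOf y) :
    T.IsHorizontal (Equiv.swap x y) := by
  intro z
  rcases eq_or_ne z x with rfl | hzx
  · rw [Equiv.swap_apply_left]; exact h.symm
  rcases eq_or_ne z y with rfl | hzy
  · rw [Equiv.swap_apply_right]; exact h
  · rw [Equiv.swap_apply_of_ne_of_ne hzx hzy]

lemma isVertical_swap (T : SYT n) {x y : Fin n} (h : T.colOf x = T.colOf y) :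
    T.IsVertical (Equiv.swap x y) := by
  intro z
  rcases eq_or_ne z x with rfl | hzx
  · rw [Equiv.swap_apply_left]; exact h.symm
  rcases eq_or_ne z y with rfl | hzy
  · rw [Equiv.swap_apply_right]; exact h
  · rw [Equiv.swap_apply_of_ne_of_ne hzx hzy]

lemma of_mul_rowSym {T : SYT n} {h : Equiv.Perm (Fin n)} (hh : T.IsHorizontal h) :
    MonoidAlgebra.of ℂ (Equiv.Perm (Fin n)) h * T.rowSym = T.rowSym := by
  rw [rowSym, Finset.mul_sum]
  refine Finset.sum_nbij' (fun σ => h * σ) (fun σ => h⁻¹ * σ) ?_ ?_ ?_ ?_ ?_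
  · intro σ hσ
    rw [Finset.mem_filter] at hσ ⊢
    exact ⟨Finset.mem_univ _, hh.mul hσ.2⟩
  · intro σ hσ
    rw [Finset.mem_filter] at hσ ⊢
    exact ⟨Finset.mem_univ _, hh.inv.mul hσ.2⟩
  · intro σ _; group
  · intro σ _; group
  · intro σ _; rw [map_mul]

lemma rowSym_mul_of {T : SYT n} {h : Equiv.Perm (Fin n)} (hh : T.IsHorizontal h) :
    T.rowSym * MonoidAlgebra.of ℂ (Equiv.Perm (Fin n)) h = T.rowSym := by
  rw [rowSym, Finset.sum_mul]
  refine Finset.sum_nbij' (fun σ => σ * h) (fun σ => σ * h⁻¹) ?_ ?_ ?_ ?_ ?_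
  · intro σ hσ
    rw [Finset.mem_filter] at hσ ⊢
    exact ⟨Finset.mem_univ _, hσ.2.mul hh⟩
  · intro σ hσ
    rw [Finset.mem_filter] at hσ ⊢
    exact ⟨Finset.mem_univ _, hσ.2.mul hh.inv⟩
  · intro σ _; group
  · intro σ _; group
  · intro σ _; rw [map_mul]

lemma sign_sq (v : Equiv.Perm (Fin n)) :
    ((Equiv.Perm.sign v : ℤ) : ℂ) * ((Equiv.Perm.sign v : ℤ) : ℂ) = 1 := by
  rw [← Int.cast_mul, ← Units.val_mul, Int.units_mul_self]
  norm_num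

lemma of_mul_colAntisym {T : SYT n} {v : Equiv.Perm (Fin n)} (hv : T.IsVertical v) :
    MonoidAlgebra.of ℂ (Equiv.Perm (Fin n)) v * T.colAntisym
      = ((Equiv.Perm.sign v : ℤ) : ℂ) • T.colAntisym := by
  rw [colAntisym, Finset.mul_sum, Finset.smul_sum]
  refine Finset.sum_nbij' (fun σ => v * σ) (fun σ => v⁻¹ * σ) ?_ ?_ ?_ ?_ ?_
  · intro σ hσ
    rw [Finset.mem_filter] at hσ ⊢
    exact ⟨Finset.mem_univ _, hv.mul hσ.2⟩
  · intro σ hσ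
    rw [Finset.mem_filter] at hσ ⊢
    exact ⟨Finset.mem_univ _, hv.inv.mul hσ.2⟩
  · intro σ _; group
  · intro σ _; group
  · intro σ _
    rw [mul_smul_comm, ← map_mul, smul_smul]
    congr 1
    show ((Equiv.Perm.sign σ : ℤ) : ℂ)
        = ((Equiv.Perm.sign v : ℤ) : ℂ) * ((Equiv.Perm.sign (v * σ) : ℤ) : ℂ)
    rw [map_mul, Units.val_mul, Int.cast_mul, ← mul_assoc, sign_sq, one_mul]

lemma colAntisym_mul_of {T : SYT n} {v : Equiv.Perm (Fin n)} (hv : T.IsVertical v) :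
    T.colAntisym * MonoidAlgebra.of ℂ (Equiv.Perm (Fin n)) v
      = ((Equiv.Perm.sign v : ℤ) : ℂ) • T.colAntisym := by
  rw [colAntisym, Finset.sum_mul, Finset.smul_sum]
  refine Finset.sum_nbij' (fun σ => σ * v) (fun σ => σ * v⁻¹) ?_ ?_ ?_ ?_ ?_
  · intro σ hσ
    rw [Finset.mem_filter] at hσ ⊢
    exact ⟨Finset.mem_univ _, hσ.2.mul hv⟩
  · intro σ hσ
    rw [Finset.mem_filter] at hσ ⊢
    exact ⟨Finset.mem_univ _, hσ.2.mul hv.inv⟩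
  · intro σ _; group
  · intro σ _; group
  · intro σ _
    rw [smul_mul_assoc, ← map_mul, smul_smul]
    congr 1
    show ((Equiv.Perm.sign σ : ℤ) : ℂ)
        = ((Equiv.Perm.sign v : ℤ) : ℂ) * ((Equiv.Perm.sign (σ * v) : ℤ) : ℂ)
    rw [map_mul, Units.val_mul, Int.cast_mul, mul_comm ((Equiv.Perm.sign σ : ℤ) : ℂ),
      ← mul_assoc, sign_sq, one_mul]

end SYT

lemma eq_zero_of_self_eq_neg {M : Type*} [AddCommGroup M] [Module ℂ M] {a : M}
    (h : a = -a) : a = 0 := by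
  have h2 : (2 : ℂ) • a = 0 := by
    rw [two_smul]
    nth_rewrite 1 [h]
    exact neg_add_cancel a
  exact (smul_eq_zero.mp h2).resolve_left two_ne_zero

lemma key1 {n : ℕ} (T T' : SYT n) (σ : Equiv.Perm (Fin n)) {x y : Fin n} (hxy : x ≠ y)
    (hcol : T.colOf x = T.colOf y)
    (hrow : T'.rowOf (σ⁻¹ x) = T'.rowOf (σ⁻¹ y)) :
    T.colAntisym * MonoidAlgebra.of ℂ (Equiv.Perm (Fin n)) σ * T'.rowSym = 0 := by
  set t := Equiv.swap x y with ht
  set t' := Equiv.swap (σ⁻¹ x) (σ⁻¹ y) with ht'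
  have hvt : T.IsVertical t := T.isVertical_swap hcol
  have hht' : T'.IsHorizontal t' := T'.isHorizontal_swap hrow
  have hts : t * σ = σ * t' := by
    have h := Equiv.swap_apply_apply σ (σ⁻¹ x) (σ⁻¹ y)
    rw [Equiv.Perm.apply_inv_self, Equiv.Perm.apply_inv_self] at h
    rw [← ht, ← ht'] at h
    rw [h]
    group
  have hsign : ((Equiv.Perm.sign t : ℤ) : ℂ) = -1 := by
    rw [ht, Equiv.Perm.sign_swap hxy]
    norm_num
  have hA : T.colAntisym * MonoidAlgebra.of ℂ (Equiv.Perm (Fin n)) t = -T.colAntisym := by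
    rw [SYT.colAntisym_mul_of hvt, hsign, neg_one_smul]
  have hS : MonoidAlgebra.of ℂ (Equiv.Perm (Fin n)) t' * T'.rowSym = T'.rowSym :=
    SYT.of_mul_rowSym hht'
  have e : MonoidAlgebra.of ℂ (Equiv.Perm (Fin n)) σ * T'.rowSym
      = MonoidAlgebra.of ℂ (Equiv.Perm (Fin n)) t
        * (MonoidAlgebra.of ℂ (Equiv.Perm (Fin n)) σ * T'.rowSym) := by
    conv_lhs => rw [← hS]
    rw [← mul_assoc, ← map_mul, ← hts, map_mul, mul_assoc]
  have hX : T.colAntisym * (MonoidAlgebra.of ℂ (Equiv.Perm (Fin n)) σ * T'.rowSym)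
      = -(T.colAntisym * (MonoidAlgebra.of ℂ (Equiv.Perm (Fin n)) σ * T'.rowSym)) := by
    conv_lhs => rw [e, ← mul_assoc, hA, neg_mul]
  rw [mul_assoc]
  exact eq_zero_of_self_eq_neg hX

lemma key2 {n : ℕ} (T T' : SYT n) (σ : Equiv.Perm (Fin n)) {x y : Fin n} (hxy : x ≠ y)
    (hcol : T'.colOf x = T'.colOf y)
    (hrow : T.rowOf (σ x) = T.rowOf (σ y)) :
    T.rowSym * MonoidAlgebra.of ℂ (Equiv.Perm (Fin n)) σ * T'.colAntisym = 0 := by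
  set u := Equiv.swap x y with hu
  set t := Equiv.swap (σ x) (σ y) with ht
  have hvu : T'.IsVertical u := T'.isVertical_swap hcol
  have hht : T.IsHorizontal t := T.isHorizontal_swap hrow
  have hts : σ * u = t * σ := by
    have h := Equiv.swap_apply_apply σ x y
    rw [← hu, ← ht] at h
    rw [h]
    group
  have hsign : ((Equiv.Perm.sign u : ℤ) : ℂ) = -1 := by
    rw [hu, Equiv.Perm.sign_swap hxy]
    norm_num
  have hA : MonoidAlgebra.of ℂ (Equiv.Perm (Fin n)) u * T'.colAntisym = -T'.colAntisym := by
    rw [SYT.of_mul_colAntisym hvu, hsign, neg_one_smul]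
  have hS : T.rowSym * MonoidAlgebra.of ℂ (Equiv.Perm (Fin n)) t = T.rowSym :=
    SYT.rowSym_mul_of hht
  have huu : MonoidAlgebra.of ℂ (Equiv.Perm (Fin n)) u
      * MonoidAlgebra.of ℂ (Equiv.Perm (Fin n)) u = 1 := by
    rw [← map_mul, hu, Equiv.swap_mul_self, map_one]
  have hX : T.rowSym * MonoidAlgebra.of ℂ (Equiv.Perm (Fin n)) σ * T'.colAntisym
      = -(T.rowSym * MonoidAlgebra.of ℂ (Equiv.Perm (Fin n)) σ * T'.colAntisym) := by
    calc T.rowSym * MonoidAlgebra.of ℂ (Equiv.Perm (Fin n)) σ * T'.colAntisym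
        = T.rowSym * MonoidAlgebra.of ℂ (Equiv.Perm (Fin n)) σ
            * ((MonoidAlgebra.of ℂ (Equiv.Perm (Fin n)) u
              * MonoidAlgebra.of ℂ (Equiv.Perm (Fin n)) u) * T'.colAntisym) := by
          rw [huu, one_mul]
      _ = (T.rowSym * MonoidAlgebra.of ℂ (Equiv.Perm (Fin n)) σ
            * MonoidAlgebra.of ℂ (Equiv.Perm (Fin n)) u)
            * (MonoidAlgebra.of ℂ (Equiv.Perm (Fin n)) u * T'.colAntisym) := by
          rw [mul_assoc (MonoidAlgebra.of ℂ (Equiv.Perm (Fin n)) u), ← mul_assoc]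
      _ = (T.rowSym * MonoidAlgebra.of ℂ (Equiv.Perm (Fin n)) (σ * u))
            * (MonoidAlgebra.of ℂ (Equiv.Perm (Fin n)) u * T'.colAntisym) := by
          rw [mul_assoc T.rowSym, ← map_mul]
      _ = (T.rowSym * (MonoidAlgebra.of ℂ (Equiv.Perm (Fin n)) t
            * MonoidAlgebra.of ℂ (Equiv.Perm (Fin n)) σ))
            * (MonoidAlgebra.of ℂ (Equiv.Perm (Fin n)) u * T'.colAntisym) := by
          rw [hts, map_mul]
      _ = (T.rowSym * MonoidAlgebra.of ℂ (Equiv.Perm (Fin n)) σ)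
            * (MonoidAlgebra.of ℂ (Equiv.Perm (Fin n)) u * T'.colAntisym) := by
          rw [← mul_assoc T.rowSym, hS]
      _ = (T.rowSym * MonoidAlgebra.of ℂ (Equiv.Perm (Fin n)) σ) * (-T'.colAntisym) := by
          rw [hA]
      _ = -(T.rowSym * MonoidAlgebra.of ℂ (Equiv.Perm (Fin n)) σ * T'.colAntisym) := by
          rw [mul_neg]
  exact eq_zero_of_self_eq_neg hX

section Counting

open Finset

lemma aux_card_lt (Q : YoungDiagram) (k : ℕ) :
    (Q.cells.filter fun p : ℕ × ℕ => p.1 < k).card = ∑ i ∈ Finset.range k, Q.rowLen i := by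
  have h : (Q.cells.filter fun p : ℕ × ℕ => p.1 < k)
      = (Finset.range k).biUnion (fun i => Q.row i) := by
    ext p
    simp only [Finset.mem_filter, Finset.mem_biUnion, Finset.mem_range,
      YoungDiagram.mem_row_iff, YoungDiagram.mem_cells]
    constructor
    · rintro ⟨hp, hk⟩; exact ⟨p.1, hk, hp, rfl⟩
    · rintro ⟨i, hi, hp, rfl⟩; exact ⟨hp, hi⟩
  rw [h, Finset.card_biUnion]
  · exact Finset.sum_congr rfl fun i _ => (Q.rowLen_eq_card).symm
  · intro i _ j _ hij
    rw [Function.onFun_apply, Finset.disjoint_left]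
    intro p hp hq
    rw [YoungDiagram.mem_row_iff] at hp hq
    exact hij (hp.2.symm.trans hq.2)

lemma card_r_lt {n : ℕ} (r : Fin n → ℕ) (k : ℕ) :
    (Finset.univ.filter fun x : Fin n => r x < k).card
      = ∑ i ∈ Finset.range k, (Finset.univ.filter fun x : Fin n => r x = i).card := by
  have h : (Finset.univ.filter fun x : Fin n => r x < k)
      = (Finset.range k).biUnion (fun i => Finset.univ.filter fun x : Fin n => r x = i) := by
    ext x
    simp only [Finset.mem_filter, Finset.mem_biUnion, Finset.mem_range, Finset.mem_univ,
      true_and]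
    constructor
    · intro hx; exact ⟨r x, hx, rfl⟩
    · rintro ⟨i, hi, rfl⟩; exact hi
  rw [h, Finset.card_biUnion]
  intro i _ j _ hij
  rw [Function.onFun_apply, Finset.disjoint_left]
  intro x hx hy
  rw [Finset.mem_filter] at hx hy
  exact hij (hx.2.symm.trans hy.2)

lemma col_filter_card (Q : YoungDiagram) (j k : ℕ) :
    ((Q.col j).filter fun p : ℕ × ℕ => p.1 < k).card = min (Q.colLen j) k := by
  have h : ((Q.col j).filter fun p : ℕ × ℕ => p.1 < k)
      = (Finset.range (min (Q.colLen j) k)).image (fun i => (i, j)) := by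
    ext p
    rcases p with ⟨a, b⟩
    simp only [Finset.mem_filter, YoungDiagram.mem_col_iff, Finset.mem_image, Finset.mem_range,
      lt_min_iff, Prod.mk.injEq]
    constructor
    · rintro ⟨⟨hmem, rfl⟩, hk⟩
      exact ⟨a, ⟨YoungDiagram.mem_iff_lt_colLen.mp hmem, hk⟩, rfl, rfl⟩
    · rintro ⟨i, ⟨hi1, hi2⟩, rfl, rfl⟩
      exact ⟨⟨YoungDiagram.mem_iff_lt_colLen.mpr hi1, rfl⟩, hi2⟩
  rw [h, Finset.card_image_of_injective _ (fun a b hab => (Prod.ext_iff.mp hab).1),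
    Finset.card_range]

lemma lemC {n : ℕ} (P Q : YoungDiagram) (r c : Fin n → ℕ)
    (hr : ∀ i, (Finset.univ.filter fun x : Fin n => r x = i).card = P.rowLen i)
    (hc : ∀ j, (Finset.univ.filter fun x : Fin n => c x = j).card = Q.colLen j)
    (hinj : ∀ x y : Fin n, c x = c y → r x = r y → x = y) (k : ℕ) :
    ∑ i ∈ Finset.range k, P.rowLen i ≤ ∑ i ∈ Finset.range k, Q.rowLen i := by
  set S := Finset.univ.filter fun x : Fin n => r x < k with hSdef
  have h1 : ∑ i ∈ Finset.range k, P.rowLen i = S.card := by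
    rw [hSdef, card_r_lt]
    exact Finset.sum_congr rfl fun i _ => (hr i).symm
  have h2 : S.card = ∑ j ∈ S.image c, (S.filter fun x => c x = j).card :=
    Finset.card_eq_sum_card_image c S
  have h3 : ∀ j, (S.filter fun x => c x = j).card ≤ min (Q.colLen j) k := by
    intro j
    refine le_min ?_ ?_
    · calc (S.filter fun x => c x = j).card
          ≤ (Finset.univ.filter fun x : Fin n => c x = j).card := by
            apply Finset.card_le_card
            intro x hx
            rw [Finset.mem_filter] at hx ⊢
            exact ⟨Finset.mem_univ _, hx.2⟩
        _ = Q.colLen j := hc j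
    · calc (S.filter fun x => c x = j).card
          ≤ (Finset.range k).card := by
            apply Finset.card_le_card_of_injOn r
            · intro x hx
              rw [Finset.mem_coe, Finset.mem_filter, hSdef, Finset.mem_filter] at hx
              exact Finset.mem_range.mpr hx.1.2
            · intro a ha b hb hab
              rw [Finset.mem_coe, Finset.mem_filter] at ha hb
              exact hinj a b (ha.2.trans hb.2.symm) hab
        _ = k := Finset.card_range k
  have h4 : ∑ j ∈ S.image c, min (Q.colLen j) k ≤ ∑ i ∈ Finset.range k, Q.rowLen i := by
    rw [← aux_card_lt]
    calc ∑ j ∈ S.image c, min (Q.colLen j) k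
        = ∑ j ∈ S.image c, ((Q.col j).filter fun p : ℕ × ℕ => p.1 < k).card :=
          Finset.sum_congr rfl fun j _ => (col_filter_card Q j k).symm
      _ = ((S.image c).biUnion fun j => (Q.col j).filter fun p : ℕ × ℕ => p.1 < k).card := by
          rw [Finset.card_biUnion]
          intro i _ j _ hij
          rw [Function.onFun_apply, Finset.disjoint_left]
          intro p hp hq
          rw [Finset.mem_filter, YoungDiagram.mem_col_iff] at hp hq
          exact hij (hp.1.2.symm.trans hq.1.2)
      _ ≤ (Q.cells.filter fun p : ℕ × ℕ => p.1 < k).card := by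
          apply Finset.card_le_card
          intro p hp
          rw [Finset.mem_biUnion] at hp
          obtain ⟨j, _, hp⟩ := hp
          rw [Finset.mem_filter, YoungDiagram.mem_col_iff] at hp
          rw [Finset.mem_filter, YoungDiagram.mem_cells]
          exact ⟨hp.1.1, hp.2⟩
  calc ∑ i ∈ Finset.range k, P.rowLen i = S.card := h1
    _ = ∑ j ∈ S.image c, (S.filter fun x => c x = j).card := h2
    _ ≤ ∑ j ∈ S.image c, min (Q.colLen j) k := Finset.sum_le_sum fun j _ => h3 j
    _ ≤ ∑ i ∈ Finset.range k, Q.rowLen i := h4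

lemma card_fiber_comp {n : ℕ} (f : Fin n → ℕ) (π : Equiv.Perm (Fin n)) (i : ℕ) :
    (Finset.univ.filter fun x : Fin n => f (π x) = i).card
      = (Finset.univ.filter fun x : Fin n => f x = i).card := by
  apply Finset.card_bij (fun x _ => π x)
  · intro x hx
    rw [Finset.mem_filter] at hx ⊢
    exact ⟨Finset.mem_univ _, hx.2⟩
  · intro x _ y _ h
    exact π.injective h
  · intro y hy
    refine ⟨π⁻¹ y, ?_, ?_⟩
    · rw [Finset.mem_filter] at hy ⊢
      refine ⟨Finset.mem_univ _, ?_⟩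
      rw [Equiv.Perm.apply_inv_self]
      exact hy.2
    · exact Equiv.Perm.apply_inv_self π y

lemma shape_eq_of_partial (P Q : YoungDiagram)
    (h : ∀ k, ∑ i ∈ Finset.range k, P.rowLen i = ∑ i ∈ Finset.range k, Q.rowLen i) :
    P = Q := by
  have hrow : ∀ i, P.rowLen i = Q.rowLen i := by
    intro i
    have h1 := h i
    have h2 := h (i + 1)
    rw [Finset.sum_range_succ, Finset.sum_range_succ] at h2
    omega
  ext ⟨i, j⟩
  rw [YoungDiagram.mem_cells, YoungDiagram.mem_cells, YoungDiagram.mem_iff_lt_rowLen,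
    YoungDiagram.mem_iff_lt_rowLen, hrow i]

end Counting

lemma dichotomy {n : ℕ} (T T' : SYT n) (hshape : T.shape ≠ T'.shape) :
    (∀ σ : Equiv.Perm (Fin n),
        T.colAntisym * MonoidAlgebra.of ℂ (Equiv.Perm (Fin n)) σ * T'.rowSym = 0) ∨
    (∀ σ : Equiv.Perm (Fin n),
        T.rowSym * MonoidAlgebra.of ℂ (Equiv.Perm (Fin n)) σ * T'.colAntisym = 0) := by
  by_cases hcase : ∀ k, ∑ i ∈ Finset.range k, T'.shape.rowLen i
      ≤ ∑ i ∈ Finset.range k, T.shape.rowLen i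
  · right
    have hnot : ¬ ∀ k, ∑ i ∈ Finset.range k, T.shape.rowLen i
        ≤ ∑ i ∈ Finset.range k, T'.shape.rowLen i := by
      intro hall
      exact hshape (shape_eq_of_partial _ _ fun k => le_antisymm (hall k) (hcase k))
    push_neg at hnot
    obtain ⟨k, hk⟩ := hnot
    intro σ
    have hpair : ∃ x y : Fin n, x ≠ y ∧ T'.colOf x = T'.colOf y
        ∧ T.rowOf (σ x) = T.rowOf (σ y) := by
      by_contra hno
      push_neg at hno
      have hle := lemC T.shape T'.shape (fun x => T.rowOf (σ x)) (fun x => T'.colOf x)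
        (fun i => by rw [card_fiber_comp T.rowOf σ i]; exact T.card_rowOf_fiber i)
        (fun j => T'.card_colOf_fiber j)
        (fun x y hcxy hrxy => by
          by_contra hxy
          exact hno x y hxy hcxy hrxy) k
      omega
    obtain ⟨x, y, hxy, h1', h2'⟩ := hpair
    exact key2 T T' σ hxy h1' h2'
  · left
    push_neg at hcase
    obtain ⟨k, hk⟩ := hcase
    intro σ
    have hpair : ∃ x y : Fin n, x ≠ y ∧ T.colOf x = T.colOf y
        ∧ T'.rowOf (σ⁻¹ x) = T'.rowOf (σ⁻¹ y) := by
      by_contra hno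
      push_neg at hno
      have hle := lemC T'.shape T.shape (fun x => T'.rowOf (σ⁻¹ x)) (fun x => T.colOf x)
        (fun i => by rw [card_fiber_comp T'.rowOf σ⁻¹ i]; exact T'.card_rowOf_fiber i)
        (fun j => T.card_colOf_fiber j)
        (fun x y hcxy hrxy => by
          by_contra hxy
          exact hno x y hxy hcxy hrxy) k
      omega
    obtain ⟨x, y, hxy, h1', h2'⟩ := hpair
    exact key1 T T' σ hxy h1' h2'

lemma sandwich {n : ℕ} (a b : MonoidAlgebra ℂ (Equiv.Perm (Fin n)))
    (h : ∀ g : Equiv.Perm (Fin n), a * MonoidAlgebra.of ℂ (Equiv.Perm (Fin n)) g * b = 0)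
    (x : MonoidAlgebra ℂ (Equiv.Perm (Fin n))) : a * x * b = 0 := by
  induction x using MonoidAlgebra.induction with
  | zero => simp
  | single_add g cg f hg hcg ih =>
    have hsingle : (MonoidAlgebra.single g cg : MonoidAlgebra ℂ (Equiv.Perm (Fin n)))
        = cg • MonoidAlgebra.of ℂ (Equiv.Perm (Fin n)) g := by
      rw [MonoidAlgebra.of_apply, MonoidAlgebra.smul_single', mul_one]
    rw [mul_add, add_mul, ih, add_zero, hsingle, mul_smul_comm, smul_mul_assoc, h, smul_zero]

end AuxProof

/-- **Young operators of different shapes annihilate each other.**  If `T` and `T̃` are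
standard Young tableaux with `n` boxes whose underlying Young diagrams are different,
then `Y_T · σ · Y_{T̃} = 0` for every permutation `σ ∈ S_n`; in particular
`Y_T · Y_{T̃} = 0`. -/
theorem youngOp_mul_perm_mul_youngOp_eq_zero {n : ℕ} (T T' : SYT n)
    (hshape : T.shape ≠ T'.shape) :
    (∀ σ : Equiv.Perm (Fin n),
        youngOp T * MonoidAlgebra.of ℂ (Equiv.Perm (Fin n)) σ * youngOp T' = 0) ∧
      youngOp T * youngOp T' = 0 := by
  have main : ∀ σ : Equiv.Perm (Fin n),
      youngOp T * MonoidAlgebra.of ℂ (Equiv.Perm (Fin n)) σ * youngOp T' = 0 := by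
    intro σ
    have hz : (T.rowSym * T.colAntisym) * MonoidAlgebra.of ℂ (Equiv.Perm (Fin n)) σ
        * (T'.rowSym * T'.colAntisym) = 0 := by
      have hassoc : (T.rowSym * T.colAntisym) * MonoidAlgebra.of ℂ (Equiv.Perm (Fin n)) σ
          * (T'.rowSym * T'.colAntisym)
          = T.rowSym * ((T.colAntisym * MonoidAlgebra.of ℂ (Equiv.Perm (Fin n)) σ * T'.rowSym)
            * T'.colAntisym) := by
        simp only [mul_assoc]
      rcases dichotomy T T' hshape with h | h
      · rw [hassoc, h σ, zero_mul, mul_zero]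
      · rw [hassoc, ← mul_assoc]
        exact sandwich T.rowSym T'.colAntisym h _
    rw [youngOp, youngOp, smul_mul_assoc, smul_mul_assoc, mul_smul_comm, hz, smul_zero,
      smul_zero]
  refine ⟨main, ?_⟩
  have h1 := main 1
  rw [map_one, mul_one] at h1
  exact h1
end

section
/- Let T be a standard Young tableau with n boxes and let N ≥ 1. Then the trace of the linear operator D(Y_T) on (ℂ^N)^{⊗n} equals f_T(N)/H(T), where f_T(N) = ∏_{(j,k)} (N + k − j), the product running over all boxes of the shape of T located in row j and column k, and H(T) is the product of the hook lengths of the boxes of the shape of T. -/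
open scoped Classical

/-- `(ℂ^N)^{⊗n}`, realized concretely as the Euclidean space whose orthonormal basis is
indexed by functions `Fin n → Fin N` (the product basis built from the standard basis
of `ℂ^N`); its inner product is the one induced by the standard Hermitian inner
product on `ℂ^N`. -/
abbrev TensorPow (N n : ℕ) := EuclideanSpace ℂ (Fin n → Fin N)

/-- The representation of `S_n` on `(ℂ^N)^{⊗n}` which permutes the tensor factors. -/
def permAction (N n : ℕ) : Equiv.Perm (Fin n) →* Module.End ℂ (TensorPow N n) where
  toFun σ :=
    { toFun := fun v => WithLp.toLp 2 (fun f => v (f ∘ σ) : (Fin n → Fin N) → ℂ)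
      map_add' := fun _ _ => rfl
      map_smul' := fun _ _ => rfl }
  map_one' := rfl
  map_mul' := fun _ _ => rfl

/-- The algebra homomorphism `D : ℂ[S_n] → End((ℂ^N)^{⊗n})` extending the representation
of `S_n` on the `n`-fold tensor power of `ℂ^N` permuting tensor factors. -/
noncomputable def Dmap (N n : ℕ) :
    MonoidAlgebra ℂ (Equiv.Perm (Fin n)) →ₐ[ℂ] Module.End ℂ (TensorPow N n) :=
  MonoidAlgebra.lift ℂ (Module.End ℂ (TensorPow N n)) (Equiv.Perm (Fin n)) (permAction N n)

/-! ### Geometry of standard Young tableaux -/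

namespace SYT

variable {n : ℕ} (T : SYT n)

lemma cell_unique {c d : ℕ × ℕ} (hc : c ∈ T.shape.cells) (hd : d ∈ T.shape.cells)
    (h : T.entry c = T.entry d) : c = d :=
  T.bijOn.injOn hc hd h

lemma cell_spec (x : Fin n) :
    (T.rowOf x, T.colOf x) ∈ T.shape.cells ∧
      T.entry (T.rowOf x, T.colOf x) = (x : ℕ) + 1 := by
  have hx : ((x : ℕ) + 1) ∈ Set.Icc 1 n := ⟨Nat.succ_le_succ (Nat.zero_le _), x.2⟩
  obtain ⟨c, hc, he⟩ := T.bijOn.surjOn hx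
  have hc' : c ∈ T.shape.cells := hc
  have hfilter : (T.shape.cells.filter fun d => T.entry d = (x : ℕ) + 1) = {c} := by
    ext d
    simp only [Finset.mem_filter, Finset.mem_singleton]
    constructor
    · rintro ⟨hd, hde⟩
      exact T.cell_unique hd hc' (hde.trans he.symm)
    · rintro rfl; exact ⟨hc', he⟩
  have hr : T.rowOf x = c.1 := by
    rw [SYT.rowOf, hfilter, Finset.sup_singleton]
  have hcol : T.colOf x = c.2 := by
    rw [SYT.colOf, hfilter, Finset.sup_singleton]
  rw [hr, hcol]
  exact ⟨by simpa using hc', by simpa using he⟩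

lemma cell_mem (x : Fin n) : (T.rowOf x, T.colOf x) ∈ T.shape.cells := (T.cell_spec x).1

lemma cell_entry (x : Fin n) : T.entry (T.rowOf x, T.colOf x) = (x : ℕ) + 1 := (T.cell_spec x).2

/-- If `c` is a cell with entry `x+1` then `rowOf x = c.1` and `colOf x = c.2`. -/
lemma rowOf_colOf_eq {c : ℕ × ℕ} (hc : c ∈ T.shape.cells) (x : Fin n)
    (he : T.entry c = (x : ℕ) + 1) : T.rowOf x = c.1 ∧ T.colOf x = c.2 := by
  have := T.cell_unique (T.cell_mem x) hc (by rw [T.cell_entry x, he])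
  constructor
  · exact congrArg Prod.fst this
  · exact congrArg Prod.snd this

lemma eq_of_cell_eq {x y : Fin n} (hr : T.rowOf x = T.rowOf y) (hc : T.colOf x = T.colOf y) :
    x = y := by
  have h1 := T.cell_entry x
  have h2 := T.cell_entry y
  rw [hr, hc] at h1
  have := h1.symm.trans h2
  exact Fin.ext (by omega)

/-- In the same row, larger column means larger entry. -/
lemma lt_of_row_col_lt {x y : Fin n} (hr : T.rowOf x = T.rowOf y) (hc : T.colOf x < T.colOf y) :
    (x : ℕ) < (y : ℕ) := by
  have h := T.row_lt (T.rowOf y) (T.colOf x) (T.colOf y) hc (T.cell_mem y)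
  rw [T.cell_entry y] at h
  have hx : T.entry (T.rowOf y, T.colOf x) = (x : ℕ) + 1 := by
    rw [← hr]; exact T.cell_entry x
  omega

lemma colOf_lt_of_lt {x y : Fin n} (hr : T.rowOf x = T.rowOf y) (hxy : (x : ℕ) < (y : ℕ)) :
    T.colOf x < T.colOf y := by
  rcases lt_trichotomy (T.colOf x) (T.colOf y) with h | h | h
  · exact h
  · exact absurd (T.eq_of_cell_eq hr h) (by rintro rfl; omega)
  · exact absurd (T.lt_of_row_col_lt hr.symm h) (by omega)

/-- In the same column, larger row means larger entry. -/
lemma lt_of_col_row_lt {x y : Fin n} (hc : T.colOf x = T.colOf y) (hr : T.rowOf x < T.rowOf y) :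
    (x : ℕ) < (y : ℕ) := by
  have h := T.col_lt (T.rowOf x) (T.rowOf y) (T.colOf y) hr (T.cell_mem y)
  rw [T.cell_entry y] at h
  have hx : T.entry (T.rowOf x, T.colOf y) = (x : ℕ) + 1 := by
    rw [← hc]; exact T.cell_entry x
  omega

lemma rowOf_lt_of_lt {x y : Fin n} (hc : T.colOf x = T.colOf y) (hxy : (x : ℕ) < (y : ℕ)) :
    T.rowOf x < T.rowOf y := by
  rcases lt_trichotomy (T.rowOf x) (T.rowOf y) with h | h | h
  · exact h
  · exact absurd (T.eq_of_cell_eq h hc) (by rintro rfl; omega)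
  · exact absurd (T.lt_of_col_row_lt hc.symm h) (by omega)

/-- The number sitting in a cell of the diagram, as an element of `Fin n`. -/
lemma exists_num {c : ℕ × ℕ} (hc : c ∈ T.shape.cells) :
    ∃ x : Fin n, T.entry c = (x : ℕ) + 1 ∧ T.rowOf x = c.1 ∧ T.colOf x = c.2 := by
  have h : T.entry c ∈ Set.Icc 1 n := T.bijOn.mapsTo hc
  obtain ⟨h1, h2⟩ := h
  refine ⟨⟨T.entry c - 1, by omega⟩, by simp; omega, ?_⟩
  exact T.rowOf_colOf_eq hc _ (by simp; omega)

end SYT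
/-! ### Monoid algebra infrastructure -/

namespace TraceProof

open Equiv Finset MonoidAlgebra

abbrev MA (n : ℕ) := MonoidAlgebra ℂ (Equiv.Perm (Fin n))

instance maCoeFun {n : ℕ} : CoeFun (MA n) (fun _ => Equiv.Perm (Fin n) → ℂ) := ⟨fun x => x.coeff⟩

noncomputable def ofp {n : ℕ} (σ : Equiv.Perm (Fin n)) : MA n :=
  MonoidAlgebra.of ℂ (Equiv.Perm (Fin n)) σ

variable {n : ℕ}

lemma ofp_mul (σ τ : Equiv.Perm (Fin n)) : ofp σ * ofp τ = ofp (σ * τ) :=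
  (map_mul (MonoidAlgebra.of ℂ (Equiv.Perm (Fin n))) σ τ).symm

lemma ofp_apply (σ τ : Equiv.Perm (Fin n)) :
    (ofp σ) τ = if σ = τ then (1 : ℂ) else 0 := by
  rw [ofp, MonoidAlgebra.of_apply, MonoidAlgebra.single_apply]

lemma one_apply' (τ : Equiv.Perm (Fin n)) :
    (1 : MA n) τ = if τ = 1 then (1 : ℂ) else 0 := by
  rw [MonoidAlgebra.one_def, MonoidAlgebra.single_apply]
  by_cases h : τ = 1 <;> simp [h, eq_comm]

/-- The set of permutations fixing all points with index `≥ k`. -/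
def Fixge (n k : ℕ) (σ : Equiv.Perm (Fin n)) : Prop :=
  ∀ x : Fin n, k ≤ (x : ℕ) → σ x = x

lemma Fixge.one (k : ℕ) : Fixge n k 1 := fun _ _ => rfl

lemma Fixge.mul {k : ℕ} {σ τ : Equiv.Perm (Fin n)} (hσ : Fixge n k σ) (hτ : Fixge n k τ) :
    Fixge n k (σ * τ) := fun x hx => by
  simp only [Equiv.Perm.mul_apply, hτ x hx, hσ x hx]

lemma Fixge.inv {k : ℕ} {σ : Equiv.Perm (Fin n)} (hσ : Fixge n k σ) : Fixge n k σ⁻¹ :=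
  fun x hx => by
    have := hσ x hx
    conv_lhs => rw [← this]
    simp

lemma Fixge.lt_of_lt {k : ℕ} {σ : Equiv.Perm (Fin n)} (hσ : Fixge n k σ) {i : Fin n}
    (hi : (i : ℕ) < k) : ((σ i : Fin n) : ℕ) < k := by
  by_contra h
  push_neg at h
  have := hσ (σ i) h
  have : σ i = i := σ.injective this
  omega

lemma Fixge.swap {k : ℕ} {a b : Fin n} (ha : (a : ℕ) < k) (hb : (b : ℕ) < k) :
    Fixge n k (Equiv.swap a b) := fun x hx =>
  Equiv.swap_apply_of_ne_of_ne (by rintro rfl; omega) (by rintro rfl; omega)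

lemma Fixge.mono {k l : ℕ} (hkl : k ≤ l) {σ : Equiv.Perm (Fin n)} (hσ : Fixge n k σ) :
    Fixge n l σ := fun x hx => hσ x (hkl.trans hx)

/-- Triple product coefficient vanishing: if the outer factors are supported on `Fixge n k`
and the middle one vanishes there, the sandwich vanishes on `Fixge n k`. -/
lemma sandwich_eq_zero {k : ℕ} {A B X : MA n}
    (hA : ∀ α, A α ≠ 0 → Fixge n k α) (hB : ∀ β, B β ≠ 0 → Fixge n k β)
    (hX : ∀ g, Fixge n k g → X g = 0) {τ : Equiv.Perm (Fin n)} (hτ : Fixge n k τ) :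
    (A * X * B) τ = 0 := by
  classical
  have hrepr : ∀ (C : MA n), C = ∑ γ ∈ C.coeff.support, MonoidAlgebra.single γ (C γ) := by
    intro C
    conv_lhs => rw [← MonoidAlgebra.sum_coeff_single C]
    rfl
  rw [hrepr A, hrepr B]
  rw [Finset.sum_mul, Finset.sum_mul]
  rw [MonoidAlgebra.coeff_sum, Finset.sum_apply']
  refine Finset.sum_eq_zero fun α hα => ?_
  rw [Finset.mul_sum, MonoidAlgebra.coeff_sum, Finset.sum_apply']
  refine Finset.sum_eq_zero fun β hβ => ?_
  rw [mul_assoc, MonoidAlgebra.single_mul_apply, MonoidAlgebra.mul_single_apply]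
  have hαf : Fixge n k α := hA α (Finsupp.mem_support_iff.mp hα)
  have hβf : Fixge n k β := hB β (Finsupp.mem_support_iff.mp hβ)
  rw [hX _ ((hαf.inv.mul hτ).mul hβf.inv)]
  ring

end TraceProof
namespace TraceProof

open Equiv Finset MonoidAlgebra

variable {n : ℕ}

/-! ### Partial row/column groups, JM elements -/

/-- Horizontal permutations supported on the first `k` entries. -/
noncomputable def Hset (T : SYT n) (k : ℕ) : Finset (Equiv.Perm (Fin n)) :=
  Finset.univ.filter fun σ => T.IsHorizontal σ ∧ Fixge n k σ

noncomputable def Vset (T : SYT n) (k : ℕ) : Finset (Equiv.Perm (Fin n)) :=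
  Finset.univ.filter fun σ => T.IsVertical σ ∧ Fixge n k σ

noncomputable def sE (T : SYT n) (k : ℕ) : MA n := ∑ σ ∈ Hset T k, ofp σ

noncomputable def aE (T : SYT n) (k : ℕ) : MA n :=
  ∑ σ ∈ Vset T k, ((Equiv.Perm.sign σ : ℤ) : ℂ) • ofp σ

noncomputable def Jm (x : Fin n) : MA n :=
  ∑ i ∈ Finset.univ.filter (fun i : Fin n => (i : ℕ) < (x : ℕ)), ofp (Equiv.swap i x)

noncomputable def Zm (n N : ℕ) : ℕ → MA n
  | 0 => 1
  | k + 1 => if h : k < n then Zm n N k * ((N : ℂ) • (1 : MA n) + Jm ⟨k, h⟩) else Zm n N k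

noncomputable def Fq (N : ℕ) (T : SYT n) (k : ℕ) : ℂ :=
  ∑ σ : Equiv.Perm (Fin n), (sE T k * aE T k) σ * (Zm n N k) σ

lemma mem_Hset {T : SYT n} {k : ℕ} {σ : Equiv.Perm (Fin n)} :
    σ ∈ Hset T k ↔ T.IsHorizontal σ ∧ Fixge n k σ := by
  simp [Hset]

lemma mem_Vset {T : SYT n} {k : ℕ} {σ : Equiv.Perm (Fin n)} :
    σ ∈ Vset T k ↔ T.IsVertical σ ∧ Fixge n k σ := by
  simp [Vset]

lemma hor_mul {T : SYT n} {σ τ : Equiv.Perm (Fin n)} (hσ : T.IsHorizontal σ)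
    (hτ : T.IsHorizontal τ) : T.IsHorizontal (σ * τ) := fun x => by
  simp only [Equiv.Perm.mul_apply]; rw [hσ, hτ]

lemma hor_inv {T : SYT n} {σ : Equiv.Perm (Fin n)} (hσ : T.IsHorizontal σ) :
    T.IsHorizontal σ⁻¹ := fun x => by
  conv_rhs => rw [← (σ.apply_symm_apply x : σ (σ⁻¹ x) = x)]
  rw [hσ]; rfl

lemma ver_mul {T : SYT n} {σ τ : Equiv.Perm (Fin n)} (hσ : T.IsVertical σ)
    (hτ : T.IsVertical τ) : T.IsVertical (σ * τ) := fun x => by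
  simp only [Equiv.Perm.mul_apply]; rw [hσ, hτ]

lemma ver_inv {T : SYT n} {σ : Equiv.Perm (Fin n)} (hσ : T.IsVertical σ) :
    T.IsVertical σ⁻¹ := fun x => by
  conv_rhs => rw [← (σ.apply_symm_apply x : σ (σ⁻¹ x) = x)]
  rw [hσ]; rfl

lemma Hset_mul_mem {T : SYT n} {k : ℕ} {σ τ : Equiv.Perm (Fin n)} (hσ : σ ∈ Hset T k)
    (hτ : τ ∈ Hset T k) : σ * τ ∈ Hset T k := by
  rw [mem_Hset] at *
  exact ⟨hor_mul hσ.1 hτ.1, hσ.2.mul hτ.2⟩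

lemma Vset_mul_mem {T : SYT n} {k : ℕ} {σ τ : Equiv.Perm (Fin n)} (hσ : σ ∈ Vset T k)
    (hτ : τ ∈ Vset T k) : σ * τ ∈ Vset T k := by
  rw [mem_Vset] at *
  exact ⟨ver_mul hσ.1 hτ.1, hσ.2.mul hτ.2⟩

/-- Left absorption: multiplying `sE` on the right by a member of `Hset`. -/
lemma sE_absorb {T : SYT n} {k : ℕ} {h : Equiv.Perm (Fin n)} (hh : h ∈ Hset T k) :
    sE T k * ofp h = sE T k := by
  rw [sE, Finset.sum_mul]
  simp_rw [ofp_mul]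
  refine Finset.sum_bij' (fun σ _ => σ * h) (fun σ _ => σ * h⁻¹) ?_ ?_ ?_ ?_ ?_
  · intro σ hσ; exact Hset_mul_mem hσ hh
  · intro σ hσ
    refine Hset_mul_mem hσ ?_
    rw [mem_Hset] at hh ⊢
    exact ⟨hor_inv hh.1, hh.2.inv⟩
  · intro σ _; group
  · intro σ _; group
  · intro σ _; rfl

/-- Right absorption with sign for `aE`. -/
lemma aE_absorb {T : SYT n} {k : ℕ} {v : Equiv.Perm (Fin n)} (hv : v ∈ Vset T k) :
    ofp v * aE T k = ((Equiv.Perm.sign v : ℤ) : ℂ) • aE T k := by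
  rw [aE, Finset.mul_sum, Finset.smul_sum]
  simp_rw [mul_smul_comm, ofp_mul]
  refine Finset.sum_bij' (fun σ _ => v * σ) (fun σ _ => v⁻¹ * σ) ?_ ?_ ?_ ?_ ?_
  · intro σ hσ; exact Vset_mul_mem hv hσ
  · intro σ hσ
    refine Vset_mul_mem ?_ hσ
    rw [mem_Vset] at hv ⊢
    exact ⟨ver_inv hv.1, hv.2.inv⟩
  · intro σ _; group
  · intro σ _; group
  · intro σ _
    rw [smul_smul, map_mul]
    rcases Int.units_eq_one_or (Equiv.Perm.sign v) with h | h <;> simp [h]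

lemma sE_supp {T : SYT n} {k : ℕ} (α : Equiv.Perm (Fin n)) (hα : (sE T k) α ≠ 0) :
    Fixge n k α := by
  by_contra h
  apply hα
  rw [sE, MonoidAlgebra.coeff_sum, Finset.sum_apply']
  refine Finset.sum_eq_zero fun σ hσ => ?_
  rw [ofp_apply, if_neg]
  rintro rfl
  exact h (mem_Hset.mp hσ).2

lemma aE_supp {T : SYT n} {k : ℕ} (α : Equiv.Perm (Fin n)) (hα : (aE T k) α ≠ 0) :
    Fixge n k α := by
  by_contra h
  apply hα
  rw [aE, MonoidAlgebra.coeff_sum, Finset.sum_apply']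
  refine Finset.sum_eq_zero fun σ hσ => ?_
  rw [MonoidAlgebra.coeff_smul_apply, ofp_apply, if_neg, smul_zero]
  rintro rfl
  exact h (mem_Vset.mp hσ).2

lemma Zm_supp (N : ℕ) : ∀ (k : ℕ) (σ : Equiv.Perm (Fin n)), ¬ Fixge n k σ → (Zm n N k) σ = 0 := by
  intro k
  induction k with
  | zero =>
    intro σ hσ
    rw [Zm, one_apply', if_neg]
    rintro rfl
    exact hσ (Fixge.one 0)
  | succ k ih =>
    intro σ hσ
    rw [Fixge] at hσ
    push_neg at hσ
    obtain ⟨y, hy, hne⟩ := hσ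
    rw [Zm]
    split
    · next h =>
      rw [mul_add, MonoidAlgebra.coeff_add, Finsupp.add_apply]
      have h1 : (Zm n N k * ((N : ℂ) • (1 : MA n))) σ = (N : ℂ) * (Zm n N k) σ := by
        rw [mul_smul_comm, mul_one, MonoidAlgebra.coeff_smul_apply, smul_eq_mul]
      have hz : (Zm n N k) σ = 0 := by
        refine ih σ fun hf => hne (hf y (by omega))
      rw [h1, hz, mul_zero, zero_add]
      rw [Jm, Finset.mul_sum, MonoidAlgebra.coeff_sum, Finset.sum_apply']
      refine Finset.sum_eq_zero fun i hi => ?_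
      have hik : (i : ℕ) < k := by simpa using hi
      have hkey : (Zm n N k * ofp (Equiv.swap i ⟨k, h⟩)) σ
          = (Zm n N k) (σ * Equiv.swap i ⟨k, h⟩) := by
        rw [ofp, MonoidAlgebra.of_apply, MonoidAlgebra.mul_single_apply, mul_one,
          Equiv.swap_inv]
      rw [hkey]
      refine ih _ fun hf => ?_
      have hsw : Equiv.swap i ⟨k, h⟩ y = y :=
        Equiv.swap_apply_of_ne_of_ne (by rintro rfl; omega)
          (by rintro rfl; simp at hy)
      have := hf y (by omega)
      rw [Equiv.Perm.mul_apply, hsw] at this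
      exact hne this
    · exact ih σ fun hf => hne (hf y (by omega))

end TraceProof
namespace TraceProof

open Equiv Finset MonoidAlgebra

variable {n : ℕ}

def ltx (x : Fin n) : Finset (Fin n) := Finset.univ.filter fun i => (i : ℕ) < (x : ℕ)

noncomputable def Rw (T : SYT n) (x : Fin n) : Finset (Fin n) :=
  Finset.univ.filter fun m => (m : ℕ) < (x : ℕ) ∧ T.rowOf m = T.rowOf x

noncomputable def Cl (T : SYT n) (x : Fin n) : Finset (Fin n) :=
  Finset.univ.filter fun p => (p : ℕ) < (x : ℕ) ∧ T.colOf p = T.colOf x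

noncomputable def Pel (T : SYT n) (x : Fin n) : MA n :=
  ∑ a ∈ insert x (Rw T x), ofp (Equiv.swap a x)

noncomputable def Qel (T : SYT n) (x : Fin n) : MA n :=
  ∑ b ∈ insert x (Cl T x),
    ((Equiv.Perm.sign (Equiv.swap b x) : ℤ) : ℂ) • ofp (Equiv.swap b x)

lemma mem_Rw {T : SYT n} {x m : Fin n} :
    m ∈ Rw T x ↔ (m : ℕ) < (x : ℕ) ∧ T.rowOf m = T.rowOf x := by simp [Rw]

lemma mem_Cl {T : SYT n} {x p : Fin n} :
    p ∈ Cl T x ↔ (p : ℕ) < (x : ℕ) ∧ T.colOf p = T.colOf x := by simp [Cl]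

lemma mem_ltx {x i : Fin n} : i ∈ ltx x ↔ (i : ℕ) < (x : ℕ) := by simp [ltx]

lemma not_mem_Rw {T : SYT n} {x : Fin n} : x ∉ Rw T x := by simp [mem_Rw]

lemma not_mem_Cl {T : SYT n} {x : Fin n} : x ∉ Cl T x := by simp [mem_Cl]

lemma card_Rw (T : SYT n) (x : Fin n) : (Rw T x).card = T.colOf x := by
  rw [show T.colOf x = (Finset.range (T.colOf x)).card from (Finset.card_range _).symm]
  refine Finset.card_bij (fun m _ => T.colOf m) ?_ ?_ ?_
  · intro m hm
    rw [mem_Rw] at hm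
    exact Finset.mem_range.mpr (T.colOf_lt_of_lt hm.2 hm.1)
  · intro m hm m' hm' h
    rw [mem_Rw] at hm hm'
    exact T.eq_of_cell_eq (hm.2.trans hm'.2.symm) h
  · intro j hj
    rw [Finset.mem_range] at hj
    have hcell : (T.rowOf x, j) ∈ T.shape.cells :=
      T.shape.up_left_mem le_rfl hj.le (T.cell_mem x)
    obtain ⟨y, -, hyr, hyc⟩ := T.exists_num hcell
    have hy : (y : ℕ) < (x : ℕ) := T.lt_of_row_col_lt (by rw [hyr]) (by omega)
    exact ⟨y, mem_Rw.mpr ⟨hy, hyr⟩, hyc⟩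

lemma card_Cl (T : SYT n) (x : Fin n) : (Cl T x).card = T.rowOf x := by
  rw [show T.rowOf x = (Finset.range (T.rowOf x)).card from (Finset.card_range _).symm]
  refine Finset.card_bij (fun p _ => T.rowOf p) ?_ ?_ ?_
  · intro p hp
    rw [mem_Cl] at hp
    exact Finset.mem_range.mpr (T.rowOf_lt_of_lt hp.2 hp.1)
  · intro p hp p' hp' h
    rw [mem_Cl] at hp hp'
    exact T.eq_of_cell_eq h (hp.2.trans hp'.2.symm)
  · intro i hi
    rw [Finset.mem_range] at hi
    have hcell : (i, T.colOf x) ∈ T.shape.cells :=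
      T.shape.up_left_mem hi.le le_rfl (T.cell_mem x)
    obtain ⟨y, -, hyr, hyc⟩ := T.exists_num hcell
    have hy : (y : ℕ) < (x : ℕ) := T.lt_of_col_row_lt (by rw [hyc]) (by omega)
    exact ⟨y, mem_Cl.mpr ⟨hy, hyc⟩, hyr⟩

lemma swap_hor (T : SYT n) {a x : Fin n} (h : T.rowOf a = T.rowOf x) :
    T.IsHorizontal (Equiv.swap a x) := by
  intro y
  rcases eq_or_ne y a with rfl | hya
  · rw [Equiv.swap_apply_left, ← h]
  rcases eq_or_ne y x with rfl | hyx
  · rw [Equiv.swap_apply_right, h]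
  · rw [Equiv.swap_apply_of_ne_of_ne hya hyx]

lemma swap_ver (T : SYT n) {a x : Fin n} (h : T.colOf a = T.colOf x) :
    T.IsVertical (Equiv.swap a x) := by
  intro y
  rcases eq_or_ne y a with rfl | hya
  · rw [Equiv.swap_apply_left, ← h]
  rcases eq_or_ne y x with rfl | hyx
  · rw [Equiv.swap_apply_right, h]
  · rw [Equiv.swap_apply_of_ne_of_ne hya hyx]

/-- Coset decomposition of the partial row group. -/
lemma sE_succ (T : SYT n) (x : Fin n) :
    sE T ((x : ℕ) + 1) = sE T (x : ℕ) * Pel T x := by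
  rw [sE, sE, Pel, Finset.sum_mul_sum]
  simp_rw [ofp_mul]
  rw [← Finset.sum_product']
  refine (Finset.sum_bij' (fun (pr : _ × _) _ => pr.1 * Equiv.swap pr.2 x)
    (fun h _ => (h * Equiv.swap (h⁻¹ x) x, h⁻¹ x)) ?_ ?_ ?_ ?_ ?_).symm
  · -- membership forward
    rintro ⟨h', a⟩ hpr
    dsimp only
    rw [Finset.mem_product] at hpr
    dsimp only at hpr
    obtain ⟨hh, ha⟩ := hpr
    rw [mem_Hset] at hh ⊢
    have hra : T.rowOf a = T.rowOf x := by
      rcases Finset.mem_insert.mp ha with rfl | ha'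
      · exact rfl
      · exact (mem_Rw.mp ha').2
    have hax : (a : ℕ) ≤ (x : ℕ) := by
      rcases Finset.mem_insert.mp ha with rfl | ha'
      · exact le_rfl
      · exact (mem_Rw.mp ha').1.le
    refine ⟨hor_mul hh.1 (swap_hor T hra), ?_⟩
    exact (hh.2.mono (Nat.le_succ _)).mul (Fixge.swap (by omega) (by omega))
  · -- membership backward
    intro h hh
    rw [mem_Hset] at hh
    have hpx : h (h⁻¹ x) = x := h.apply_symm_apply x
    have hple : ((h⁻¹ x : Fin n) : ℕ) ≤ (x : ℕ) := by
      by_contra hgt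
      push_neg at hgt
      have := hh.2 (h⁻¹ x) (by omega)
      rw [this] at hpx
      have : ((h⁻¹ x : Fin n) : ℕ) = (x : ℕ) := by rw [hpx]
      omega
    have hrp : T.rowOf (h⁻¹ x) = T.rowOf x := by
      conv_rhs => rw [← hpx, hh.1 (h⁻¹ x)]
    rw [Finset.mem_product]
    dsimp only
    constructor
    · rw [mem_Hset]
      refine ⟨hor_mul hh.1 (swap_hor T hrp), ?_⟩
      intro y hy
      rcases eq_or_ne ((y : Fin n) : ℕ) (x : ℕ) with hyx | hyx
      · have : y = x := Fin.ext hyx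
        subst this
        simp only [Equiv.Perm.mul_apply, Equiv.swap_apply_right]
        exact hpx
      · have hy1 : (x : ℕ) + 1 ≤ (y : ℕ) := by omega
        have hswap : Equiv.swap (h⁻¹ x) x y = y := by
          refine Equiv.swap_apply_of_ne_of_ne ?_ (by rintro rfl; omega)
          rintro rfl
          omega
        simp only [Equiv.Perm.mul_apply, hswap]
        exact hh.2 y hy1
    · rcases eq_or_ne (h⁻¹ x) x with hpx' | hpx'
      · rw [hpx']; exact Finset.mem_insert_self _ _
      · refine Finset.mem_insert_of_mem (mem_Rw.mpr ⟨?_, hrp⟩)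
        have : ((h⁻¹ x : Fin n) : ℕ) ≠ (x : ℕ) := fun hc => hpx' (Fin.ext hc)
        omega
  · rintro ⟨h', a⟩ hpr
    dsimp only
    rw [Finset.mem_product] at hpr
    dsimp only at hpr
    have hfix : h' x = x := (mem_Hset.mp hpr.1).2 x le_rfl
    have h1 : (h' * Equiv.swap a x)⁻¹ x = a := by
      rw [mul_inv_rev, Equiv.Perm.mul_apply]
      have : h'⁻¹ x = x := by
        conv_lhs => rw [← hfix]
        simp
      rw [this, Equiv.swap_inv, Equiv.swap_apply_right]
    have h2 : h' * Equiv.swap a x * Equiv.swap ((h' * Equiv.swap a x)⁻¹ x) x = h' := by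
      rw [h1, mul_assoc, Equiv.swap_mul_self, mul_one]
    exact Prod.ext h2 h1
  · intro h _
    dsimp only
    show h * Equiv.swap (h⁻¹ x) x * Equiv.swap (h⁻¹ x) x = h
    rw [mul_assoc, Equiv.swap_mul_self, mul_one]
  · rintro ⟨h', a⟩ _; rfl

/-- Coset decomposition of the partial column group. -/
lemma aE_succ (T : SYT n) (x : Fin n) :
    aE T ((x : ℕ) + 1) = Qel T x * aE T (x : ℕ) := by
  rw [aE, aE, Qel, Finset.sum_mul_sum]
  have hterm : ∀ (b : Fin n) (v : Equiv.Perm (Fin n)),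
      (((Equiv.Perm.sign (Equiv.swap b x) : ℤ) : ℂ) • ofp (Equiv.swap b x)) *
        (((Equiv.Perm.sign v : ℤ) : ℂ) • ofp v)
      = ((Equiv.Perm.sign (Equiv.swap b x * v) : ℤ) : ℂ) • ofp (Equiv.swap b x * v) := by
    intro b v
    rw [smul_mul_assoc, mul_smul_comm, ofp_mul, smul_smul, map_mul]
    push_cast
    ring_nf
  simp_rw [hterm]
  rw [← Finset.sum_product']
  refine (Finset.sum_bij' (fun (pr : _ × _) _ => Equiv.swap pr.1 x * pr.2)
    (fun w _ => (w x, Equiv.swap (w x) x * w)) ?_ ?_ ?_ ?_ ?_).symm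
  · rintro ⟨b, v⟩ hpr
    dsimp only
    rw [Finset.mem_product] at hpr
    dsimp only at hpr
    obtain ⟨hb, hv⟩ := hpr
    rw [mem_Vset] at hv ⊢
    have hcb : T.colOf b = T.colOf x := by
      rcases Finset.mem_insert.mp hb with rfl | hb'
      · exact rfl
      · exact (mem_Cl.mp hb').2
    have hbx : (b : ℕ) ≤ (x : ℕ) := by
      rcases Finset.mem_insert.mp hb with rfl | hb'
      · exact le_rfl
      · exact (mem_Cl.mp hb').1.le
    refine ⟨ver_mul (swap_ver T hcb) hv.1, ?_⟩
    exact (Fixge.swap (k := (x : ℕ) + 1) (by omega) (by omega)).mul (hv.2.mono (Nat.le_succ _))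
  · intro w hw
    rw [mem_Vset] at hw
    have hqle : ((w x : Fin n) : ℕ) ≤ (x : ℕ) := by
      by_contra hgt
      push_neg at hgt
      have h1 := hw.2 (w x) (by omega)
      have : w x = x := w.injective h1
      rw [this] at hgt
      omega
    have hcq : T.colOf (w x) = T.colOf x := hw.1 x
    rw [Finset.mem_product]
    dsimp only
    constructor
    · rcases eq_or_ne (w x) x with hq | hq
      · rw [hq]; exact Finset.mem_insert_self _ _
      · refine Finset.mem_insert_of_mem (mem_Cl.mpr ⟨?_, hcq⟩)
        have : ((w x : Fin n) : ℕ) ≠ (x : ℕ) := fun hc => hq (Fin.ext hc)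
        omega
    · rw [mem_Vset]
      refine ⟨ver_mul (swap_ver T hcq) hw.1, ?_⟩
      intro y hy
      rcases eq_or_ne ((y : Fin n) : ℕ) (x : ℕ) with hyx | hyx
      · have : y = x := Fin.ext hyx
        subst this
        simp only [Equiv.Perm.mul_apply, Equiv.swap_apply_left]
      · have hy1 : (x : ℕ) + 1 ≤ (y : ℕ) := by omega
        have hwy : w y = y := hw.2 y hy1
        simp only [Equiv.Perm.mul_apply, hwy]
        refine Equiv.swap_apply_of_ne_of_ne ?_ (by rintro rfl; omega)
        rintro h
        exact hyx (congrArg Fin.val (w.injective (hwy.trans h)))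
  · rintro ⟨b, v⟩ hpr
    dsimp only
    rw [Finset.mem_product] at hpr
    dsimp only at hpr
    have hfix : v x = x := (mem_Vset.mp hpr.2).2 x le_rfl
    have h1 : (Equiv.swap b x * v) x = b := by
      rw [Equiv.Perm.mul_apply, hfix, Equiv.swap_apply_right]
    have h2 : Equiv.swap ((Equiv.swap b x * v) x) x * (Equiv.swap b x * v) = v := by
      rw [h1, ← mul_assoc, Equiv.swap_mul_self, one_mul]
    exact Prod.ext h1 h2
  · intro w _
    dsimp only
    show Equiv.swap (w x) x * (Equiv.swap (w x) x * w) = w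
    rw [← mul_assoc, Equiv.swap_mul_self, one_mul]
  · rintro ⟨b, v⟩ _; rfl

end TraceProof
namespace TraceProof

open Equiv Finset MonoidAlgebra

variable {n : ℕ}

/-- The Garnir-type vanishing: for `a` in the row of `x` and `b` in the column of `x`
(both among the first `x` entries), the transposition `(a b)` is killed by the
row-symmetrizer/column-antisymmetrizer sandwich. -/
lemma key3 (T : SYT n) (x : Fin n) {a b : Fin n} (ha : a ∈ Rw T x) (hb : b ∈ Cl T x) :
    sE T (x : ℕ) * ofp (Equiv.swap a b) * aE T (x : ℕ) = 0 := by
  obtain ⟨hax, hra⟩ := mem_Rw.mp ha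
  obtain ⟨hbx, hcb⟩ := mem_Cl.mp hb
  have hca : T.colOf a < T.colOf x := T.colOf_lt_of_lt hra hax
  have hrb : T.rowOf b < T.rowOf x := T.rowOf_lt_of_lt hcb hbx
  have hcell : (T.rowOf b, T.colOf a) ∈ T.shape.cells :=
    T.shape.up_left_mem hrb.le hca.le (T.cell_mem x)
  obtain ⟨y, -, hyr, hyc⟩ := T.exists_num hcell
  -- basic distinctness
  have hyb : (y : ℕ) < (b : ℕ) := T.lt_of_row_col_lt (by rw [hyr]) (by omega)
  have hyx : (y : ℕ) < (x : ℕ) := by omega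
  have hya : y ≠ a := by
    intro h
    rw [h] at hyr
    omega
  have hab : a ≠ b := by
    intro h
    rw [h] at hra
    omega
  have hyb' : y ≠ b := by
    intro h
    rw [h] at hyc
    omega
  -- the two absorbable transpositions
  have hH : Equiv.swap y b ∈ Hset T (x : ℕ) := by
    rw [mem_Hset]
    exact ⟨swap_hor T (by rw [hyr]), Fixge.swap (by omega) (by omega)⟩
  have hV : Equiv.swap y a ∈ Vset T (x : ℕ) := by
    rw [mem_Vset]
    exact ⟨swap_ver T hyc, Fixge.swap (by omega) (by omega)⟩
  -- braid identity
  have hbraid : Equiv.swap y b * Equiv.swap a b = Equiv.swap a b * Equiv.swap y a := by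
    have h1 : Equiv.swap a b * Equiv.swap y a * (Equiv.swap a b)⁻¹
        = Equiv.swap (Equiv.swap a b y) (Equiv.swap a b a) := by
      rw [Equiv.swap_inv]
      exact (Equiv.swap_apply_apply (Equiv.swap a b) y a).symm
    rw [Equiv.swap_apply_of_ne_of_ne hya hyb', Equiv.swap_apply_left] at h1
    calc Equiv.swap y b * Equiv.swap a b
        = Equiv.swap a b * Equiv.swap y a * (Equiv.swap a b)⁻¹ * Equiv.swap a b := by
          rw [h1]
      _ = Equiv.swap a b * Equiv.swap y a := by
          rw [Equiv.swap_inv, mul_assoc, Equiv.swap_mul_self, mul_one]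
  have hsign : ((Equiv.Perm.sign (Equiv.swap y a) : ℤ) : ℂ) = -1 := by
    rw [Equiv.Perm.sign_swap hya]
    norm_num
  have e3 : ofp (Equiv.swap y a) * aE T (x : ℕ) = -aE T (x : ℕ) := by
    rw [aE_absorb hV, hsign, neg_one_smul]
  have e2 : ofp (Equiv.swap y b) * (ofp (Equiv.swap a b) * aE T (x : ℕ))
      = ofp (Equiv.swap a b) * (ofp (Equiv.swap y a) * aE T (x : ℕ)) := by
    calc ofp (Equiv.swap y b) * (ofp (Equiv.swap a b) * aE T (x : ℕ))
        = ofp (Equiv.swap y b * Equiv.swap a b) * aE T (x : ℕ) := by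
          rw [← mul_assoc, ofp_mul]
      _ = ofp (Equiv.swap a b * Equiv.swap y a) * aE T (x : ℕ) := by rw [hbraid]
      _ = ofp (Equiv.swap a b) * (ofp (Equiv.swap y a) * aE T (x : ℕ)) := by
          rw [← ofp_mul, mul_assoc]
  have hkey : sE T (x : ℕ) * ofp (Equiv.swap a b) * aE T (x : ℕ)
      = -(sE T (x : ℕ) * ofp (Equiv.swap a b) * aE T (x : ℕ)) := by
    conv_lhs => rw [← sE_absorb hH]
    calc sE T (x : ℕ) * ofp (Equiv.swap y b) * ofp (Equiv.swap a b) * aE T (x : ℕ)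
        = sE T (x : ℕ) * (ofp (Equiv.swap y b) * (ofp (Equiv.swap a b) * aE T (x : ℕ))) := by
          simp only [mul_assoc]
      _ = sE T (x : ℕ) * (ofp (Equiv.swap a b) * (ofp (Equiv.swap y a) * aE T (x : ℕ))) := by
          rw [e2]
      _ = -(sE T (x : ℕ) * ofp (Equiv.swap a b) * aE T (x : ℕ)) := by
          rw [e3]
          simp only [mul_neg, mul_assoc]
  have h2 : (2 : ℂ) • (sE T (x : ℕ) * ofp (Equiv.swap a b) * aE T (x : ℕ)) = 0 := by
    rw [two_smul]
    nth_rewrite 1 [hkey]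
    rw [neg_add_cancel]
  have := smul_eq_zero.mp h2
  rcases this with h | h
  · norm_num at h
  · exact h

/-- `aE` commutes with `N + J_x`. -/
lemma aE_comm (N : ℕ) (T : SYT n) (x : Fin n) :
    aE T (x : ℕ) * ((N : ℂ) • (1 : MA n) + Jm x)
      = ((N : ℂ) • (1 : MA n) + Jm x) * aE T (x : ℕ) := by
  rw [mul_add, add_mul]
  congr 1
  · rw [mul_smul_comm, smul_mul_assoc, mul_one, one_mul]
  · -- aE * Jm = Jm * aE
    rw [aE, Jm, Finset.sum_mul_sum, Finset.sum_mul_sum]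
    conv_rhs => rw [Finset.sum_comm]
    refine Finset.sum_congr rfl fun v hv => ?_
    rw [mem_Vset] at hv
    have hvx : v x = x := hv.2 x le_rfl
    have hterm : ∀ i, ((Equiv.Perm.sign v : ℤ) : ℂ) • ofp v * ofp (Equiv.swap i x)
        = ((Equiv.Perm.sign v : ℤ) : ℂ) • ofp (v * Equiv.swap i x) := by
      intro i
      rw [smul_mul_assoc, ofp_mul]
    have hterm' : ∀ i, ofp (Equiv.swap i x) * (((Equiv.Perm.sign v : ℤ) : ℂ) • ofp v)
        = ((Equiv.Perm.sign v : ℤ) : ℂ) • ofp (Equiv.swap i x * v) := by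
      intro i
      rw [mul_smul_comm, ofp_mul]
    simp_rw [hterm, hterm']
    refine Finset.sum_bij' (fun i _ => v i) (fun i _ => v⁻¹ i) ?_ ?_ ?_ ?_ ?_
    · intro i hi
      simp only [Finset.mem_filter, Finset.mem_univ, true_and] at hi ⊢
      exact hv.2.lt_of_lt hi
    · intro i hi
      simp only [Finset.mem_filter, Finset.mem_univ, true_and] at hi ⊢
      exact hv.2.inv.lt_of_lt hi
    · intro i _; simp
    · intro i _; simp
    · intro i _
      congr 1
      rw [Equiv.mul_swap_eq_swap_mul, hvx]

/-- Coefficient formula for right multiplication by `N + J_x`. -/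
lemma mul_NJ_apply (N : ℕ) (A : MA n) (x : Fin n) (σ : Equiv.Perm (Fin n)) :
    (A * ((N : ℂ) • (1 : MA n) + Jm x)) σ
      = (N : ℂ) * A σ + ∑ i ∈ ltx x, A (σ * Equiv.swap i x) := by
  rw [mul_add, MonoidAlgebra.coeff_add, Finsupp.add_apply]
  congr 1
  · rw [mul_smul_comm, mul_one, MonoidAlgebra.coeff_smul_apply, smul_eq_mul]
  · rw [Jm, Finset.mul_sum, MonoidAlgebra.coeff_sum, Finset.sum_apply']
    refine Finset.sum_congr rfl fun i _ => ?_
    rw [ofp, MonoidAlgebra.of_apply, MonoidAlgebra.mul_single_apply, mul_one, Equiv.swap_inv]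

/-- Moving the rightmost factor `N + J_x` of `Z` across the pairing. -/
lemma pairing (N : ℕ) (X Z : MA n) (x : Fin n) :
    ∑ σ : Equiv.Perm (Fin n), X σ * (Z * ((N : ℂ) • (1 : MA n) + Jm x)) σ
      = ∑ τ : Equiv.Perm (Fin n), (X * ((N : ℂ) • (1 : MA n) + Jm x)) τ * Z τ := by
  have hL : ∀ σ : Equiv.Perm (Fin n), X σ * (Z * ((N : ℂ) • (1 : MA n) + Jm x)) σ
      = (N : ℂ) * (X σ * Z σ) + ∑ i ∈ ltx x, X σ * Z (σ * Equiv.swap i x) := by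
    intro σ
    rw [mul_NJ_apply, mul_add, Finset.mul_sum]
    ring_nf
  have hR : ∀ τ : Equiv.Perm (Fin n), (X * ((N : ℂ) • (1 : MA n) + Jm x)) τ * Z τ
      = (N : ℂ) * (X τ * Z τ) + ∑ i ∈ ltx x, X (τ * Equiv.swap i x) * Z τ := by
    intro τ
    rw [mul_NJ_apply, add_mul, Finset.sum_mul, mul_assoc]
  simp_rw [hL, hR]
  rw [Finset.sum_add_distrib, Finset.sum_add_distrib]
  congr 1
  rw [Finset.sum_comm, Finset.sum_comm (s := Finset.univ)]
  refine Finset.sum_congr rfl fun i _ => ?_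
  refine Fintype.sum_equiv (Equiv.mulRight (Equiv.swap i x)) _ _ fun τ => ?_
  simp only [Equiv.coe_mulRight]
  have h1 : τ * Equiv.swap i x * Equiv.swap i x = τ := by
    rw [mul_assoc, Equiv.swap_mul_self, mul_one]
  rw [h1]

end TraceProof
namespace TraceProof

open Equiv Finset MonoidAlgebra

variable {n : ℕ}

noncomputable def Phi (N : ℕ) (T : SYT n) (k : ℕ) (Y : MA n) : ℂ :=
  ∑ τ : Equiv.Perm (Fin n), (sE T k * Y * aE T k) τ * (Zm n N k) τ

lemma Phi_sum {β : Type*} (N : ℕ) (T : SYT n) (k : ℕ) (s : Finset β) (f : β → MA n) :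
    Phi N T k (∑ j ∈ s, f j) = ∑ j ∈ s, Phi N T k (f j) := by
  unfold Phi
  rw [Finset.sum_comm]
  refine Finset.sum_congr rfl fun τ _ => ?_
  rw [Finset.mul_sum, Finset.sum_mul, MonoidAlgebra.coeff_sum, Finset.sum_apply', Finset.sum_mul]

lemma Phi_smul (N : ℕ) (T : SYT n) (k : ℕ) (c : ℂ) (Y : MA n) :
    Phi N T k (c • Y) = c * Phi N T k (Y) := by
  unfold Phi
  rw [Finset.mul_sum]
  refine Finset.sum_congr rfl fun τ _ => ?_
  rw [mul_smul_comm, smul_mul_assoc, MonoidAlgebra.coeff_smul_apply, smul_eq_mul]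
  ring

lemma Phi_one (N : ℕ) (T : SYT n) (k : ℕ) : Phi N T k 1 = Fq N T k := by
  unfold Phi Fq
  simp_rw [mul_one]

lemma Phi_kill (N : ℕ) (T : SYT n) (k : ℕ) (g : Equiv.Perm (Fin n)) (hg : ¬ Fixge n k g) :
    Phi N T k (ofp g) = 0 := by
  unfold Phi
  refine Finset.sum_eq_zero fun τ _ => ?_
  by_cases hτ : Fixge n k τ
  · rw [sandwich_eq_zero (fun α hα => sE_supp α hα) (fun β hβ => aE_supp β hβ)
      (fun γ hγ => ?_) hτ, zero_mul]
    rw [ofp_apply, if_neg]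
    rintro rfl
    exact hg hγ
  · rw [Zm_supp N k τ hτ, mul_zero]

lemma Phi_garnir (N : ℕ) (T : SYT n) (x : Fin n) {a b : Fin n} (ha : a ∈ Rw T x)
    (hb : b ∈ Cl T x) : Phi N T (x : ℕ) (ofp (Equiv.swap a b)) = 0 := by
  unfold Phi
  refine Finset.sum_eq_zero fun τ _ => ?_
  rw [key3 T x ha hb, MonoidAlgebra.coeff_zero, Finsupp.zero_apply, zero_mul]

lemma Rw_ne_Cl (T : SYT n) (x : Fin n) {a b : Fin n} (ha : a ∈ Rw T x) (hb : b ∈ Cl T x) :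
    a ≠ b := by
  obtain ⟨hax, hra⟩ := mem_Rw.mp ha
  obtain ⟨hbx, hcb⟩ := mem_Cl.mp hb
  rintro rfl
  have := T.eq_of_cell_eq hra hcb
  omega

/-- The element `N + J_x` written uniformly as a sum of scaled transpositions. -/
lemma W_eq (N : ℕ) (x : Fin n) :
    (N : ℂ) • (1 : MA n) + Jm x
      = ∑ i ∈ insert x (ltx x),
          (if i = x then (N : ℂ) else 1) • ofp (Equiv.swap i x) := by
  rw [Finset.sum_insert (by simp [mem_ltx])]
  rw [if_pos rfl, Equiv.swap_self]
  have h1 : ofp (Equiv.refl (Fin n)) = (1 : MA n) := by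
    rw [ofp]
    exact map_one _
  rw [h1]
  congr 1
  rw [Jm]
  refine Finset.sum_congr rfl fun i hi => ?_
  rw [if_neg, one_smul]
  rw [mem_ltx] at hi
  rintro rfl
  omega

/-- The key recursion. -/
lemma Fq_succ (N : ℕ) (T : SYT n) (x : Fin n) :
    Fq N T ((x : ℕ) + 1)
      = ((N : ℂ) + (T.colOf x : ℂ) - (T.rowOf x : ℂ)) * Fq N T (x : ℕ) := by
  classical
  set W : MA n := (N : ℂ) • (1 : MA n) + Jm x with hW
  have hZ : Zm n N ((x : ℕ) + 1) = Zm n N (x : ℕ) * W := by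
    rw [Zm, dif_pos x.2]
  -- step 1-2: pairing
  have h12 : Fq N T ((x : ℕ) + 1)
      = ∑ τ : Equiv.Perm (Fin n),
          ((sE T ((x : ℕ) + 1) * aE T ((x : ℕ) + 1)) * W) τ * (Zm n N (x : ℕ)) τ := by
    rw [Fq, hZ]
    exact pairing N _ _ x
  -- step 3: rearrange
  have h3 : (sE T ((x : ℕ) + 1) * aE T ((x : ℕ) + 1)) * W
      = sE T (x : ℕ) * (Pel T x * Qel T x * W) * aE T (x : ℕ) := by
    rw [sE_succ, aE_succ]
    calc sE T (x : ℕ) * Pel T x * (Qel T x * aE T (x : ℕ)) * W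
        = sE T (x : ℕ) * (Pel T x * Qel T x) * (aE T (x : ℕ) * W) := by
          simp only [mul_assoc]
      _ = sE T (x : ℕ) * (Pel T x * Qel T x) * (W * aE T (x : ℕ)) := by
          rw [aE_comm]
      _ = sE T (x : ℕ) * (Pel T x * Qel T x * W) * aE T (x : ℕ) := by
          simp only [mul_assoc]
  have h4 : Fq N T ((x : ℕ) + 1) = Phi N T (x : ℕ) (Pel T x * Qel T x * W) := by
    rw [h12, Phi]
    refine Finset.sum_congr rfl fun τ _ => ?_
    rw [h3]
  -- expand the triple product
  have htriple : Pel T x * Qel T x * W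
      = ∑ a ∈ insert x (Rw T x), ∑ b ∈ insert x (Cl T x), ∑ i ∈ insert x (ltx x),
          (((Equiv.Perm.sign (Equiv.swap b x) : ℤ) : ℂ) * (if i = x then (N : ℂ) else 1)) •
            ofp (Equiv.swap a x * Equiv.swap b x * Equiv.swap i x) := by
    rw [Pel, Qel, hW, W_eq, Finset.sum_mul_sum, Finset.sum_mul_sum]
    refine Finset.sum_congr rfl fun a _ => ?_
    simp_rw [Finset.sum_mul]
    rw [Finset.sum_comm]
    refine Finset.sum_congr rfl fun b _ => ?_
    refine Finset.sum_congr rfl fun i _ => ?_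
    simp only [smul_mul_assoc, mul_smul_comm, smul_smul, ofp_mul]
    rw [mul_comm]
  rw [h4, htriple, Phi_sum]
  simp_rw [Phi_sum, Phi_smul]
  have hkill : ∀ g : Equiv.Perm (Fin n), g x ≠ x → Phi N T (x : ℕ) (ofp g) = 0 := by
    intro g hg
    exact Phi_kill N T (x : ℕ) g fun hf => hg (hf x le_rfl)
  have hone : ofp (1 : Equiv.Perm (Fin n)) = (1 : MA n) := by
    rw [ofp]; exact map_one _
  have hrefl : (Equiv.refl (Fin n) : Equiv.Perm (Fin n)) = 1 := rfl
  have hsgn : ∀ b : Fin n, b ≠ x → ((Equiv.Perm.sign (Equiv.swap b x) : ℤ) : ℂ) = -1 := by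
    intro b hb
    rw [Equiv.Perm.sign_swap hb]
    norm_num
  have hsgnx : ((Equiv.Perm.sign (Equiv.swap x x) : ℤ) : ℂ) = 1 := by
    rw [Equiv.swap_self]
    simp
  set F := Fq N T (x : ℕ) with hF
  -- the inner value for a = x
  have hvalx : (∑ b ∈ insert x (Cl T x), ∑ i ∈ insert x (ltx x),
      (((Equiv.Perm.sign (Equiv.swap b x) : ℤ) : ℂ) * (if i = x then (N : ℂ) else 1)) *
        Phi N T (x : ℕ) (ofp (Equiv.swap x x * Equiv.swap b x * Equiv.swap i x)))
      = (N : ℂ) * F - (T.rowOf x : ℂ) * F := by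
    rw [Finset.sum_insert not_mem_Cl]
    have hbx : (∑ i ∈ insert x (ltx x),
        (((Equiv.Perm.sign (Equiv.swap x x) : ℤ) : ℂ) * (if i = x then (N : ℂ) else 1)) *
          Phi N T (x : ℕ) (ofp (Equiv.swap x x * Equiv.swap x x * Equiv.swap i x)))
        = (N : ℂ) * F := by
      rw [Finset.sum_insert (by simp [mem_ltx])]
      have h1 : Equiv.swap x x * Equiv.swap x x * Equiv.swap x x = 1 := by
        rw [Equiv.swap_self, hrefl]
        simp
      rw [h1, hone, Phi_one, if_pos rfl, hsgnx, one_mul]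
      rw [Finset.sum_eq_zero, add_zero, hF]
      intro i hi
      rw [mem_ltx] at hi
      have hix : i ≠ x := by rintro rfl; omega
      have : Equiv.swap x x * Equiv.swap x x * Equiv.swap i x = Equiv.swap i x := by
        rw [Equiv.swap_self, hrefl]; simp
      rw [this, hkill _ (by rw [Equiv.swap_apply_right]; exact hix), mul_zero]
    rw [hbx]
    have hcl : ∀ b ∈ Cl T x, (∑ i ∈ insert x (ltx x),
        (((Equiv.Perm.sign (Equiv.swap b x) : ℤ) : ℂ) * (if i = x then (N : ℂ) else 1)) *
          Phi N T (x : ℕ) (ofp (Equiv.swap x x * Equiv.swap b x * Equiv.swap i x)))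
        = -F := by
      intro b hb
      obtain ⟨hblt, -⟩ := mem_Cl.mp hb
      have hbnex : b ≠ x := by rintro rfl; omega
      have hswx : ∀ i : Fin n, Equiv.swap x x * Equiv.swap b x * Equiv.swap i x
          = Equiv.swap b x * Equiv.swap i x := by
        intro i
        rw [Equiv.swap_self, hrefl]
        simp
      rw [Finset.sum_insert (by simp [mem_ltx])]
      have hterm_x : Equiv.swap x x * Equiv.swap b x * Equiv.swap x x = Equiv.swap b x := by
        rw [Equiv.swap_self, hrefl]; simp
      rw [hterm_x, hkill _ (by rw [Equiv.swap_apply_right]; exact hbnex), mul_zero, zero_add]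
      rw [Finset.sum_eq_single_of_mem b (mem_ltx.mpr hblt)]
      · rw [hswx, Equiv.swap_mul_self, hone, Phi_one, if_neg hbnex, hsgn b hbnex, ← hF]
        ring
      · intro i hi hib
        rw [mem_ltx] at hi
        have hix : i ≠ x := by rintro rfl; omega
        rw [hswx, hkill _ ?_, mul_zero]
        have : (Equiv.swap b x * Equiv.swap i x) x = i := by
          rw [Equiv.Perm.mul_apply, Equiv.swap_apply_right,
            Equiv.swap_apply_of_ne_of_ne hib hix]
        rw [this]
        exact hix
    rw [Finset.sum_congr rfl hcl, Finset.sum_const, card_Cl, nsmul_eq_mul]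
    push_cast
    ring
  -- the inner value for a ∈ Rw
  have hvala : ∀ a ∈ Rw T x, (∑ b ∈ insert x (Cl T x), ∑ i ∈ insert x (ltx x),
      (((Equiv.Perm.sign (Equiv.swap b x) : ℤ) : ℂ) * (if i = x then (N : ℂ) else 1)) *
        Phi N T (x : ℕ) (ofp (Equiv.swap a x * Equiv.swap b x * Equiv.swap i x)))
      = F := by
    intro a ha
    obtain ⟨halt, -⟩ := mem_Rw.mp ha
    have hanex : a ≠ x := by rintro rfl; omega
    rw [Finset.sum_insert not_mem_Cl]
    have hbx : (∑ i ∈ insert x (ltx x),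
        (((Equiv.Perm.sign (Equiv.swap x x) : ℤ) : ℂ) * (if i = x then (N : ℂ) else 1)) *
          Phi N T (x : ℕ) (ofp (Equiv.swap a x * Equiv.swap x x * Equiv.swap i x)))
        = F := by
      have hswx : ∀ i : Fin n, Equiv.swap a x * Equiv.swap x x * Equiv.swap i x
          = Equiv.swap a x * Equiv.swap i x := by
        intro i
        rw [Equiv.swap_self, hrefl]
        simp
      rw [Finset.sum_insert (by simp [mem_ltx])]
      have h1 : Equiv.swap a x * Equiv.swap x x * Equiv.swap x x = Equiv.swap a x := by
        rw [Equiv.swap_self, hrefl]; simp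
      rw [h1, hkill _ (by rw [Equiv.swap_apply_right]; exact hanex), mul_zero, zero_add]
      rw [Finset.sum_eq_single_of_mem a (mem_ltx.mpr halt)]
      · rw [hswx, Equiv.swap_mul_self, hone, Phi_one, if_neg hanex, hsgnx, ← hF]
        ring
      · intro i hi hia
        rw [mem_ltx] at hi
        have hix : i ≠ x := by rintro rfl; omega
        rw [hswx, hkill _ ?_, mul_zero]
        have : (Equiv.swap a x * Equiv.swap i x) x = i := by
          rw [Equiv.Perm.mul_apply, Equiv.swap_apply_right,
            Equiv.swap_apply_of_ne_of_ne hia hix]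
        rw [this]
        exact hix
    rw [hbx]
    have hcl : ∀ b ∈ Cl T x, (∑ i ∈ insert x (ltx x),
        (((Equiv.Perm.sign (Equiv.swap b x) : ℤ) : ℂ) * (if i = x then (N : ℂ) else 1)) *
          Phi N T (x : ℕ) (ofp (Equiv.swap a x * Equiv.swap b x * Equiv.swap i x)))
        = 0 := by
      intro b hb
      obtain ⟨hblt, -⟩ := mem_Cl.mp hb
      have hbnex : b ≠ x := by rintro rfl; omega
      have hab : a ≠ b := Rw_ne_Cl T x ha hb
      rw [Finset.sum_insert (by simp [mem_ltx])]
      have hterm_x : Phi N T (x : ℕ)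
          (ofp (Equiv.swap a x * Equiv.swap b x * Equiv.swap x x)) = 0 := by
        refine hkill _ ?_
        have h2 : (Equiv.swap a x * Equiv.swap b x * Equiv.swap x x) x = b := by
          rw [Equiv.swap_self, hrefl, mul_one, Equiv.Perm.mul_apply, Equiv.swap_apply_right,
            Equiv.swap_apply_of_ne_of_ne (Ne.symm hab) hbnex]
        rw [h2]
        exact hbnex
      rw [hterm_x, mul_zero, zero_add]
      refine Finset.sum_eq_zero fun i hi => ?_
      rw [mem_ltx] at hi
      have hix : i ≠ x := by rintro rfl; omega
      rcases eq_or_ne i b with hib | hib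
      · -- i = b : the product is swap a x, killed
        have h3 : Equiv.swap a x * Equiv.swap b x * Equiv.swap i x = Equiv.swap a x := by
          rw [hib, mul_assoc, Equiv.swap_mul_self, mul_one]
        rw [h3, hkill _ (by rw [Equiv.swap_apply_right]; exact hanex), mul_zero]
      rcases eq_or_ne i a with hia | hia
      · -- i = a : the Garnir case
        have h4 : Equiv.swap a x * Equiv.swap b x * Equiv.swap i x = Equiv.swap a b := by
          rw [hia]
          have h5 := Equiv.swap_apply_apply (Equiv.swap a x) b x
          rw [Equiv.swap_apply_of_ne_of_ne (Ne.symm hab) hbnex, Equiv.swap_apply_right,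
            Equiv.swap_inv] at h5
          rw [← h5, Equiv.swap_comm]
        rw [h4, Phi_garnir N T x ha hb, mul_zero]
      · -- generic i : killed
        rw [hkill _ ?_, mul_zero]
        have h6 : (Equiv.swap a x * Equiv.swap b x * Equiv.swap i x) x = i := by
          simp only [Equiv.Perm.mul_apply]
          rw [Equiv.swap_apply_right, Equiv.swap_apply_of_ne_of_ne hib hix,
            Equiv.swap_apply_of_ne_of_ne hia hix]
        rw [h6]
        exact hix
    rw [Finset.sum_congr rfl hcl, Finset.sum_const]
    simp
  rw [Finset.sum_insert not_mem_Rw, hvalx, Finset.sum_congr rfl hvala, Finset.sum_const,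
    card_Rw, nsmul_eq_mul]
  push_cast
  ring

end TraceProof
namespace TraceProof

open Equiv Finset MonoidAlgebra

variable {n : ℕ}

lemma Fq_zero (N : ℕ) (T : SYT n) : Fq N T 0 = 1 := by
  have hH : Hset T 0 = {1} := by
    ext σ
    rw [mem_Hset, Finset.mem_singleton]
    constructor
    · rintro ⟨-, hf⟩
      exact Equiv.ext fun y => hf y (Nat.zero_le _)
    · rintro rfl
      exact ⟨fun y => rfl, Fixge.one 0⟩
  have hV : Vset T 0 = {1} := by
    ext σ
    rw [mem_Vset, Finset.mem_singleton]
    constructor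
    · rintro ⟨-, hf⟩
      exact Equiv.ext fun y => hf y (Nat.zero_le _)
    · rintro rfl
      exact ⟨fun y => rfl, Fixge.one 0⟩
  have hs : sE T 0 = 1 := by
    rw [sE, hH, Finset.sum_singleton, ofp]
    exact map_one _
  have ha : aE T 0 = 1 := by
    rw [aE, hV, Finset.sum_singleton]
    have : ofp (1 : Equiv.Perm (Fin n)) = (1 : MA n) := map_one _
    rw [this]
    simp
  rw [Fq, hs, ha, one_mul]
  have hZ : Zm n N 0 = 1 := rfl
  rw [hZ]
  rw [Finset.sum_eq_single_of_mem 1 (Finset.mem_univ 1)]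
  · rw [one_apply', if_pos rfl, one_mul]
  · intro σ _ hσ
    rw [one_apply', if_neg hσ, zero_mul]

lemma Fq_eq (N : ℕ) (T : SYT n) :
    ∀ k, k ≤ n → Fq N T k
      = ∏ x ∈ Finset.univ.filter (fun x : Fin n => (x : ℕ) < k),
          ((N : ℂ) + (T.colOf x : ℂ) - (T.rowOf x : ℂ)) := by
  intro k
  induction k with
  | zero =>
    intro _
    rw [Fq_zero]
    rw [Finset.filter_false_of_mem (by intro x _; omega), Finset.prod_empty]
  | succ k ih =>
    intro hk1
    have hk : k < n := hk1
    set x₀ : Fin n := ⟨k, hk⟩ with hx₀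
    have hfilter : Finset.univ.filter (fun x : Fin n => (x : ℕ) < k + 1)
        = insert x₀ (Finset.univ.filter (fun x : Fin n => (x : ℕ) < k)) := by
      ext m
      simp only [Finset.mem_filter, Finset.mem_univ, true_and, Finset.mem_insert]
      constructor
      · intro hm
        rcases eq_or_ne ((m : Fin n) : ℕ) k with h | h
        · left; exact Fin.ext h
        · right; omega
      · rintro (rfl | hm)
        · exact Nat.lt_succ_self k
        · omega
    rw [hfilter, Finset.prod_insert (by simp [hx₀]), ← ih hk.le]
    exact Fq_succ N T x₀

/-- Number of colorings fixed by a permutation. -/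
noncomputable def FixCard (N : ℕ) (σ : Equiv.Perm (Fin n)) : ℕ :=
  (Finset.univ.filter fun f : Fin n → Fin N => f ∘ σ = f).card

lemma FixCard_mul_swap (N : ℕ) (σ : Equiv.Perm (Fin n)) {κ x : Fin n} (hκx : κ ≠ x)
    (hσκ : σ κ = x) (hσx : σ x ≠ x) :
    FixCard N (σ * Equiv.swap κ x) = N * FixCard N σ := by
  classical
  set σ' := σ * Equiv.swap κ x with hσ'
  have hσ'x : σ' x = x := by rw [hσ', Equiv.Perm.mul_apply, Equiv.swap_apply_right, hσκ]
  have hσ'κ : σ' κ = σ x := by rw [hσ', Equiv.Perm.mul_apply, Equiv.swap_apply_left]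
  have hσ'y : ∀ y, y ≠ κ → y ≠ x → σ' y = σ y := by
    intro y h1 h2
    rw [hσ', Equiv.Perm.mul_apply, Equiv.swap_apply_of_ne_of_ne h1 h2]
  have hιx : σ x ≠ x := hσx
  have hcard : (Finset.univ.filter fun f : Fin n → Fin N => f ∘ σ' = f).card
      = ((Finset.univ.filter fun f : Fin n → Fin N => f ∘ σ = f) ×ˢ
          (Finset.univ : Finset (Fin N))).card := by
    refine Finset.card_bij' (fun g _ => (Function.update g x (g (σ x)), g x))
      (fun pr _ => Function.update pr.1 x pr.2) ?_ ?_ ?_ ?_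
    · -- forward membership
      intro g hg
      rw [Finset.mem_filter] at hg
      have hg' : ∀ y, g (σ' y) = g y := fun y => congrFun hg.2 y
      rw [Finset.mem_product, Finset.mem_filter]
      refine ⟨⟨Finset.mem_univ _, ?_⟩, Finset.mem_univ _⟩
      funext y
      show Function.update g x (g (σ x)) (σ y) = Function.update g x (g (σ x)) y
      rcases eq_or_ne y x with rfl | hyx
      · rw [Function.update_self, Function.update_of_ne hιx]
      rcases eq_or_ne y κ with hyκ | hyκ
      · subst hyκ
        rw [hσκ, Function.update_self, Function.update_of_ne hκx]
        have h1 := hg' y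
        rw [hσ'κ] at h1
        exact h1
      · have h2 : σ y ≠ x := by
          intro h
          exact hyκ (σ.injective (h.trans hσκ.symm))
        have h3 : σ y ≠ σ x := fun h => hyx (σ.injective h)
        rw [Function.update_of_ne h2, Function.update_of_ne hyx]
        have h4 : g (σ' y) = g y := hg' y
        rw [hσ'y y hyκ hyx] at h4
        exact h4
    · -- backward membership
      intro pr hpr
      rw [Finset.mem_product, Finset.mem_filter] at hpr
      have hf : ∀ y, pr.1 (σ y) = pr.1 y := fun y => congrFun hpr.1.2 y
      rw [Finset.mem_filter]
      refine ⟨Finset.mem_univ _, ?_⟩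
      funext y
      show Function.update pr.1 x pr.2 (σ' y) = Function.update pr.1 x pr.2 y
      rcases eq_or_ne y x with rfl | hyx
      · rw [hσ'x]
      rcases eq_or_ne y κ with hyκ | hyκ
      · subst hyκ
        rw [hσ'κ, Function.update_of_ne hιx, Function.update_of_ne hκx]
        have h5 : pr.1 (σ x) = pr.1 x := hf x
        have h6 := hf y
        rw [hσκ] at h6
        rw [h5, ← h6]
      · rw [hσ'y y hyκ hyx]
        have h2 : σ y ≠ x := by
          intro h
          exact hyκ (σ.injective (h.trans hσκ.symm))
        rw [Function.update_of_ne h2, Function.update_of_ne hyx]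
        exact hf y
    · -- left inverse
      intro g hg
      rw [Finset.mem_filter] at hg
      have hg' : ∀ y, g (σ' y) = g y := fun y => congrFun hg.2 y
      show Function.update (Function.update g x (g (σ x))) x (g x) = g
      rw [Function.update_idem, Function.update_eq_self]
    · -- right inverse
      intro pr hpr
      rw [Finset.mem_product, Finset.mem_filter] at hpr
      have hf : ∀ y, pr.1 (σ y) = pr.1 y := fun y => congrFun hpr.1.2 y
      show (Function.update (Function.update pr.1 x pr.2) x
          ((Function.update pr.1 x pr.2) (σ x)), (Function.update pr.1 x pr.2) x) = pr
      have h5 : pr.1 (σ x) = pr.1 x := hf x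
      refine Prod.ext ?_ (Function.update_self _ _ _)
      rw [Function.update_idem, Function.update_of_ne hιx, h5, Function.update_eq_self]
  rw [FixCard, FixCard, hcard, Finset.card_product, Finset.card_univ, Fintype.card_fin,
    mul_comm]

end TraceProof
namespace TraceProof

open Equiv Finset MonoidAlgebra

variable {n : ℕ}

lemma FixCard_one (N : ℕ) : (FixCard N (1 : Equiv.Perm (Fin n))) = N ^ n := by
  rw [FixCard]
  have : (Finset.univ.filter fun f : Fin n → Fin N => f ∘ ⇑(1 : Equiv.Perm (Fin n)) = f)
      = Finset.univ := by
    refine Finset.filter_true_of_mem fun f _ => ?_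
    rfl
  rw [this, Finset.card_univ, Fintype.card_fun, Fintype.card_fin, Fintype.card_fin]

lemma FixCard_eq_Zm (N : ℕ) (hN : 1 ≤ N) :
    ∀ k, k ≤ n → ∀ σ : Equiv.Perm (Fin n), Fixge n k σ →
      (FixCard N σ : ℂ) = Zm n N k σ * (N : ℂ) ^ (n - k) := by
  intro k
  induction k with
  | zero =>
    intro _ σ hσ
    have hσ1 : σ = 1 := Equiv.ext fun y => hσ y (Nat.zero_le _)
    subst hσ1
    rw [FixCard_one]
    have h1 : (Zm n N 0) (1 : Equiv.Perm (Fin n)) = 1 := by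
      rw [Zm, one_apply', if_pos rfl]
    rw [h1, one_mul, Nat.sub_zero]
    push_cast
    rfl
  | succ k ih =>
    intro hk1 σ hσ
    have hk : k < n := hk1
    set x : Fin n := ⟨k, hk⟩ with hx
    have hxval : (x : ℕ) = k := rfl
    have hZ : Zm n N (k + 1) σ
        = (N : ℂ) * Zm n N k σ + ∑ i ∈ ltx x, Zm n N k (σ * Equiv.swap i x) := by
      rw [Zm, dif_pos hk]
      exact mul_NJ_apply N (Zm n N k) x σ
    have hNC : (N : ℂ) ≠ 0 := by
      simp only [ne_eq, Nat.cast_eq_zero]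
      omega
    have hpow : (N : ℂ) ^ (n - k) = (N : ℂ) ^ (n - (k + 1)) * (N : ℂ) := by
      rw [← pow_succ]
      congr 1
      omega
    rcases eq_or_ne (σ x) x with hfix | hmove
    · -- σ fixes x
      have hFk : Fixge n k σ := by
        intro y hy
        rcases eq_or_ne ((y : Fin n) : ℕ) k with h | h
        · have : y = x := Fin.ext h
          rw [this]; exact hfix
        · exact hσ y (by omega)
      have hJ : ∀ i ∈ ltx x, Zm n N k (σ * Equiv.swap i x) = 0 := by
        intro i hi
        rw [mem_ltx] at hi
        refine Zm_supp N k _ fun hf => ?_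
        have h1 := hf x (by rw [hxval])
        rw [Equiv.Perm.mul_apply, Equiv.swap_apply_right] at h1
        have : i = x := σ.injective (h1.trans hfix.symm)
        rw [this] at hi
        omega
      rw [hZ, Finset.sum_eq_zero hJ, add_zero]
      rw [ih hk.le σ hFk, hpow]
      ring
    · -- σ moves x
      set κ : Fin n := σ⁻¹ x with hκdef
      have hσκ : σ κ = x := σ.apply_symm_apply x
      have hκx : κ ≠ x := by
        intro h
        rw [h] at hσκ
        exact hmove hσκ
      have hκlt : (κ : ℕ) < k := by
        rcases lt_trichotomy ((κ : Fin n) : ℕ) k with h | h | h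
        · exact h
        · exact absurd (Fin.ext (h.trans hxval.symm) : κ = x) hκx
        · have := hσ κ (by omega)
          rw [this] at hσκ
          exact absurd hσκ hκx
      have hσ' : Fixge n k (σ * Equiv.swap κ x) := by
        intro y hy
        rcases eq_or_ne ((y : Fin n) : ℕ) k with h | h
        · have hyx : y = x := Fin.ext h
          rw [hyx, Equiv.Perm.mul_apply, Equiv.swap_apply_right]
          exact hσκ
        · have hy1 : k + 1 ≤ (y : ℕ) := by omega
          rw [Equiv.Perm.mul_apply,
            Equiv.swap_apply_of_ne_of_ne (by rintro rfl; omega) (by rintro rfl; omega)]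
          exact hσ y hy1
      have hZσ : Zm n N k σ = 0 := by
        refine Zm_supp N k σ fun hf => ?_
        exact hmove (hf x (by rw [hxval]))
      have hJ : ∑ i ∈ ltx x, Zm n N k (σ * Equiv.swap i x)
          = Zm n N k (σ * Equiv.swap κ x) := by
        refine Finset.sum_eq_single_of_mem κ (mem_ltx.mpr (by rw [hxval]; exact hκlt)) ?_
        intro i hi hiκ
        rw [mem_ltx] at hi
        refine Zm_supp N k _ fun hf => ?_
        have h1 := hf x (by rw [hxval])
        rw [Equiv.Perm.mul_apply, Equiv.swap_apply_right] at h1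
        exact hiκ (σ.injective (by rw [h1, hσκ]))
      have hswap := FixCard_mul_swap N σ hκx hσκ hmove
      have hIH := ih hk.le (σ * Equiv.swap κ x) hσ'
      rw [hswap] at hIH
      push_cast at hIH
      rw [hZ, hZσ, mul_zero, zero_add, hJ]
      refine mul_right_cancel₀ hNC ?_
      rw [mul_comm (↑(FixCard N σ) : ℂ) (↑N : ℂ), hIH, hpow]
      ring

lemma FixCard_top (N : ℕ) (hN : 1 ≤ N) (σ : Equiv.Perm (Fin n)) :
    (FixCard N σ : ℂ) = Zm n N n σ := by
  have h := FixCard_eq_Zm N hN n le_rfl σ (fun y hy => absurd y.2 (by omega))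
  rw [h, Nat.sub_self, pow_zero, mul_one]

end TraceProof
namespace TraceProof

open Equiv Finset MonoidAlgebra

variable {n : ℕ}

lemma trace_permAction (N : ℕ) (σ : Equiv.Perm (Fin n)) :
    LinearMap.trace ℂ (TensorPow N n) (permAction N n σ) = (FixCard N σ : ℂ) := by
  classical
  rw [LinearMap.trace_eq_matrix_trace ℂ
    ((EuclideanSpace.basisFun (Fin n → Fin N) ℂ).toBasis)]
  rw [Matrix.trace]
  have hdiag : ∀ f : Fin n → Fin N,
      ((LinearMap.toMatrix (EuclideanSpace.basisFun (Fin n → Fin N) ℂ).toBasis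
        (EuclideanSpace.basisFun (Fin n → Fin N) ℂ).toBasis) (permAction N n σ)).diag f
      = if f ∘ σ = f then (1 : ℂ) else 0 := by
    intro f
    rw [Matrix.diag, LinearMap.toMatrix_apply, OrthonormalBasis.coe_toBasis,
      OrthonormalBasis.coe_toBasis_repr_apply, EuclideanSpace.basisFun_repr,
      EuclideanSpace.basisFun_apply]
    have happ : (permAction N n σ) (EuclideanSpace.single f 1) f
        = EuclideanSpace.single f (1 : ℂ) (f ∘ σ) := rfl
    rw [happ, EuclideanSpace.single_apply]
  rw [Finset.sum_congr rfl fun f _ => hdiag f]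
  rw [Finset.sum_boole, FixCard]

lemma trace_Dmap (N : ℕ) (u : MA n) :
    LinearMap.trace ℂ (TensorPow N n) (Dmap N n u)
      = ∑ σ : Equiv.Perm (Fin n), u σ * (FixCard N σ : ℂ) := by
  classical
  rw [Dmap, MonoidAlgebra.lift_apply, Finsupp.sum, map_sum]
  rw [Finset.sum_subset (Finset.subset_univ u.coeff.support)]
  · refine Finset.sum_congr rfl fun σ _ => ?_
    rw [map_smul, trace_permAction, smul_eq_mul]
  · intro σ _ hσ
    rw [Finsupp.notMem_support_iff.mp hσ, zero_smul, map_zero]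

lemma rowSym_eq (T : SYT n) : T.rowSym = sE T n := by
  rw [SYT.rowSym, sE]
  refine Finset.sum_congr ?_ fun σ _ => rfl
  ext σ
  simp only [Finset.mem_filter, Finset.mem_univ, true_and, mem_Hset]
  refine ⟨fun h => ⟨h, fun y hy => absurd y.2 (by omega)⟩, fun h => h.1⟩

lemma colAntisym_eq (T : SYT n) : T.colAntisym = aE T n := by
  rw [SYT.colAntisym, aE]
  refine Finset.sum_congr ?_ fun σ _ => rfl
  ext σ
  simp only [Finset.mem_filter, Finset.mem_univ, true_and, mem_Vset]
  refine ⟨fun h => ⟨h, fun y hy => absurd y.2 (by omega)⟩, fun h => h.1⟩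

lemma prod_content (N : ℕ) (T : SYT n) :
    (∏ x : Fin n, ((N : ℂ) + (T.colOf x : ℂ) - (T.rowOf x : ℂ))) = fPoly T.shape N := by
  rw [fPoly]
  refine Finset.prod_bij (fun x _ => (T.rowOf x, T.colOf x)) ?_ ?_ ?_ ?_
  · intro x _
    exact T.cell_mem x
  · intro x _ y _ h
    rw [Prod.mk.injEq] at h
    exact T.eq_of_cell_eq h.1 h.2
  · intro c hc
    obtain ⟨y, -, hyr, hyc⟩ := T.exists_num hc
    exact ⟨y, Finset.mem_univ y, by rw [hyr, hyc]⟩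
  · intro x _
    push_cast
    ring

end TraceProof

/-- **Dimension formula.**  Let `T` be a standard Young tableau with `n` boxes and let
`N ≥ 1`.  The trace of the operator `D(Y_T)` on `(ℂ^N)^{⊗n}` equals `f_T(N)/H(T)`,
where `f_T(N) = ∏_{(j,k)} (N + k − j)` over the boxes of the shape of `T` in row `j`
and column `k`, and `H(T)` is the product of hook lengths. -/
theorem trace_youngOp {n N : ℕ} (hN : 1 ≤ N) (T : SYT n) :
    LinearMap.trace ℂ (TensorPow N n) (Dmap N n (youngOp T)) =
      fPoly T.shape N / (hookProd T.shape : ℂ) := by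
  open TraceProof in
  classical
  rw [youngOp, map_smul, map_smul, smul_eq_mul]
  rw [TraceProof.trace_Dmap]
  have hsum : (∑ σ : Equiv.Perm (Fin n),
      (T.rowSym * T.colAntisym) σ * (TraceProof.FixCard N σ : ℂ)) = fPoly T.shape N := by
    rw [TraceProof.rowSym_eq, TraceProof.colAntisym_eq]
    have hfix : ∀ σ : Equiv.Perm (Fin n),
        (TraceProof.FixCard N σ : ℂ) = TraceProof.Zm n N n σ :=
      TraceProof.FixCard_top N hN
    simp_rw [hfix]
    have hFq : (∑ σ : Equiv.Perm (Fin n),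
        (TraceProof.sE T n * TraceProof.aE T n) σ * TraceProof.Zm n N n σ)
        = TraceProof.Fq N T n := rfl
    rw [hFq, TraceProof.Fq_eq N T n le_rfl,
      Finset.filter_true_of_mem (fun x _ => x.2)]
    exact TraceProof.prod_content N T
  rw [hsum, inv_mul_eq_div]
end

section
/- Let G be a group and W a finite-dimensional complex inner product space carrying a unitary representation of G. Let T: W → W be a G-equivariant linear projection (T² = T) whose image U is an irreducible invariant subspace. Let P: W → W be a self-adjoint G-equivariant projection (P² = P = P†) such that the image of P contains exactly one irreducible invariant subspace Ũ isomorphic to U as a representation of G (i.e., the isotypic component of im P for the isomorphism class of U is irreducible). If P T P ≠ 0, then P T P is a nonzero scalar multiple of the orthogonal projection of W onto Ũ. -/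
variable {G : Type*} [Group G] {W : Type*} [NormedAddCommGroup W]
  [InnerProductSpace ℂ W] [FiniteDimensional ℂ W]

/-- A subspace `p` is invariant under the representation `ρ` if it is stable under the
action of every group element. -/
def IsInvariantSubspace (ρ : G →* (W →ₗ[ℂ] W)) (p : Submodule ℂ W) : Prop :=
  ∀ g : G, ∀ x ∈ p, ρ g x ∈ p

/-- An invariant subspace is irreducible if it is nonzero and contains no proper nonzero
invariant subspace. -/
def IsIrreducibleInvariant (ρ : G →* (W →ₗ[ℂ] W)) (p : Submodule ℂ W) : Prop :=
  IsInvariantSubspace ρ p ∧ p ≠ ⊥ ∧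
    ∀ q : Submodule ℂ W, q ≤ p → IsInvariantSubspace ρ q → q = ⊥ ∨ q = p

/-- Two invariant subspaces are isomorphic as representations of `G` if there is a
`G`-equivariant linear isomorphism between them. -/
def RepIso (ρ : G →* (W →ₗ[ℂ] W)) (p q : Submodule ℂ W) : Prop :=
  ∃ e : p ≃ₗ[ℂ] q, ∀ (g : G) (x : p) (hx : ρ g (x : W) ∈ p),
    ((e ⟨ρ g (x : W), hx⟩ : q) : W) = ρ g ((e x : W))

set_option linter.unusedSectionVars false

lemma aux_rho_inv (ρ : G →* (W →ₗ[ℂ] W)) (g : G) (u : W) : ρ g (ρ g⁻¹ u) = u := by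
  have : (ρ g * ρ g⁻¹) u = u := by rw [← map_mul, mul_inv_cancel, map_one]; rfl
  simpa using this

lemma aux_orth_invariant (ρ : G →* (W →ₗ[ℂ] W))
    (hρ : ∀ (g : G) (x y : W), @inner ℂ W _ (ρ g x) (ρ g y) = @inner ℂ W _ x y)
    (p : Submodule ℂ W) (hp : IsInvariantSubspace ρ p) : IsInvariantSubspace ρ pᗮ := by
  intro g x hx
  rw [Submodule.mem_orthogonal]
  intro u hu
  have h1 : ρ g⁻¹ u ∈ p := hp g⁻¹ u hu
  calc @inner ℂ W _ u (ρ g x) = @inner ℂ W _ (ρ g (ρ g⁻¹ u)) (ρ g x) := by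
        rw [aux_rho_inv]
    _ = @inner ℂ W _ (ρ g⁻¹ u) x := hρ g _ _
    _ = 0 := (Submodule.mem_orthogonal p x).mp hx _ h1

lemma aux_schur_scalar (ρ : G →* (W →ₗ[ℂ] W)) (p : Submodule ℂ W)
    (hp : IsIrreducibleInvariant ρ p) (S : W →ₗ[ℂ] W)
    (hS : ∀ g : G, ρ g ∘ₗ S = S ∘ₗ ρ g) (hr : ∀ x ∈ p, S x ∈ p) :
    ∃ c : ℂ, ∀ x ∈ p, S x = c • x := by
  have : Nontrivial p := Submodule.nontrivial_iff_ne_bot.mpr hp.2.1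
  obtain ⟨c, hc⟩ := Module.End.exists_eigenvalue (S.restrict hr)
  obtain ⟨v, hv⟩ := hc.exists_hasEigenvector
  refine ⟨c, ?_⟩
  set K := LinearMap.ker (S - c • LinearMap.id) ⊓ p with hK
  have hKinv : IsInvariantSubspace ρ K := by
    intro g x hx
    obtain ⟨hx1, hx2⟩ := Submodule.mem_inf.mp hx
    rw [Submodule.mem_inf]
    refine ⟨?_, hp.1 g x hx2⟩
    have hx1' : S x = c • x := by
      have := hx1
      simp only [LinearMap.mem_ker, LinearMap.sub_apply, LinearMap.smul_apply,
        LinearMap.id_apply, sub_eq_zero] at this ⊢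
      exact this
    simp only [LinearMap.mem_ker, LinearMap.sub_apply, LinearMap.smul_apply,
      LinearMap.id_apply, sub_eq_zero]
    have := congrFun (congrArg DFunLike.coe (hS g)) x
    simp only [LinearMap.comp_apply] at this
    rw [← this, hx1', map_smul]
  have hKne : K ≠ ⊥ := by
    intro h
    have hvK : (v : W) ∈ K := by
      rw [Submodule.mem_inf]
      refine ⟨?_, v.2⟩
      have := hv.apply_eq_smul
      have h2 : S (v : W) = c • (v : W) := by
        have := congrArg (Subtype.val) this
        simpa [LinearMap.restrict_apply] using this
      simp [LinearMap.mem_ker, sub_eq_zero, h2]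
    rw [h] at hvK
    exact hv.2 (Subtype.ext (by simpa using hvK))
  rcases hp.2.2 K inf_le_right hKinv with h | h
  · exact absurd h hKne
  · intro x hx
    have : x ∈ K := h ▸ hx
    have := (Submodule.mem_inf.mp this).1
    simpa [LinearMap.mem_ker, sub_eq_zero] using this

lemma aux_equiv_point {ρ : G →* (W →ₗ[ℂ] W)} {S : W →ₗ[ℂ] W} {g : G}
    (h : ρ g ∘ₗ S = S ∘ₗ ρ g) (x : W) : ρ g (S x) = S (ρ g x) := by
  have := congrFun (congrArg DFunLike.coe h) x
  simpa using this

/-- image of an irreducible invariant subspace under an equivariant map is irreducible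
if nonzero -/
lemma aux_irred_image (ρ : G →* (W →ₗ[ℂ] W)) (S : W →ₗ[ℂ] W)
    (hS : ∀ g : G, ρ g ∘ₗ S = S ∘ₗ ρ g) (p : Submodule ℂ W)
    (hp : IsIrreducibleInvariant ρ p) (hne : Submodule.map S p ≠ ⊥) :
    IsIrreducibleInvariant ρ (Submodule.map S p) := by
  refine ⟨?_, hne, ?_⟩
  · rintro g y ⟨x, hx, rfl⟩
    exact ⟨ρ g x, hp.1 g x hx, (aux_equiv_point (hS g) x).symm⟩
  · intro r hr hrinv
    have hinv : IsInvariantSubspace ρ (p ⊓ Submodule.comap S r) := by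
      intro g x hx
      obtain ⟨hx1, hx2⟩ := Submodule.mem_inf.mp hx
      rw [Submodule.mem_inf]
      refine ⟨hp.1 g x hx1, ?_⟩
      rw [Submodule.mem_comap, ← aux_equiv_point (hS g) x]
      exact hrinv g _ hx2
    rcases hp.2.2 _ inf_le_left hinv with h | h
    · left
      rw [eq_bot_iff]
      intro y hy
      obtain ⟨x, hx, rfl⟩ := hr hy
      have : x ∈ p ⊓ Submodule.comap S r := Submodule.mem_inf.mpr ⟨hx, hy⟩
      rw [h] at this
      simp only [Submodule.mem_bot] at this
      simp [this]
    · right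
      refine le_antisymm hr ?_
      rintro y ⟨x, hx, rfl⟩
      have : x ∈ p ⊓ Submodule.comap S r := by rw [h]; exact hx
      exact (Submodule.mem_inf.mp this).2

/-- preimage transfer of irreducibility along an injective equivariant map -/
lemma aux_irred_pullback (ρ : G →* (W →ₗ[ℂ] W)) (S : W →ₗ[ℂ] W)
    (hS : ∀ g : G, ρ g ∘ₗ S = S ∘ₗ ρ g) (Q : Submodule ℂ W)
    (hQinv : IsInvariantSubspace ρ Q) (hinj : ∀ x ∈ Q, S x = 0 → x = 0)
    (hirr : IsIrreducibleInvariant ρ (Submodule.map S Q)) :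
    IsIrreducibleInvariant ρ Q := by
  refine ⟨hQinv, ?_, ?_⟩
  · intro h
    apply hirr.2.1
    rw [h, Submodule.map_bot]
  · intro r hr hrinv
    have hrmap : Submodule.map S r ≤ Submodule.map S Q := Submodule.map_mono hr
    have hrmapinv : IsInvariantSubspace ρ (Submodule.map S r) := by
      rintro g y ⟨x, hx, rfl⟩
      exact ⟨ρ g x, hrinv g x hx, (aux_equiv_point (hS g) x).symm⟩
    rcases hirr.2.2 _ hrmap hrmapinv with h | h
    · left
      rw [eq_bot_iff]
      intro x hx
      have : S x ∈ Submodule.map S r := ⟨x, hx, rfl⟩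
      rw [h] at this
      simp only [Submodule.mem_bot] at this
      simpa using hinj x (hr hx) this
    · right
      refine le_antisymm hr ?_
      intro x hx
      have : S x ∈ Submodule.map S r := by
        rw [h]; exact ⟨x, hx, rfl⟩
      obtain ⟨y, hy, hSy⟩ := this
      have hxy : x - y ∈ Q := Q.sub_mem hx (hr hy)
      have hxy0 : x - y = 0 := hinj _ hxy (by rw [map_sub, hSy, sub_self])
      have hxeq : x = y := sub_eq_zero.mp hxy0
      exact hxeq ▸ hy

lemma aux_repiso_of_map (ρ : G →* (W →ₗ[ℂ] W)) (S : W →ₗ[ℂ] W)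
    (hS : ∀ g : G, ρ g ∘ₗ S = S ∘ₗ ρ g) (p q : Submodule ℂ W)
    (hpinv : IsInvariantSubspace ρ p)
    (hpq : ∀ x ∈ p, S x ∈ q) (hinj : ∀ x ∈ p, S x = 0 → x = 0)
    (hsurj : ∀ y ∈ q, ∃ x ∈ p, S x = y) :
    RepIso ρ p q ∧ RepIso ρ q p := by
  set φ : p →ₗ[ℂ] q := LinearMap.codRestrict q (S ∘ₗ p.subtype) (fun x => hpq x.1 x.2) with hφ
  have hφap : ∀ x : p, (φ x : W) = S (x : W) := fun x => rfl
  have hbij : Function.Bijective φ := by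
    constructor
    · intro x y hxy
      have h1 : S ((x : W) - y) = 0 := by
        rw [map_sub, ← hφap, ← hφap, hxy, sub_self]
      have := hinj _ (p.sub_mem x.2 y.2) h1
      exact Subtype.ext (by rwa [sub_eq_zero] at this)
    · intro y
      obtain ⟨x, hx, hSx⟩ := hsurj y.1 y.2
      exact ⟨⟨x, hx⟩, Subtype.ext hSx⟩
  set e : p ≃ₗ[ℂ] q := LinearEquiv.ofBijective φ hbij with he
  have heap : ∀ x : p, (e x : W) = S (x : W) := fun x => rfl
  constructor
  · refine ⟨e, ?_⟩
    intro g x hx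
    rw [heap, heap, aux_equiv_point (hS g)]
  · refine ⟨e.symm, ?_⟩
    intro g y hy
    set x : p := e.symm y with hxdef
    have hSx : S (x : W) = (y : W) := by
      rw [← heap, hxdef, e.apply_symm_apply]
    have h1 : ρ g (x : W) ∈ p := hpinv g _ x.2
    have h2 : e ⟨ρ g (x : W), h1⟩ = ⟨ρ g (y : W), hy⟩ := by
      apply Subtype.ext
      rw [heap]
      show S (ρ g (x : W)) = ρ g (y : W)
      rw [← aux_equiv_point (hS g), hSx]
    have h3 : e.symm ⟨ρ g (y : W), hy⟩ = ⟨ρ g (x : W), h1⟩ := by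
      rw [← h2, e.symm_apply_apply]
    rw [h3]

lemma aux_repiso_trans (ρ : G →* (W →ₗ[ℂ] W)) (p q r : Submodule ℂ W)
    (h1 : RepIso ρ p q) (h2 : RepIso ρ q r) : RepIso ρ p r := by
  obtain ⟨e1, he1⟩ := h1
  obtain ⟨e2, he2⟩ := h2
  refine ⟨e1.trans e2, ?_⟩
  intro g x hx
  have hmem : ρ g ((e1 x : q) : W) ∈ q := by
    rw [← he1 g x hx]
    exact (e1 ⟨ρ g (x : W), hx⟩).2
  have h3 : e1 ⟨ρ g (x : W), hx⟩ = ⟨ρ g ((e1 x : q) : W), hmem⟩ :=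
    Subtype.ext (he1 g x hx)
  show ((e2 (e1 ⟨ρ g (x : W), hx⟩) : r) : W) = _
  rw [h3]
  exact he2 g (e1 x) hmem

/-- **Corollary (ii) of Schur's lemma.**  Let `W` carry a unitary representation `ρ` of a
group `G`, let `T : W → W` be a `G`-equivariant projection whose image `U` is an
irreducible invariant subspace.  Let `P : W → W` be a self-adjoint `G`-equivariant
projection such that the image of `P` contains exactly one irreducible invariant
subspace `Ũ` isomorphic to `U` as a representation of `G`.  If `P T P ≠ 0`, then
`P T P` is a nonzero scalar multiple of the orthogonal projection of `W` onto `Ũ`. -/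
theorem schur_sandwich_proportional_orthogonalProjection (ρ : G →* (W →ₗ[ℂ] W))
    (hρ : ∀ (g : G) (x y : W), @inner ℂ W _ (ρ g x) (ρ g y) = @inner ℂ W _ x y)
    (T : W →ₗ[ℂ] W) (hTequiv : ∀ g : G, ρ g ∘ₗ T = T ∘ₗ ρ g) (hTproj : T ∘ₗ T = T)
    (hU : IsIrreducibleInvariant ρ (LinearMap.range T))
    (P : W →ₗ[ℂ] W) (hPequiv : ∀ g : G, ρ g ∘ₗ P = P ∘ₗ ρ g) (hPproj : P ∘ₗ P = P)
    (hPsa : ∀ x y : W, @inner ℂ W _ (P x) y = @inner ℂ W _ x (P y))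
    (Ut : Submodule ℂ W) (hUtle : Ut ≤ LinearMap.range P)
    (hUtirr : IsIrreducibleInvariant ρ Ut) (hUtiso : RepIso ρ Ut (LinearMap.range T))
    (hunique : ∀ q : Submodule ℂ W, q ≤ LinearMap.range P →
      IsIrreducibleInvariant ρ q → RepIso ρ q (LinearMap.range T) → q = Ut)
    (hne : P ∘ₗ T ∘ₗ P ≠ 0) :
    ∃ c : ℂ, c ≠ 0 ∧ ∀ x : W, P (T (P x)) = c • ((Submodule.orthogonalProjectionOnto Ut x : Ut) : W) := by
  set U : Submodule ℂ W := LinearMap.range T with hUdef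
  set S : W →ₗ[ℂ] W := P ∘ₗ T ∘ₗ P with hSdef
  have hSap : ∀ x : W, S x = P (T (P x)) := fun x => rfl
  have hPP : ∀ x : W, P (P x) = P x := fun x => by
    have := congrFun (congrArg DFunLike.coe hPproj) x; simpa using this
  have hSequiv : ∀ g : G, ρ g ∘ₗ S = S ∘ₗ ρ g := by
    intro g
    ext x
    simp only [hSdef, LinearMap.comp_apply]
    rw [aux_equiv_point (hPequiv g), aux_equiv_point (hTequiv g),
      aux_equiv_point (hPequiv g)]
  -- P does not kill U
  have hPU0 : ¬ (∀ u ∈ U, P u = 0) := by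
    intro h
    apply hne
    ext x
    simp only [LinearMap.comp_apply, LinearMap.zero_apply]
    exact h (T (P x)) (LinearMap.mem_range_self T (P x))
  -- P is injective on U
  have hinjU : ∀ u ∈ U, P u = 0 → u = 0 := by
    have hK : IsInvariantSubspace ρ (LinearMap.ker P ⊓ U) := by
      intro g x hx
      obtain ⟨hx1, hx2⟩ := Submodule.mem_inf.mp hx
      rw [Submodule.mem_inf]
      refine ⟨?_, hU.1 g x hx2⟩
      rw [LinearMap.mem_ker, ← aux_equiv_point (hPequiv g)]
      rw [LinearMap.mem_ker] at hx1
      rw [hx1, map_zero]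
    rcases hU.2.2 _ inf_le_right hK with h | h
    · intro u hu hPu
      have : u ∈ LinearMap.ker P ⊓ U :=
        Submodule.mem_inf.mpr ⟨LinearMap.mem_ker.mpr hPu, hu⟩
      rw [h] at this
      simpa using this
    · exfalso
      apply hPU0
      intro u hu
      have : u ∈ LinearMap.ker P ⊓ U := by rw [h]; exact hu
      exact LinearMap.mem_ker.mp (Submodule.mem_inf.mp this).1
  -- the image of U under P equals Ut
  set PU : Submodule ℂ W := Submodule.map P U with hPUdef
  have hPUne : PU ≠ ⊥ := by
    intro h
    apply hPU0
    intro u hu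
    have : P u ∈ PU := Submodule.mem_map_of_mem hu
    rw [h] at this
    simpa using this
  have hPUirr : IsIrreducibleInvariant ρ PU := aux_irred_image ρ P hPequiv U hU hPUne
  have hPUiso : RepIso ρ PU U := by
    refine (aux_repiso_of_map ρ P hPequiv U PU hU.1
      (fun x hx => Submodule.mem_map_of_mem hx) hinjU ?_).2
    intro y hy
    exact hy
  have hPUle : PU ≤ LinearMap.range P := by
    rintro y ⟨x, _, rfl⟩
    exact LinearMap.mem_range_self P x
  have hPUeq : PU = Ut := hunique PU hPUle hPUirr hPUiso
  -- range of S lies in Ut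
  have hSU : ∀ x : W, S x ∈ Ut := by
    intro x
    rw [← hPUeq]
    exact ⟨T (P x), LinearMap.mem_range_self T (P x), rfl⟩
  -- Schur: S is scalar on Ut
  obtain ⟨c, hc⟩ := aux_schur_scalar ρ Ut hUtirr S hSequiv (fun x _ => hSU x)
  -- invariance facts
  have hVinv : IsInvariantSubspace ρ (LinearMap.range P) := by
    intro g x hx
    obtain ⟨y, rfl⟩ := hx
    exact ⟨ρ g y, (aux_equiv_point (hPequiv g) y).symm⟩
  set V' : Submodule ℂ W := Utᗮ ⊓ LinearMap.range P with hV'def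
  have hV'inv : IsInvariantSubspace ρ V' := by
    intro g x hx
    obtain ⟨hx1, hx2⟩ := Submodule.mem_inf.mp hx
    exact Submodule.mem_inf.mpr
      ⟨aux_orth_invariant ρ hρ Ut hUtirr.1 g x hx1, hVinv g x hx2⟩
  -- S vanishes on V'
  have hSV' : ∀ v ∈ V', S v = 0 := by
    by_contra h
    push_neg at h
    obtain ⟨v, hvV', hSv⟩ := h
    set N : Submodule ℂ W := LinearMap.ker S ⊓ V' with hNdef
    have hNinv : IsInvariantSubspace ρ N := by
      intro g x hx
      obtain ⟨hx1, hx2⟩ := Submodule.mem_inf.mp hx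
      refine Submodule.mem_inf.mpr ⟨?_, hV'inv g x hx2⟩
      rw [LinearMap.mem_ker, ← aux_equiv_point (hSequiv g)]
      rw [LinearMap.mem_ker] at hx1
      rw [hx1, map_zero]
    set Q : Submodule ℂ W := Nᗮ ⊓ V' with hQdef
    have hQinv : IsInvariantSubspace ρ Q := by
      intro g x hx
      obtain ⟨hx1, hx2⟩ := Submodule.mem_inf.mp hx
      exact Submodule.mem_inf.mpr
        ⟨aux_orth_invariant ρ hρ N hNinv g x hx1, hV'inv g x hx2⟩
    set q : W := v - (Submodule.orthogonalProjectionOnto N v : W) with hqdef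
    have hprojN : ((Submodule.orthogonalProjectionOnto N v : N) : W) ∈ N := SetLike.coe_mem _
    have hqQ : q ∈ Q := by
      refine Submodule.mem_inf.mpr ⟨Submodule.sub_starProjection_mem_orthogonal v, ?_⟩
      exact Submodule.sub_mem _ hvV' (Submodule.mem_inf.mp hprojN).2
    have hSq : S q = S v := by
      have h0 : S ((Submodule.orthogonalProjectionOnto N v : N) : W) = 0 :=
        LinearMap.mem_ker.mp (Submodule.mem_inf.mp hprojN).1
      rw [hqdef, map_sub, h0, sub_zero]
    have hSq0 : S q ≠ 0 := by rw [hSq]; exact hSv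
    have hinjQ : ∀ x ∈ Q, S x = 0 → x = 0 := by
      intro x hx h0
      obtain ⟨hx1, hx2⟩ := Submodule.mem_inf.mp hx
      have hxN : x ∈ N := Submodule.mem_inf.mpr ⟨LinearMap.mem_ker.mpr h0, hx2⟩
      exact inner_self_eq_zero.mp ((Submodule.mem_orthogonal N x).mp hx1 x hxN)
    have hQmaple : Submodule.map S Q ≤ Ut := by
      rintro y ⟨x, _, rfl⟩
      exact hSU x
    have hQmapinv : IsInvariantSubspace ρ (Submodule.map S Q) := by
      rintro g y ⟨x, hx, rfl⟩
      exact ⟨ρ g x, hQinv g x hx, (aux_equiv_point (hSequiv g) x).symm⟩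
    have hQmapne : Submodule.map S Q ≠ ⊥ := by
      intro h0
      apply hSq0
      have : S q ∈ Submodule.map S Q := Submodule.mem_map_of_mem hqQ
      rw [h0] at this
      simpa using this
    have hQmapeq : Submodule.map S Q = Ut := by
      rcases hUtirr.2.2 _ hQmaple hQmapinv with h0 | h0
      · exact absurd h0 hQmapne
      · exact h0
    have hQirr : IsIrreducibleInvariant ρ Q := by
      refine aux_irred_pullback ρ S hSequiv Q hQinv hinjQ ?_
      rw [hQmapeq]; exact hUtirr
    have hQiso1 : RepIso ρ Q Ut := by
      refine (aux_repiso_of_map ρ S hSequiv Q Ut hQinv (fun x _ => hSU x) hinjQ ?_).1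
      intro y hy
      rw [← hQmapeq] at hy
      exact hy
    have hQiso : RepIso ρ Q U := aux_repiso_trans ρ Q Ut U hQiso1 hUtiso
    have hQle : Q ≤ LinearMap.range P := le_trans inf_le_right inf_le_right
    have hQeq : Q = Ut := hunique Q hQle hQirr hQiso
    have hqUt : q ∈ Ut := hQeq ▸ hqQ
    have hqperp : q ∈ Utᗮ := (Submodule.mem_inf.mp (Submodule.mem_inf.mp hqQ).2).1
    have hq0 : q = 0 :=
      inner_self_eq_zero.mp ((Submodule.mem_orthogonal Ut q).mp hqperp q hqUt)
    apply hSq0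
    rw [hq0, map_zero]
  -- the main formula
  have hform : ∀ x : W, P (T (P x)) = c • ((Submodule.orthogonalProjectionOnto Ut x : Ut) : W) := by
    intro x
    set u : W := ((Submodule.orthogonalProjectionOnto Ut (P x) : Ut) : W) with hudef
    have huUt : u ∈ Ut := SetLike.coe_mem _
    have hvmem : P x - u ∈ V' := by
      refine Submodule.mem_inf.mpr ⟨Submodule.sub_starProjection_mem_orthogonal (P x), ?_⟩
      exact Submodule.sub_mem _ (LinearMap.mem_range_self P x) (hUtle huUt)
    have h4 : S x = S (P x) := by rw [hSap, hSap, hPP x]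
    have h1 : S (P x) = S u + S (P x - u) := by
      rw [← map_add]
      congr 1
      abel
    have h2 : S u = c • u := hc u huUt
    have h3 : S (P x - u) = 0 := hSV' _ hvmem
    have h5 : Submodule.orthogonalProjectionOnto Ut (P x) = Submodule.orthogonalProjectionOnto Ut x := by
      have hdiff : x - P x ∈ Utᗮ := by
        rw [Submodule.mem_orthogonal]
        intro w hw
        obtain ⟨z, rfl⟩ := hUtle hw
        rw [hPsa z (x - P x)]
        have : P (x - P x) = 0 := by rw [map_sub, hPP x, sub_self]
        rw [this, inner_zero_right]
      have := Submodule.orthogonalProjectionOnto_apply_of_mem_orthogonal hdiff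
      have h6 : Submodule.orthogonalProjectionOnto Ut x - Submodule.orthogonalProjectionOnto Ut (P x) = 0 := by
        rw [← map_sub, this]
      rw [← sub_eq_zero, ← neg_sub, h6, neg_zero]
    calc P (T (P x)) = S x := (hSap x).symm
      _ = c • u + 0 := by rw [h4, h1, h2, h3]
      _ = c • ((Submodule.orthogonalProjectionOnto Ut x : Ut) : W) := by
        rw [add_zero, hudef, h5]
  refine ⟨c, ?_, hform⟩
  intro hc0
  apply hne
  ext x
  simp only [LinearMap.comp_apply, LinearMap.zero_apply]
  rw [hSap x, hform x, hc0, zero_smul]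
end

section
/- For every n ≥ 1 and every N ≥ 1, the dimensions of the irreducible invariant subspaces sum to the full dimension: ∑_{T ∈ SYT_n} f_T(N)/H(T) = N^n, where the sum runs over all standard Young tableaux T with n boxes, f_T(N) = ∏_{(j,k)} (N + k − j) with the product over all boxes of the shape of T in row j and column k, and H(T) is the product of the hook lengths of the boxes of the shape of T. -/
open scoped Classical

section AuxProofs

namespace SumDimAux

open Finset

noncomputable section

/-- descending product `y (y-1) ⋯ (y-m+1)`. -/
def ff (y : ℂ) (m : ℕ) : ℂ := ∏ k ∈ Finset.range m, (y - k)

lemma ff_shift (y : ℂ) (m : ℕ) : ff (y + 1) m = ff y m + m * ff y (m - 1) := by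
  cases m with
  | zero => simp [ff]
  | succ k =>
    have h1 : ff (y + 1) (k + 1) = ff y k * (y + 1) := by
      rw [ff, Finset.prod_range_succ']
      have : ∀ t ∈ Finset.range k, (y + 1 - ((t : ℕ) + 1 : ℕ)) = y - t := by
        intro t _; push_cast; ring
      rw [Finset.prod_congr rfl this]
      simp [ff]
    have h2 : ff y (k + 1) = ff y k * (y - k) := Finset.prod_range_succ _ _
    rw [h1, h2]
    simp only [Nat.add_sub_cancel]
    push_cast
    ring

/-- the polynomial `(X)(X-1)⋯(X-m+1)`. -/
def polff (m : ℕ) : Polynomial ℂ := ∏ k ∈ Finset.range m, (Polynomial.X - Polynomial.C (k : ℂ))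

lemma polff_monic (m : ℕ) : (polff m).Monic :=
  Polynomial.monic_prod_of_monic _ _ fun k _ => Polynomial.monic_X_sub_C _

lemma polff_natDegree (m : ℕ) : (polff m).natDegree = m := by
  rw [polff, Polynomial.natDegree_prod _ _ (fun k _ => Polynomial.X_sub_C_ne_zero _)]
  simp only [Polynomial.natDegree_X_sub_C]
  simp

lemma polff_eval (y : ℂ) (m : ℕ) : (polff m).eval y = ff y m := by
  simp [polff, ff, Polynomial.eval_prod]

variable {N : ℕ}

/-- matrix of descending factorials -/
def Mff (x : Fin N → ℂ) : Matrix (Fin N) (Fin N) ℂ :=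
  Matrix.of fun i j : Fin N => ff (x i) (j : ℕ)

lemma det_Mff (x : Fin N → ℂ) : (Mff x).det = (Matrix.vandermonde x).det := by
  rw [Matrix.det_eval_matrixOfPolynomials_eq_det_vandermonde x (fun j : Fin N => polff (j : ℕ))
    (fun i => polff_natDegree _) (fun i => polff_monic _)]
  congr 1
  ext i j
  simp [Mff, polff_eval]

/-- the shift matrix -/
def Sm (N : ℕ) : Matrix (Fin N) (Fin N) ℂ :=
  Matrix.of fun l j : Fin N => if (l : ℕ) + 1 = (j : ℕ) then ((j : ℕ) : ℂ) else 0

lemma trace_Sm : (Sm N).trace = 0 := by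
  simp [Matrix.trace, Matrix.diag, Sm]

lemma Mff_mul_Sm (x : Fin N → ℂ) (i j : Fin N) :
    (Mff x * Sm N) i j = (j : ℕ) * ff (x i) ((j : ℕ) - 1) := by
  rw [Matrix.mul_apply]
  rcases Nat.eq_zero_or_pos (j : ℕ) with hj | hj
  · rw [Finset.sum_eq_zero]
    · simp [hj]
    · intro l _
      simp only [Sm, Matrix.of_apply, hj]
      simp
  · obtain ⟨k, hk⟩ := Nat.exists_eq_succ_of_ne_zero (Nat.pos_iff_ne_zero.mp hj)
    have hkN : k < N := lt_trans (hk ▸ Nat.lt_succ_self k) (hk ▸ j.isLt)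
    rw [Finset.sum_eq_single (⟨k, hkN⟩ : Fin N)]
    · simp only [Sm, Matrix.of_apply, Mff]
      rw [if_pos (by simp [hk])]
      simp [hk, mul_comm]
    · intro l _ hl
      simp only [Sm, Matrix.of_apply]
      rw [if_neg, mul_zero]
      intro h
      apply hl
      apply Fin.ext
      simp [hk] at h ⊢
      omega
    · intro h; exact absurd (Finset.mem_univ _) h

/-- key trace identity -/
lemma sum_det_updateRow (A S : Matrix (Fin N) (Fin N) ℂ) :
    ∑ i, (A.updateRow i ((A * S) i)).det = S.trace * A.det := by
  have h : ∀ i, (A.updateRow i ((A * S) i)).det =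
      ∑ k, A.adjugate k i * (A * S) i k := by
    intro i
    rw [← Matrix.cramer_transpose_apply, Matrix.cramer_eq_adjugate_mulVec]
    rw [Matrix.mulVec]
    simp only [dotProduct]
    rw [← Matrix.adjugate_transpose]
    simp [Matrix.transpose_apply]
  simp only [h]
  rw [Finset.sum_comm]
  have : ∀ k, ∑ i, A.adjugate k i * (A * S) i k = (A.adjugate * (A * S)) k k := by
    intro k; rw [Matrix.mul_apply]
  simp only [this]
  have h2 : A.adjugate * (A * S) = A.det • S := by
    rw [← Matrix.mul_assoc, Matrix.adjugate_mul, Matrix.smul_mul, Matrix.one_mul]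
  rw [h2]
  have : ∑ k, (A.det • S) k k = (A.det • S).trace := rfl
  rw [this, Matrix.trace_smul]
  simp [mul_comm]

lemma Mff_update (x : Fin N → ℂ) (i0 : Fin N) :
    Mff (Function.update x i0 (x i0 + 1)) =
      (Mff x).updateRow i0 ((Mff x) i0 + (Mff x * Sm N) i0) := by
  ext i j
  by_cases hi : i = i0
  · subst hi
    simp only [Matrix.updateRow_self, Pi.add_apply, Mff_mul_Sm]
    simp only [Mff, Matrix.of_apply, Function.update_self]
    rw [ff_shift]
  · rw [Matrix.updateRow_ne hi]
    simp [Mff, Function.update_of_ne hi]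

lemma sum_det_vandermonde_update (x : Fin N → ℂ) :
    ∑ i0, (Matrix.vandermonde (Function.update x i0 (x i0 + 1))).det
      = N * (Matrix.vandermonde x).det := by
  have key : ∀ i0, (Matrix.vandermonde (Function.update x i0 (x i0 + 1))).det
      = (Mff x).det + ((Mff x).updateRow i0 ((Mff x * Sm N) i0)).det := by
    intro i0
    rw [← det_Mff, Mff_update, Matrix.det_updateRow_add]
    congr 1
    rw [Matrix.updateRow_eq_self]
  simp only [key]
  rw [Finset.sum_add_distrib, sum_det_updateRow, trace_Sm, Finset.sum_const, det_Mff]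
  simp [mul_comm]

/-- Vandermonde in decreasing orientation -/
def VD (x : Fin N → ℂ) : ℂ := ∏ i, ∏ j ∈ Finset.Ioi i, (x i - x j)

lemma VD_eq (x : Fin N → ℂ) :
    VD x = (∏ i : Fin N, ∏ _j ∈ Finset.Ioi i, (-1 : ℂ)) * (Matrix.vandermonde x).det := by
  rw [Matrix.det_vandermonde, VD, ← Finset.prod_mul_distrib]
  apply Finset.prod_congr rfl
  intro i _
  rw [← Finset.prod_mul_distrib]
  apply Finset.prod_congr rfl
  intro j _
  ring

lemma sum_VD_update (x : Fin N → ℂ) :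
    ∑ i0, VD (Function.update x i0 (x i0 + 1)) = N * VD x := by
  simp only [VD_eq]
  rw [← Finset.mul_sum, sum_det_vandermonde_update]
  ring

lemma VD_eq_zero {x : Fin N → ℂ} {i j : Fin N} (hij : i < j) (h : x i = x j) : VD x = 0 := by
  rw [VD]
  apply Finset.prod_eq_zero (Finset.mem_univ i)
  apply Finset.prod_eq_zero (Finset.mem_Ioi.mpr hij)
  rw [h, sub_self]




def bet (μ : YoungDiagram) (N i : ℕ) : ℕ := μ.rowLen i + (N - 1 - i)

lemma rowLen_eq_zero' {μ : YoungDiagram} {i : ℕ} (h : μ.colLen 0 ≤ i) : μ.rowLen i = 0 := by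
  by_contra h'
  have h1 : (i, 0) ∈ μ := YoungDiagram.mem_iff_lt_rowLen.mpr (Nat.pos_of_ne_zero h')
  have h2 := YoungDiagram.mem_iff_lt_colLen.mp h1
  omega

lemma bet_lt {μ : YoungDiagram} {N i j : ℕ} (hij : i < j) (hj : j < N) :
    bet μ N j < bet μ N i := by
  have := μ.rowLen_anti i j hij.le
  unfold bet; omega

lemma hook_eq {μ : YoungDiagram} {i j : ℕ} (h : (i, j) ∈ μ) :
    hookLength μ (i, j) + (i + j + 1) = μ.rowLen i + μ.colLen j := by
  have h1 : j < μ.rowLen i := YoungDiagram.mem_iff_lt_rowLen.mp h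
  have h2 : i < μ.colLen j := YoungDiagram.mem_iff_lt_colLen.mp h
  unfold hookLength
  simp only
  omega

lemma hookLength_pos (μ : YoungDiagram) (c : ℕ × ℕ) : 0 < hookLength μ c := by
  unfold hookLength; omega

lemma hookProd_pos (μ : YoungDiagram) : 0 < hookProd μ :=
  Finset.prod_pos fun c _ => hookLength_pos μ c

/-- decompose products over cells into rows -/
lemma prod_cells {M : Type*} [CommMonoid M] (μ : YoungDiagram) {L : ℕ}
    (hL : μ.colLen 0 ≤ L) (f : ℕ × ℕ → M) :
    ∏ c ∈ μ.cells, f c = ∏ i ∈ range L, ∏ j ∈ range (μ.rowLen i), f (i, j) := by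
  rw [Finset.prod_sigma']
  apply Finset.prod_nbij' (i := fun c : ℕ × ℕ => (⟨c.1, c.2⟩ : Σ _ : ℕ, ℕ))
    (j := fun p : Σ _ : ℕ, ℕ => ((p.1, p.2) : ℕ × ℕ))
  · intro c hc
    rw [YoungDiagram.mem_cells] at hc
    simp only [Finset.mem_sigma, Finset.mem_range]
    constructor
    · have : (c.1, 0) ∈ μ := μ.up_left_mem le_rfl (Nat.zero_le _) (by simpa using hc)
      have := YoungDiagram.mem_iff_lt_colLen.mp this
      omega
    · exact YoungDiagram.mem_iff_lt_rowLen.mp (by simpa using hc)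
  · intro p hp
    simp only [Finset.mem_sigma, Finset.mem_range] at hp
    rw [YoungDiagram.mem_cells]
    exact YoungDiagram.mem_iff_lt_rowLen.mpr hp.2
  · intro c _; rfl
  · intro p _; rfl
  · intro c _; rfl

/-- the hook lengths of row `i` together with the corner differences exhaust `[1, β_i]` -/
lemma row_fact (μ : YoungDiagram) {N : ℕ} (hc : μ.colLen 0 ≤ N) {i : ℕ} (hi : i < N) :
    (∏ j ∈ range (μ.rowLen i), hookLength μ (i, j)) *
      (∏ j ∈ Ioo i N, (bet μ N i - bet μ N j)) = Nat.factorial (bet μ N i) := by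
  have hbet : ∀ k : ℕ, bet μ N k = μ.rowLen k + (N - 1 - k) := fun _ => rfl
  have hmem : ∀ j < μ.rowLen i, (i, j) ∈ μ := fun j hj => YoungDiagram.mem_iff_lt_rowLen.mpr hj
  have hookEq : ∀ j < μ.rowLen i, hookLength μ (i, j) + (i + j + 1) = μ.rowLen i + μ.colLen j :=
    fun j hj => hook_eq (hmem j hj)
  have colLe : ∀ j : ℕ, μ.colLen j ≤ N := fun j => le_trans (μ.colLen_anti 0 j (Nat.zero_le _)) hc
  have hookMem : ∀ j < μ.rowLen i, hookLength μ (i, j) ∈ Icc 1 (bet μ N i) := by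
    intro j hj
    have h1 := hookEq j hj
    have h2 := colLe j
    have h3 := hbet i
    have h4 := YoungDiagram.mem_iff_lt_colLen.mp (hmem j hj)
    rw [Finset.mem_Icc]
    omega
  have hookInj : ∀ j1 < μ.rowLen i, ∀ j2 < μ.rowLen i,
      hookLength μ (i, j1) = hookLength μ (i, j2) → j1 = j2 := by
    intro j1 h1 j2 h2 he
    have e1 := hookEq j1 h1
    have e2 := hookEq j2 h2
    rcases Nat.lt_trichotomy j1 j2 with h | h | h
    · have := μ.colLen_anti j1 j2 h.le; omega
    · exact h
    · have := μ.colLen_anti j2 j1 h.le; omega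
  have betMem : ∀ j ∈ Ioo i N, bet μ N i - bet μ N j ∈ Icc 1 (bet μ N i) := by
    intro j hj
    rw [Finset.mem_Ioo] at hj
    have := bet_lt hj.1 hj.2 (μ := μ)
    rw [Finset.mem_Icc]
    omega
  have betInj : ∀ j1 ∈ Ioo i N, ∀ j2 ∈ Ioo i N,
      bet μ N i - bet μ N j1 = bet μ N i - bet μ N j2 → j1 = j2 := by
    intro j1 h1 j2 h2 he
    rw [Finset.mem_Ioo] at h1 h2
    have b1 := bet_lt h1.1 h1.2 (μ := μ)
    have b2 := bet_lt h2.1 h2.2 (μ := μ)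
    rcases Nat.lt_trichotomy j1 j2 with h | h | h
    · have := bet_lt h h2.2 (μ := μ); omega
    · exact h
    · have := bet_lt h h1.2 (μ := μ); omega
  have hdisj : ∀ j < μ.rowLen i, ∀ j' ∈ Ioo i N,
      hookLength μ (i, j) ≠ bet μ N i - bet μ N j' := by
    intro j hj j' hj' he
    rw [Finset.mem_Ioo] at hj'
    have e1 := hookEq j hj
    have e2 := hbet i
    have e3 := hbet j'
    have hblt := bet_lt hj'.1 hj'.2 (μ := μ)
    by_cases hin : (j', j) ∈ μ
    · have c1 := YoungDiagram.mem_iff_lt_colLen.mp hin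
      have c2 := YoungDiagram.mem_iff_lt_rowLen.mp hin
      omega
    · have c1 : ¬ j' < μ.colLen j := fun hcon => hin (YoungDiagram.mem_iff_lt_colLen.mpr hcon)
      have c2 : ¬ j < μ.rowLen j' := fun hcon => hin (YoungDiagram.mem_iff_lt_rowLen.mpr hcon)
      omega
  have hFinj : Set.InjOn (fun j => hookLength μ (i, j)) (range (μ.rowLen i)) := by
    intro a ha b' hb' h
    exact hookInj a (Finset.mem_range.mp ha) b' (Finset.mem_range.mp hb') h
  have hGinj : Set.InjOn (fun j => bet μ N i - bet μ N j) (Ioo i N) := by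
    intro a ha b' hb' h
    exact betInj a ha b' hb' h
  set F := (range (μ.rowLen i)).image (fun j => hookLength μ (i, j)) with hF
  set G := (Ioo i N).image (fun j => bet μ N i - bet μ N j) with hG
  have hFcard : F.card = μ.rowLen i := by
    rw [hF, Finset.card_image_of_injOn hFinj, Finset.card_range]
  have hGcard : G.card = N - 1 - i := by
    rw [hG, Finset.card_image_of_injOn hGinj, Nat.card_Ioo]
    omega
  have hFG : Disjoint F G := by
    rw [Finset.disjoint_left]
    intro a haF haG
    obtain ⟨j, hj, rfl⟩ := Finset.mem_image.mp haF
    obtain ⟨j', hj', he⟩ := Finset.mem_image.mp haG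
    exact hdisj j (Finset.mem_range.mp hj) j' hj' he.symm
  have hsub : F ∪ G ⊆ Icc 1 (bet μ N i) := by
    intro a ha
    rcases Finset.mem_union.mp ha with h | h
    · obtain ⟨j, hj, rfl⟩ := Finset.mem_image.mp h
      exact hookMem j (Finset.mem_range.mp hj)
    · obtain ⟨j, hj, rfl⟩ := Finset.mem_image.mp h
      exact betMem j hj
  have hEq : F ∪ G = Icc 1 (bet μ N i) := by
    apply Finset.eq_of_subset_of_card_le hsub
    rw [Finset.card_union_of_disjoint hFG, hFcard, hGcard, Nat.card_Icc]
    have := hbet i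
    omega
  have hprodF : ∏ x ∈ F, x = ∏ j ∈ range (μ.rowLen i), hookLength μ (i, j) :=
    Finset.prod_image (fun a ha b' hb' =>
      hookInj a (Finset.mem_range.mp ha) b' (Finset.mem_range.mp hb'))
  have hprodG : ∏ x ∈ G, x = ∏ j ∈ Ioo i N, (bet μ N i - bet μ N j) :=
    Finset.prod_image (fun a ha b' hb' => betInj a ha b' hb')
  have hPU : ∏ x ∈ F ∪ G, x = (∏ x ∈ F, x) * ∏ x ∈ G, x := Finset.prod_union hFG
  rw [hEq] at hPU
  rw [← hprodF, ← hprodG, ← hPU]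
  rw [← Finset.Ico_add_one_right_eq_Icc, Finset.prod_Ico_id_eq_factorial]

lemma hookProd_identity (μ : YoungDiagram) {N : ℕ} (hc : μ.colLen 0 ≤ N) :
    hookProd μ * (∏ i ∈ range N, ∏ j ∈ Ioo i N, (bet μ N i - bet μ N j)) =
      ∏ i ∈ range N, Nat.factorial (bet μ N i) := by
  rw [hookProd, prod_cells μ hc (hookLength μ), ← Finset.prod_mul_distrib]
  exact Finset.prod_congr rfl fun i hi => row_fact μ hc (Finset.mem_range.mp hi)

lemma fact_mul_prod (a : ℕ) (ha : 0 < a) : ∀ m : ℕ,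
    Nat.factorial (a - 1) * (∏ j ∈ range m, (a + j)) = Nat.factorial (a + m - 1)
  | 0 => by simp
  | m + 1 => by
    rw [Finset.prod_range_succ, ← mul_assoc, fact_mul_prod a ha m]
    have h1 : a + (m + 1) - 1 = (a + m - 1) + 1 := by omega
    rw [h1, Nat.factorial_succ]
    have h2 : a + m - 1 + 1 = a + m := by omega
    rw [h2, mul_comm]

lemma fPoly_identity (μ : YoungDiagram) {N : ℕ} (hc : μ.colLen 0 ≤ N) :
    fPoly μ N * (∏ i ∈ range N, ((Nat.factorial (N - 1 - i) : ℕ) : ℂ)) =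
      ∏ i ∈ range N, ((Nat.factorial (bet μ N i) : ℕ) : ℂ) := by
  rw [fPoly, prod_cells μ hc _, ← Finset.prod_mul_distrib]
  apply Finset.prod_congr rfl
  intro i hi
  rw [Finset.mem_range] at hi
  have hcast : ∀ j ∈ range (μ.rowLen i), ((N : ℂ) + (j : ℂ) - (i : ℂ)) = (((N - i + j : ℕ) : ℕ) : ℂ) := by
    intro j _
    have : (((N - i + j : ℕ) : ℕ) : ℂ) = ((N : ℂ) - (i : ℂ)) + (j : ℂ) := by
      push_cast [Nat.cast_sub hi.le]
      ring
    rw [this]; ring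
  rw [Finset.prod_congr rfl hcast, ← Nat.cast_prod, mul_comm, ← Nat.cast_mul]
  have key := fact_mul_prod (N - i) (by omega) (μ.rowLen i)
  have h1 : N - i - 1 = N - 1 - i := by omega
  have h2 : N - i + μ.rowLen i - 1 = bet μ N i := by unfold bet; omega
  rw [h1, h2] at key
  rw [key]

lemma prod_Ioo_sub (i N : ℕ) (hi : i < N) : ∏ j ∈ Ioo i N, (j - i) = Nat.factorial (N - 1 - i) := by
  rw [← Finset.prod_range_add_one_eq_factorial]
  apply Finset.prod_nbij' (i := fun j : ℕ => j - i - 1) (j := fun k : ℕ => i + 1 + k)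
  · intro j hj; rw [Finset.mem_Ioo] at hj; rw [Finset.mem_range]; omega
  · intro k hk; rw [Finset.mem_range] at hk; rw [Finset.mem_Ioo]; omega
  · intro j hj; rw [Finset.mem_Ioo] at hj; omega
  · intro k hk; rw [Finset.mem_range] at hk; omega
  · intro j hj; rw [Finset.mem_Ioo] at hj; omega

lemma delta_identity (N : ℕ) :
    (∏ i ∈ range N, ∏ j ∈ Ioo i N, ((N - 1 - i) - (N - 1 - j))) =
      ∏ i ∈ range N, Nat.factorial (N - 1 - i) := by
  apply Finset.prod_congr rfl
  intro i hi
  rw [Finset.mem_range] at hi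
  rw [← prod_Ioo_sub i N hi]
  apply Finset.prod_congr rfl
  intro j hj
  rw [Finset.mem_Ioo] at hj
  omega

/-- Fin-indexed β and δ vectors -/
def vbet (μ : YoungDiagram) (N : ℕ) : Fin N → ℂ := fun i => ((bet μ N i : ℕ) : ℂ)

def vdel (N : ℕ) : Fin N → ℂ := fun i => (((N - 1 - (i : ℕ) : ℕ)) : ℂ)

lemma prod_Ioi_fin {M : Type*} [CommMonoid M] {N : ℕ} (i : Fin N) (f : ℕ → M) :
    ∏ j ∈ Finset.Ioi i, f (j : ℕ) = ∏ j ∈ Finset.Ioo (i : ℕ) N, f j := by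
  apply Finset.prod_nbij' (i := fun j : Fin N => (j : ℕ))
    (j := fun m : ℕ => if h : m < N then (⟨m, h⟩ : Fin N) else i)
  · intro j hj; rw [Finset.mem_Ioi] at hj; rw [Finset.mem_Ioo]
    exact ⟨hj, j.isLt⟩
  · intro j hj; rw [Finset.mem_Ioo] at hj; rw [dif_pos hj.2, Finset.mem_Ioi]
    exact hj.1
  · intro j _; rw [dif_pos j.isLt]
  · intro j hj; rw [Finset.mem_Ioo] at hj; rw [dif_pos hj.2]
  · intro j _; rfl

lemma VD_vbet (μ : YoungDiagram) {N : ℕ} :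
    VD (vbet μ N) = ((∏ i ∈ range N, ∏ j ∈ Ioo i N, (bet μ N i - bet μ N j) : ℕ) : ℂ) := by
  rw [Nat.cast_prod, VD, ← Fin.prod_univ_eq_prod_range]
  apply Finset.prod_congr rfl
  intro i _
  rw [Nat.cast_prod, ← prod_Ioi_fin i (fun j => ((bet μ N (i : ℕ) - bet μ N j : ℕ) : ℂ))]
  apply Finset.prod_congr rfl
  intro j hj
  rw [Finset.mem_Ioi] at hj
  have hlt : bet μ N (j : ℕ) < bet μ N (i : ℕ) := bet_lt hj j.isLt
  rw [Nat.cast_sub hlt.le]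
  rfl

lemma VD_vdel (N : ℕ) :
    VD (vdel N) = ((∏ i ∈ range N, Nat.factorial (N - 1 - i) : ℕ) : ℂ) := by
  rw [← delta_identity, Nat.cast_prod, VD, ← Fin.prod_univ_eq_prod_range]
  apply Finset.prod_congr rfl
  intro i _
  rw [Nat.cast_prod, ← prod_Ioi_fin i (fun j => (((N - 1 - (i:ℕ)) - (N - 1 - j) : ℕ) : ℂ))]
  apply Finset.prod_congr rfl
  intro j hj
  rw [Finset.mem_Ioi] at hj
  have h1 : (N - 1 - (j : ℕ)) ≤ (N - 1 - (i : ℕ)) := by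
    have : (i : ℕ) < (j : ℕ) := hj
    omega
  rw [Nat.cast_sub h1]
  rfl

lemma VD_vdel_ne_zero (N : ℕ) : VD (vdel N) ≠ 0 := by
  rw [VD_vdel]
  rw [Nat.cast_ne_zero]
  apply Nat.pos_iff_ne_zero.mp
  exact Finset.prod_pos fun i _ => Nat.factorial_pos _

/-- the dimension formula: `f(μ)/H(μ) = VD(β)/VD(δ)` -/
lemma g_eq (μ : YoungDiagram) {N : ℕ} (hc : μ.colLen 0 ≤ N) :
    fPoly μ N / (hookProd μ : ℂ) = VD (vbet μ N) / VD (vdel N) := by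
  have hP : ((hookProd μ : ℕ) : ℂ) ≠ 0 := by
    rw [Nat.cast_ne_zero]; exact (hookProd_pos μ).ne'
  have hD : VD (vdel N) ≠ 0 := VD_vdel_ne_zero N
  rw [div_eq_div_iff hP hD]
  have e1 : fPoly μ N * VD (vdel N) = ∏ i ∈ range N, ((Nat.factorial (bet μ N i) : ℕ) : ℂ) := by
    rw [VD_vdel, Nat.cast_prod]
    exact fPoly_identity μ hc
  have e2 : VD (vbet μ N) * ((hookProd μ : ℕ) : ℂ) = ∏ i ∈ range N, ((Nat.factorial (bet μ N i) : ℕ) : ℂ) := by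
    rw [VD_vbet, ← Nat.cast_mul, mul_comm, hookProd_identity μ hc, Nat.cast_prod]
  rw [e1, e2]


lemma bet_def (μ : YoungDiagram) (N i : ℕ) : bet μ N i = μ.rowLen i + (N - 1 - i) := rfl


/-- a row where a box may be added -/
def Addable (μ : YoungDiagram) (i : ℕ) : Prop := i = 0 ∨ μ.rowLen i < μ.rowLen (i - 1)

/-- μ with one box added at the end of row i (junk value if not addable) -/
def addBox (μ : YoungDiagram) (i : ℕ) : YoungDiagram :=
  if h : Addable μ i then
    { cells := insert (i, μ.rowLen i) μ.cells
      isLowerSet := by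
        intro a b hba ha
        simp only [Finset.coe_insert, Set.mem_insert_iff, Finset.mem_coe] at ha ⊢
        rcases ha with rfl | ha
        · obtain ⟨b1, b2⟩ := b
          obtain ⟨h1, h2⟩ := hba
          simp only at h1 h2
          by_cases hb : b1 = i ∧ b2 = μ.rowLen i
          · left; rw [hb.1, hb.2]
          · right
            rw [YoungDiagram.mem_cells, YoungDiagram.mem_iff_lt_rowLen]
            rcases Nat.lt_or_ge b2 (μ.rowLen i) with hlt | hge
            · exact lt_of_lt_of_le hlt (μ.rowLen_anti b1 i h1)
            · have hb2 : b2 = μ.rowLen i := le_antisymm h2 hge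
              have hb1 : b1 ≠ i := fun hh => hb ⟨hh, hb2⟩
              have hi0 : i ≠ 0 := by omega
              rcases h with h | h
              · exact absurd h hi0
              · have : μ.rowLen (i - 1) ≤ μ.rowLen b1 := μ.rowLen_anti b1 (i - 1) (by omega)
                omega
        · right
          exact (YoungDiagram.mem_cells _).mpr
            (μ.isLowerSet hba ((YoungDiagram.mem_cells _).mp ha)) }
  else μ

lemma mem_addBox {μ : YoungDiagram} {i : ℕ} (h : Addable μ i) (c : ℕ × ℕ) :
    c ∈ addBox μ i ↔ c ∈ μ ∨ c = (i, μ.rowLen i) := by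
  rw [addBox, dif_pos h, ← YoungDiagram.mem_cells]
  simp only [Finset.mem_insert]
  rw [YoungDiagram.mem_cells]
  tauto

lemma subset_addBox {μ : YoungDiagram} {i : ℕ} {c : ℕ × ℕ} (hc : c ∈ μ) : c ∈ addBox μ i := by
  by_cases h : Addable μ i
  · exact (mem_addBox h c).mpr (Or.inl hc)
  · rw [addBox, dif_neg h]; exact hc

lemma new_not_mem (μ : YoungDiagram) (i : ℕ) : (i, μ.rowLen i) ∉ μ := by
  rw [YoungDiagram.mem_iff_lt_rowLen]; omega

lemma rowLen_le_of {μ ν : YoungDiagram} {a : ℕ}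
    (h : ∀ j, (a, j) ∈ μ → (a, j) ∈ ν) : μ.rowLen a ≤ ν.rowLen a := by
  rcases Nat.eq_zero_or_pos (μ.rowLen a) with h0 | h0
  · omega
  · have h1 : (a, μ.rowLen a - 1) ∈ μ := YoungDiagram.mem_iff_lt_rowLen.mpr (by omega)
    have h2 := YoungDiagram.mem_iff_lt_rowLen.mp (h _ h1)
    omega

lemma rowLen_addBox {μ : YoungDiagram} {i : ℕ} (h : Addable μ i) (a : ℕ) :
    (addBox μ i).rowLen a = μ.rowLen a + (if a = i then 1 else 0) := by
  by_cases ha : a = i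
  · subst ha
    rw [if_pos rfl]
    apply le_antisymm
    · rcases Nat.eq_zero_or_pos ((addBox μ a).rowLen a) with h0 | h0
      · omega
      · have h1 : (a, (addBox μ a).rowLen a - 1) ∈ addBox μ a :=
          YoungDiagram.mem_iff_lt_rowLen.mpr (by omega)
        rcases (mem_addBox h _).mp h1 with h2 | h2
        · have := YoungDiagram.mem_iff_lt_rowLen.mp h2; omega
        · have : (addBox μ a).rowLen a - 1 = μ.rowLen a := by
            have := congrArg Prod.snd h2; simpa using this
          omega
    · have h1 : (a, μ.rowLen a) ∈ addBox μ a := (mem_addBox h _).mpr (Or.inr rfl)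
      have := YoungDiagram.mem_iff_lt_rowLen.mp h1
      omega
  · rw [if_neg ha]
    apply le_antisymm
    · apply rowLen_le_of
      intro j hj
      rcases (mem_addBox h _).mp hj with h2 | h2
      · exact h2
      · exact absurd (congrArg Prod.fst h2) (by simpa using ha)
    · exact rowLen_le_of fun j hj => subset_addBox hj

lemma colLen_le_iff {μ : YoungDiagram} {j t : ℕ} : μ.colLen j ≤ t ↔ (t, j) ∉ μ := by
  rw [YoungDiagram.mem_iff_lt_colLen]; omega


lemma colLen0_addBox_le {μ : YoungDiagram} {i N : ℕ} (hc : μ.colLen 0 ≤ N) (hi : i < N) :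
    (addBox μ i).colLen 0 ≤ N := by
  rw [colLen_le_iff]
  intro hmem
  by_cases h : Addable μ i
  · rcases (mem_addBox h _).mp hmem with h2 | h2
    · exact colLen_le_iff.mp hc h2
    · have := congrArg Prod.fst h2; simp at this; omega
  · rw [addBox, dif_neg h] at hmem
    exact colLen_le_iff.mp hc hmem

lemma not_addable_of_gt {μ : YoungDiagram} {i : ℕ} (h : μ.colLen 0 < i) : ¬ Addable μ i := by
  intro ha
  rcases ha with h0 | hlt
  · omega
  · have e1 : μ.rowLen i = 0 := rowLen_eq_zero' (by omega)
    have e2 : μ.rowLen (i - 1) = 0 := rowLen_eq_zero' (by omega)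
    omega

lemma vbet_addBox {μ : YoungDiagram} {N : ℕ} (i0 : Fin N) (h : Addable μ (i0 : ℕ)) :
    vbet (addBox μ (i0 : ℕ)) N =
      Function.update (vbet μ N) i0 (vbet μ N i0 + 1) := by
  funext k
  rcases eq_or_ne k i0 with rfl | hk
  · rw [Function.update_self]
    simp only [vbet]
    rw [bet_def, bet_def, rowLen_addBox h, if_pos rfl]
    push_cast
    ring
  · rw [Function.update_of_ne hk]
    simp only [vbet]
    rw [bet_def, bet_def, rowLen_addBox h, if_neg (by simpa using Fin.val_ne_of_ne hk)]
    norm_num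

lemma VD_update_zero {μ : YoungDiagram} {N : ℕ} (i0 : Fin N)
    (h1 : (i0 : ℕ) ≠ 0) (h2 : μ.rowLen ((i0 : ℕ) - 1) = μ.rowLen (i0 : ℕ)) :
    VD (Function.update (vbet μ N) i0 (vbet μ N i0 + 1)) = 0 := by
  have hlt : ((i0 : ℕ) - 1) < N := by have := i0.isLt; omega
  set i1 : Fin N := ⟨(i0 : ℕ) - 1, hlt⟩ with hi1
  have hne : i1 < i0 := by
    rw [Fin.lt_def]; simp only [hi1]; omega
  apply VD_eq_zero hne
  rw [Function.update_of_ne (ne_of_lt hne), Function.update_self]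
  simp only [vbet, hi1]
  rw [bet_def, bet_def, h2]
  have hi0N := i0.isLt
  have : μ.rowLen (i0 : ℕ) + (N - 1 - ((i0:ℕ) - 1)) = μ.rowLen (i0:ℕ) + (N - 1 - (i0:ℕ)) + 1 := by
    omega
  rw [this]
  push_cast
  ring

def addables (μ : YoungDiagram) : Finset ℕ :=
  (range (μ.colLen 0 + 1)).filter fun i => Addable μ i

lemma mem_addables {μ : YoungDiagram} {i : ℕ} :
    i ∈ addables μ ↔ Addable μ i ∧ i ≤ μ.colLen 0 := by
  rw [addables, Finset.mem_filter, Finset.mem_range]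
  constructor
  · exact fun h => ⟨h.2, by omega⟩
  · exact fun h => ⟨by omega, h.1⟩

lemma fPoly_zero {μ : YoungDiagram} {N : ℕ} (h : N < μ.colLen 0) : fPoly μ N = 0 := by
  rw [fPoly]
  apply Finset.prod_eq_zero (i := ((N : ℕ), (0 : ℕ)))
  · rw [YoungDiagram.mem_cells]
    exact YoungDiagram.mem_iff_lt_colLen.mpr h
  · simp

/-- Key step: the corner sum identity -/
lemma corner_sum (μ : YoungDiagram) (N : ℕ) :
    ∑ i ∈ addables μ, fPoly (addBox μ i) N / (hookProd (addBox μ i) : ℂ)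
      = N * (fPoly μ N / (hookProd μ : ℂ)) := by
  by_cases hc : μ.colLen 0 ≤ N
  · -- split off possible i with ¬ i < N
    rw [← Finset.sum_filter_add_sum_filter_not (addables μ) (fun i => i < N)]
    have hbig : ∀ i ∈ (addables μ).filter (fun i => ¬ i < N),
        fPoly (addBox μ i) N / (hookProd (addBox μ i) : ℂ) = 0 := by
      intro i hi
      rw [Finset.mem_filter] at hi
      obtain ⟨hadd, hle⟩ := mem_addables.mp hi.1
      have hiN : i = N := by omega
      have hcol : μ.colLen 0 = N := by omega
      have hrl : μ.rowLen i = 0 := rowLen_eq_zero' (by omega)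
      have hmem : ((N : ℕ), (0 : ℕ)) ∈ addBox μ i := by
        rw [mem_addBox hadd]
        right
        rw [hrl, hiN]
      have : N < (addBox μ i).colLen 0 := YoungDiagram.mem_iff_lt_colLen.mp hmem
      rw [fPoly_zero this, zero_div]
    rw [Finset.sum_eq_zero hbig, add_zero]
    -- the main part
    have hterm : ∀ i ∈ (addables μ).filter (fun i => i < N), ∀ h : i < N,
        fPoly (addBox μ i) N / (hookProd (addBox μ i) : ℂ) =
          VD (Function.update (vbet μ N) ⟨i, h⟩ (vbet μ N ⟨i, h⟩ + 1)) / VD (vdel N) := by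
      intro i hi h
      rw [Finset.mem_filter] at hi
      obtain ⟨hadd, _⟩ := mem_addables.mp hi.1
      rw [g_eq _ (colLen0_addBox_le hc h), vbet_addBox ⟨i, h⟩ hadd]
    -- reindex over Fin N
    have step : ∑ i ∈ (addables μ).filter (fun i => i < N),
        fPoly (addBox μ i) N / (hookProd (addBox μ i) : ℂ)
        = ∑ i0 ∈ Finset.univ.filter (fun i0 : Fin N => Addable μ (i0 : ℕ)),
            VD (Function.update (vbet μ N) i0 (vbet μ N i0 + 1)) / VD (vdel N) := by
      apply Finset.sum_bij (i := fun i hi => (⟨i, (Finset.mem_filter.mp hi).2⟩ : Fin N))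
      · intro a ha
        rw [Finset.mem_filter]
        refine ⟨Finset.mem_univ _, ?_⟩
        rw [Finset.mem_filter] at ha
        exact (mem_addables.mp ha.1).1
      · intro a ha b hb hab
        have := congrArg Fin.val hab
        simpa using this
      · intro b hb
        rw [Finset.mem_filter] at hb
        refine ⟨(b : ℕ), ?_, ?_⟩
        · rw [Finset.mem_filter]
          constructor
          · rw [mem_addables]
            refine ⟨hb.2, ?_⟩
            by_contra hcon
            exact not_addable_of_gt (by omega) hb.2
          · exact b.isLt
        · simp
      · intro a ha
        exact hterm a ha (Finset.mem_filter.mp ha).2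
    rw [step]
    -- extend to all of Fin N
    have ext0 : ∀ i0 ∈ Finset.univ.filter (fun i0 : Fin N => ¬ Addable μ (i0 : ℕ)),
        VD (Function.update (vbet μ N) i0 (vbet μ N i0 + 1)) / VD (vdel N) = 0 := by
      intro i0 hi0
      rw [Finset.mem_filter] at hi0
      have hna := hi0.2
      have h1 : (i0 : ℕ) ≠ 0 := fun hh => hna (Or.inl hh)
      have h2 : μ.rowLen ((i0 : ℕ) - 1) = μ.rowLen (i0 : ℕ) := by
        have hle := μ.rowLen_anti ((i0:ℕ) - 1) (i0:ℕ) (by omega)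
        have : ¬ μ.rowLen (i0:ℕ) < μ.rowLen ((i0:ℕ) - 1) := fun hh => hna (Or.inr hh)
        omega
      rw [VD_update_zero i0 h1 h2, zero_div]
    have : ∑ i0 ∈ Finset.univ.filter (fun i0 : Fin N => Addable μ (i0 : ℕ)),
            VD (Function.update (vbet μ N) i0 (vbet μ N i0 + 1)) / VD (vdel N)
        = ∑ i0 : Fin N, VD (Function.update (vbet μ N) i0 (vbet μ N i0 + 1)) / VD (vdel N) := by
      rw [← Finset.sum_filter_add_sum_filter_not Finset.univ (fun i0 : Fin N => Addable μ (i0 : ℕ))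
        (fun i0 => VD (Function.update (vbet μ N) i0 (vbet μ N i0 + 1)) / VD (vdel N))]
      rw [Finset.sum_eq_zero ext0, add_zero]
    rw [this, ← Finset.sum_div, sum_VD_update, g_eq μ hc]
    rw [mul_div_assoc]
  · -- too many rows: everything vanishes
    push_neg at hc
    rw [fPoly_zero hc, zero_div, mul_zero]
    apply Finset.sum_eq_zero
    intro i hi
    have hmem : ((N : ℕ), (0 : ℕ)) ∈ addBox μ i :=
      subset_addBox (YoungDiagram.mem_iff_lt_colLen.mpr hc)
    have : N < (addBox μ i).colLen 0 := YoungDiagram.mem_iff_lt_colLen.mp hmem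
    rw [fPoly_zero this, zero_div]

variable {n : ℕ}

lemma entry_mem {T : SYT n} {c : ℕ × ℕ} (hc : c ∈ T.shape.cells) :
    1 ≤ T.entry c ∧ T.entry c ≤ n := by
  have := T.bijOn.mapsTo (by exact_mod_cast hc)
  rwa [Set.mem_Icc] at this

lemma mem_cells_iff_entry {T : SYT n} (c : ℕ × ℕ) :
    c ∈ T.shape.cells ↔ T.entry c ≠ 0 := by
  constructor
  · intro h; have := entry_mem h; omega
  · intro h; by_contra hc; exact h (T.zero_outside c hc)

lemma SYT.ext' {T T' : SYT n} (h : T.entry = T'.entry) : T = T' := by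
  have hs : T.shape = T'.shape := by
    apply YoungDiagram.ext
    apply Finset.ext
    intro c
    rw [mem_cells_iff_entry, mem_cells_iff_entry, h]
  cases T; cases T'
  simp only at hs h
  subst hs; subst h
  rfl

lemma entry_lt_entry {T : SYT n} {a b c d : ℕ} (h1 : a ≤ c) (h2 : b ≤ d)
    (hne : (a, b) ≠ (c, d)) (hcd : (c, d) ∈ T.shape.cells) :
    T.entry (a, b) < T.entry (c, d) := by
  rcases Nat.lt_or_ge a c with hac | hac
  · rcases Nat.lt_or_ge b d with hbd | hbd
    · have had : (a, d) ∈ T.shape.cells := by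
        rw [YoungDiagram.mem_cells] at hcd ⊢
        exact T.shape.up_left_mem h1 le_rfl hcd
      exact lt_trans (T.row_lt a b d hbd had) (T.col_lt a c d hac hcd)
    · have hbd' : b = d := le_antisymm h2 hbd
      subst hbd'
      exact T.col_lt a c b hac hcd
  · have hac' : a = c := le_antisymm h1 hac
    subst hac'
    have hbd : b < d := by
      rcases Nat.lt_or_ge b d with h | h
      · exact h
      · exact absurd (by rw [le_antisymm h2 h]) hne
    exact T.row_lt a b d hbd hcd

lemma le_entry {T : SYT n} : ∀ i j, (i, j) ∈ T.shape.cells → i + j + 1 ≤ T.entry (i, j) := by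
  have aux : ∀ k i j, i + j = k → (i, j) ∈ T.shape.cells → i + j + 1 ≤ T.entry (i, j) := by
    intro k
    induction k using Nat.strong_induction_on with
    | _ k ih =>
      intro i j hk hij
      rcases Nat.eq_zero_or_pos k with rfl | hkpos
      · have := entry_mem hij; omega
      · rcases Nat.eq_zero_or_pos i with rfl | hipos
        · have hj : 0 < j := by omega
          have hmem : (0, j - 1) ∈ T.shape.cells := by
            rw [YoungDiagram.mem_cells] at hij ⊢
            exact T.shape.up_left_mem le_rfl (by omega) hij
          have hlt := T.row_lt 0 (j - 1) j (by omega) hij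
          have := ih (k - 1) (by omega) 0 (j - 1) (by omega) hmem
          omega
        · have hmem : (i - 1, j) ∈ T.shape.cells := by
            rw [YoungDiagram.mem_cells] at hij ⊢
            exact T.shape.up_left_mem (by omega) le_rfl hij
          have hlt := T.col_lt (i - 1) i j (by omega) hij
          have := ih (k - 1) (by omega) (i - 1) j (by omega) hmem
          omega
  exact fun i j h => aux (i + j) i j rfl h

lemma cell_lt {T : SYT n} {c : ℕ × ℕ} (hc : c ∈ T.shape.cells) : c.1 < n ∧ c.2 < n := by
  obtain ⟨a, b⟩ := c
  have h1 := le_entry a b hc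
  have h2 := entry_mem hc
  omega

instance : Finite (SYT n) := by
  apply Finite.of_injective
    (f := fun T : SYT n => fun p : Fin n × Fin n =>
      (⟨T.entry ((p.1 : ℕ), (p.2 : ℕ)), by
        by_cases h : T.entry ((p.1 : ℕ), (p.2 : ℕ)) ≤ n
        · omega
        · exfalso
          have hmem : ((p.1 : ℕ), (p.2 : ℕ)) ∈ T.shape.cells := by
            rw [mem_cells_iff_entry]; omega
          have := entry_mem hmem
          omega⟩ : Fin (n + 1)))
  intro T T' h
  apply SYT.ext'
  funext c
  obtain ⟨a, b⟩ := c
  by_cases hab : a < n ∧ b < n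
  · have := congrFun h (⟨a, hab.1⟩, ⟨b, hab.2⟩)
    simpa using this
  · have h1 : (a, b) ∉ T.shape.cells := fun hc => hab ⟨(cell_lt hc).1, (cell_lt hc).2⟩
    have h2 : (a, b) ∉ T'.shape.cells := fun hc => hab ⟨(cell_lt hc).1, (cell_lt hc).2⟩
    rw [T.zero_outside _ h1, T'.zero_outside _ h2]

noncomputable instance : Fintype (SYT n) := Fintype.ofFinite _

/-- the empty tableau -/
def emptySYT : SYT 0 where
  shape := ⊥
  entry := fun _ => 0
  zero_outside := fun _ _ => rfl
  bijOn := by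
    have h1 : ((⊥ : YoungDiagram).cells : Set (ℕ × ℕ)) = ∅ := by
      rw [YoungDiagram.cells_bot]; simp
    have h2 : (Set.Icc 1 0 : Set ℕ) = ∅ := by
      apply Set.Icc_eq_empty; omega
    rw [h1, h2]
    exact ⟨fun c hc => absurd hc (Set.notMem_empty c),
      fun c hc => absurd hc (Set.notMem_empty c),
      fun c hc => absurd hc (Set.notMem_empty c)⟩
  row_lt := by
    intro i j1 j2 _ h
    rw [YoungDiagram.cells_bot] at h
    exact absurd h (by simp)
  col_lt := by
    intro i1 i2 j _ h
    rw [YoungDiagram.cells_bot] at h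
    exact absurd h (by simp)

instance : Unique (SYT 0) where
  default := emptySYT
  uniq := by
    intro T
    apply SYT.ext'
    funext c
    have : c ∉ T.shape.cells := by
      intro hc
      have := entry_mem hc
      omega
    rw [T.zero_outside c this]
    rfl

section Step

variable {n : ℕ} (T : SYT (n + 1))

lemma exists_top : ∃ c, c ∈ T.shape.cells ∧ T.entry c = n + 1 := by
  have : (n + 1 : ℕ) ∈ Set.Icc 1 (n + 1) := by rw [Set.mem_Icc]; omega
  obtain ⟨c, hc, hc2⟩ := T.bijOn.surjOn this
  exact ⟨c, by exact_mod_cast hc, hc2⟩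

noncomputable def topCell : ℕ × ℕ := Classical.choose (exists_top T)

lemma topCell_mem : topCell T ∈ T.shape.cells := (Classical.choose_spec (exists_top T)).1

lemma entry_topCell : T.entry (topCell T) = n + 1 := (Classical.choose_spec (exists_top T)).2

lemma eq_topCell {c : ℕ × ℕ} (hc : c ∈ T.shape.cells) (he : T.entry c = n + 1) :
    c = topCell T := by
  apply T.bijOn.injOn (by exact_mod_cast hc) (by exact_mod_cast topCell_mem T)
  rw [he, entry_topCell]

attribute [irreducible] topCell

lemma entry_lt_top {c : ℕ × ℕ} (hc : c ∈ T.shape.cells) (hne : c ≠ topCell T) :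
    T.entry c ≤ n := by
  have h1 := entry_mem hc
  rcases Nat.lt_or_ge (T.entry c) (n + 1) with h | h
  · omega
  · exfalso
    exact hne (eq_topCell T hc (by omega))

/-- delete the box containing `n+1` -/
noncomputable def delTop : SYT n where
  shape :=
    { cells := T.shape.cells.erase (topCell T)
      isLowerSet := by
        intro a b hba ha
        obtain ⟨a1, a2⟩ := a
        obtain ⟨b1, b2⟩ := b
        simp only [Finset.coe_erase, Set.mem_diff, Finset.mem_coe, Set.mem_singleton_iff] at ha ⊢
        obtain ⟨ha1, ha2⟩ := ha
        obtain ⟨hle1, hle2⟩ := Prod.mk_le_mk.mp hba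
        have hb1 : (b1, b2) ∈ T.shape.cells := by
          have := T.shape.isLowerSet hba ((YoungDiagram.mem_cells _).mp ha1)
          exact (YoungDiagram.mem_cells _).mpr this
        refine ⟨hb1, ?_⟩
        intro h
        have hne : (b1, b2) ≠ (a1, a2) := by
          intro hh
          exact ha2 (by rw [← hh, h])
        have hlt := entry_lt_entry (T := T) hle1 hle2 hne ha1
        rw [h, entry_topCell] at hlt
        have := entry_mem ha1
        omega }
  entry := fun c => if c = topCell T then 0 else T.entry c
  zero_outside := by
    intro c hc
    simp only [Finset.mem_erase] at hc
    push_neg at hc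
    by_cases h : c = topCell T
    · rw [if_pos h]
    · rw [if_neg h]
      exact T.zero_outside c (hc h)
  bijOn := by
    constructor
    · intro c hc
      dsimp only
      simp only [Finset.coe_erase, Set.mem_diff, Finset.mem_coe, Set.mem_singleton_iff] at hc
      rw [if_neg hc.2, Set.mem_Icc]
      exact ⟨(entry_mem hc.1).1, entry_lt_top T hc.1 hc.2⟩
    constructor
    · intro c hc c' hc' he
      dsimp only at he
      simp only [Finset.coe_erase, Set.mem_diff, Finset.mem_coe, Set.mem_singleton_iff] at hc hc'
      rw [if_neg hc.2, if_neg hc'.2] at he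
      exact T.bijOn.injOn (by exact_mod_cast hc.1) (by exact_mod_cast hc'.1) he
    · intro m hm
      rw [Set.mem_Icc] at hm
      have hm' : m ∈ Set.Icc 1 (n + 1) := by rw [Set.mem_Icc]; omega
      obtain ⟨c, hc, hce⟩ := T.bijOn.surjOn hm'
      have hc' : c ∈ T.shape.cells := by exact_mod_cast hc
      have hne : c ≠ topCell T := by
        intro hh
        rw [hh, entry_topCell] at hce
        omega
      refine ⟨c, ?_, ?_⟩
      · simp only [Finset.coe_erase, Set.mem_diff, Finset.mem_coe, Set.mem_singleton_iff]
        exact ⟨hc', hne⟩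
      · dsimp only
        rw [if_neg hne, hce]
  row_lt := by
    intro i j1 j2 hj h
    rw [Finset.mem_erase] at h
    have h1 : (i, j1) ∈ T.shape.cells := by
      rw [YoungDiagram.mem_cells] at h ⊢
      exact T.shape.up_left_mem le_rfl hj.le h.2
    have hlt := T.row_lt i j1 j2 hj h.2
    have hne1 : (i, j1) ≠ topCell T := by
      intro hh
      rw [hh, entry_topCell] at hlt
      have := entry_mem h.2
      omega
    rw [if_neg hne1, if_neg h.1]
    exact hlt
  col_lt := by
    intro i1 i2 j hi h
    rw [Finset.mem_erase] at h
    have h1 : (i1, j) ∈ T.shape.cells := by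
      rw [YoungDiagram.mem_cells] at h ⊢
      exact T.shape.up_left_mem hi.le le_rfl h.2
    have hlt := T.col_lt i1 i2 j hi h.2
    have hne1 : (i1, j) ≠ topCell T := by
      intro hh
      rw [hh, entry_topCell] at hlt
      have := entry_mem h.2
      omega
    rw [if_neg hne1, if_neg h.1]
    exact hlt

noncomputable def rowIdx : ℕ := (topCell T).1

lemma delTop_cells : (delTop T).shape.cells = T.shape.cells.erase (topCell T) := rfl

lemma delTop_entry (c : ℕ × ℕ) :
    (delTop T).entry c = if c = topCell T then 0 else T.entry c := rfl

lemma rowLen_le_iff' {μ : YoungDiagram} {i t : ℕ} : μ.rowLen i ≤ t ↔ (i, t) ∉ μ := by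
  rw [YoungDiagram.mem_iff_lt_rowLen]; omega

lemma topCell_snd : T.shape.rowLen (rowIdx T) = (topCell T).2 + 1 := by
  have h1 : (topCell T) ∈ T.shape := (YoungDiagram.mem_cells _).mp (topCell_mem T)
  have h2 : ((topCell T).1, (topCell T).2 + 1) ∉ T.shape := by
    intro hmem
    have hlt := T.row_lt (topCell T).1 (topCell T).2 ((topCell T).2 + 1) (by omega)
      ((YoungDiagram.mem_cells _).mpr hmem)
    rw [Prod.mk.eta, entry_topCell] at hlt
    have := entry_mem ((YoungDiagram.mem_cells _).mpr hmem)
    omega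
  have h3 := rowLen_le_iff'.mpr h2
  have h4 : (topCell T).2 < T.shape.rowLen (topCell T).1 := by
    rw [← YoungDiagram.mem_iff_lt_rowLen]
    exact h1
  unfold rowIdx
  omega

lemma delTop_rowLen_top : (delTop T).shape.rowLen (rowIdx T) = (topCell T).2 := by
  apply le_antisymm
  · apply rowLen_le_iff'.mpr
    intro hmem
    rw [← YoungDiagram.mem_cells, delTop_cells, Finset.mem_erase] at hmem
    exact hmem.1 Prod.mk.eta
  · rcases Nat.eq_zero_or_pos (topCell T).2 with h0 | h0
    · omega
    · have hmem : ((rowIdx T), (topCell T).2 - 1) ∈ (delTop T).shape.cells := by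
        rw [delTop_cells, Finset.mem_erase]
        constructor
        · intro hh
          have := congrArg Prod.snd hh
          simp only at this
          omega
        · rw [YoungDiagram.mem_cells]
          have htc := (YoungDiagram.mem_cells _).mp (topCell_mem T)
          exact T.shape.up_left_mem le_rfl (by omega) htc
      have := YoungDiagram.mem_iff_lt_rowLen.mp ((YoungDiagram.mem_cells _).mp hmem)
      omega

lemma delTop_rowLen_ne {a : ℕ} (ha : a ≠ rowIdx T) :
    (delTop T).shape.rowLen a = T.shape.rowLen a := by
  have hmemiff : ∀ j, ((a, j) ∈ (delTop T).shape ↔ (a, j) ∈ T.shape) := by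
    intro j
    rw [← YoungDiagram.mem_cells, ← YoungDiagram.mem_cells, delTop_cells, Finset.mem_erase]
    constructor
    · exact fun h => h.2
    · intro h
      refine ⟨?_, h⟩
      intro hh
      exact ha (congrArg Prod.fst hh)
  apply le_antisymm
  · rcases Nat.eq_zero_or_pos ((delTop T).shape.rowLen a) with h0 | h0
    · omega
    · have h1 : (a, (delTop T).shape.rowLen a - 1) ∈ (delTop T).shape :=
        YoungDiagram.mem_iff_lt_rowLen.mpr (by omega)
      have := YoungDiagram.mem_iff_lt_rowLen.mp ((hmemiff _).mp h1)
      omega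
  · rcases Nat.eq_zero_or_pos (T.shape.rowLen a) with h0 | h0
    · omega
    · have h1 : (a, T.shape.rowLen a - 1) ∈ T.shape :=
        YoungDiagram.mem_iff_lt_rowLen.mpr (by omega)
      have := YoungDiagram.mem_iff_lt_rowLen.mp ((hmemiff _).mpr h1)
      omega

lemma addable_delTop : Addable (delTop T).shape (rowIdx T) := by
  have hr : rowIdx T = (topCell T).1 := rfl
  rcases Nat.eq_zero_or_pos (rowIdx T) with h0 | h0
  · exact Or.inl h0
  · right
    rw [delTop_rowLen_top, delTop_rowLen_ne T (by omega)]
    have hmem : ((rowIdx T) - 1, (topCell T).2) ∈ T.shape := by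
      have htc := (YoungDiagram.mem_cells _).mp (topCell_mem T)
      exact T.shape.up_left_mem (by omega) le_rfl htc
    exact YoungDiagram.mem_iff_lt_rowLen.mp hmem

lemma rowIdx_mem_addables : rowIdx T ∈ addables (delTop T).shape := by
  have hr : rowIdx T = (topCell T).1 := rfl
  rw [mem_addables]
  refine ⟨addable_delTop T, ?_⟩
  rcases Nat.eq_zero_or_pos (rowIdx T) with h0 | h0
  · omega
  · have hmem : ((rowIdx T) - 1, 0) ∈ (delTop T).shape.cells := by
      rw [delTop_cells, Finset.mem_erase]
      constructor
      · intro hh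
        have h2 := congrArg Prod.snd hh
        have h1 := congrArg Prod.fst hh
        simp only at h1 h2
        have h3 := topCell_snd T
        unfold rowIdx at h1
        omega
      · rw [YoungDiagram.mem_cells]
        have htc := (YoungDiagram.mem_cells _).mp (topCell_mem T)
        exact T.shape.up_left_mem (by omega) (Nat.zero_le _) htc
    have := YoungDiagram.mem_iff_lt_colLen.mp ((YoungDiagram.mem_cells _).mp hmem)
    omega

end Step

lemma rowIdx_def {n : ℕ} (T : SYT (n + 1)) : rowIdx T = (topCell T).1 := rfl



/-- add a box with entry `n+1` at row `i` -/
def addTop (T' : SYT n) (i : ℕ) (h : Addable T'.shape i) : SYT (n + 1) where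
  shape := addBox T'.shape i
  entry := fun c => if c = (i, T'.shape.rowLen i) then n + 1 else T'.entry c
  zero_outside := by
    intro c hc
    rw [YoungDiagram.mem_cells, mem_addBox h] at hc
    push_neg at hc
    rw [if_neg hc.2]
    exact T'.zero_outside c (fun hx => hc.1 ((YoungDiagram.mem_cells _).mp hx))
  bijOn := by
    have hmem : ∀ c : ℕ × ℕ, c ∈ (addBox T'.shape i).cells ↔
        c ∈ T'.shape.cells ∨ c = (i, T'.shape.rowLen i) := by
      intro c
      rw [YoungDiagram.mem_cells, mem_addBox h, YoungDiagram.mem_cells]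
    constructor
    · intro c hc
      dsimp only
      rw [Finset.mem_coe, hmem] at hc
      rcases hc with hc | hc
      · have hne : c ≠ (i, T'.shape.rowLen i) := by
          intro hh; rw [hh] at hc
          exact new_not_mem T'.shape i ((YoungDiagram.mem_cells _).mp hc)
        rw [if_neg hne, Set.mem_Icc]
        have := entry_mem hc
        omega
      · rw [if_pos hc, Set.mem_Icc]
        omega
    constructor
    · intro c hc c' hc' he
      dsimp only at he
      rw [Finset.mem_coe, hmem] at hc hc'
      rcases hc with hc | hc <;> rcases hc' with hc' | hc'
      · have hne : c ≠ (i, T'.shape.rowLen i) := by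
          intro hh; rw [hh] at hc
          exact new_not_mem T'.shape i ((YoungDiagram.mem_cells _).mp hc)
        have hne' : c' ≠ (i, T'.shape.rowLen i) := by
          intro hh; rw [hh] at hc'
          exact new_not_mem T'.shape i ((YoungDiagram.mem_cells _).mp hc')
        rw [if_neg hne, if_neg hne'] at he
        exact T'.bijOn.injOn (by exact_mod_cast hc) (by exact_mod_cast hc') he
      · exfalso
        have hne : c ≠ (i, T'.shape.rowLen i) := by
          intro hh; rw [hh] at hc
          exact new_not_mem T'.shape i ((YoungDiagram.mem_cells _).mp hc)
        rw [if_neg hne, if_pos hc'] at he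
        have := entry_mem hc
        omega
      · exfalso
        have hne' : c' ≠ (i, T'.shape.rowLen i) := by
          intro hh; rw [hh] at hc'
          exact new_not_mem T'.shape i ((YoungDiagram.mem_cells _).mp hc')
        rw [if_pos hc, if_neg hne'] at he
        have := entry_mem hc'
        omega
      · rw [hc, hc']
    · intro m hm
      rw [Set.mem_Icc] at hm
      by_cases hm1 : m = n + 1
      · refine ⟨(i, T'.shape.rowLen i), ?_, ?_⟩
        · rw [Finset.mem_coe, hmem]; right; rfl
        · dsimp only; rw [if_pos rfl, hm1]
      · have hm2 : m ∈ Set.Icc 1 n := by rw [Set.mem_Icc]; omega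
        obtain ⟨c, hc, hce⟩ := T'.bijOn.surjOn hm2
        have hc' : c ∈ T'.shape.cells := by exact_mod_cast hc
        have hne : c ≠ (i, T'.shape.rowLen i) := by
          intro hh; rw [hh] at hc'
          exact new_not_mem T'.shape i ((YoungDiagram.mem_cells _).mp hc')
        refine ⟨c, ?_, ?_⟩
        · rw [Finset.mem_coe, hmem]; left; exact hc'
        · dsimp only; rw [if_neg hne, hce]
  row_lt := by
    intro a j1 j2 hj h2
    rw [YoungDiagram.mem_cells, mem_addBox h] at h2
    rcases h2 with h2 | h2
    · have h1 : (a, j1) ∈ T'.shape := T'.shape.up_left_mem le_rfl hj.le h2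
      have hne2 : (a, j2) ≠ (i, T'.shape.rowLen i) := by
        intro hh; rw [hh] at h2; exact new_not_mem T'.shape i h2
      have hne1 : (a, j1) ≠ (i, T'.shape.rowLen i) := by
        intro hh; rw [hh] at h1; exact new_not_mem T'.shape i h1
      rw [if_neg hne1, if_neg hne2]
      exact T'.row_lt a j1 j2 hj ((YoungDiagram.mem_cells _).mpr h2)
    · have ha : a = i := congrArg Prod.fst h2
      have hj2 : j2 = T'.shape.rowLen i := congrArg Prod.snd h2
      have h1 : (a, j1) ∈ T'.shape := by
        rw [ha, YoungDiagram.mem_iff_lt_rowLen]; omega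
      have hne1 : (a, j1) ≠ (i, T'.shape.rowLen i) := by
        intro hh
        have := congrArg Prod.snd hh
        simp only at this
        omega
      rw [if_pos h2, if_neg hne1]
      have := entry_mem ((YoungDiagram.mem_cells _).mpr h1)
      omega
  col_lt := by
    intro a1 a2 j ha h2
    rw [YoungDiagram.mem_cells, mem_addBox h] at h2
    rcases h2 with h2 | h2
    · have h1 : (a1, j) ∈ T'.shape := T'.shape.up_left_mem ha.le le_rfl h2
      have hne2 : (a2, j) ≠ (i, T'.shape.rowLen i) := by
        intro hh; rw [hh] at h2; exact new_not_mem T'.shape i h2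
      have hne1 : (a1, j) ≠ (i, T'.shape.rowLen i) := by
        intro hh; rw [hh] at h1; exact new_not_mem T'.shape i h1
      rw [if_neg hne1, if_neg hne2]
      exact T'.col_lt a1 a2 j ha ((YoungDiagram.mem_cells _).mpr h2)
    · have ha2 : a2 = i := congrArg Prod.fst h2
      have hji : j = T'.shape.rowLen i := congrArg Prod.snd h2
      have hi0 : i ≠ 0 := by omega
      have hrl : T'.shape.rowLen i < T'.shape.rowLen (i - 1) := by
        rcases h with h | h
        · exact absurd h hi0
        · exact h
      have hup : (i - 1, T'.shape.rowLen i) ∈ T'.shape :=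
        YoungDiagram.mem_iff_lt_rowLen.mpr hrl
      have h1 : (a1, j) ∈ T'.shape := by
        rw [hji]
        exact T'.shape.up_left_mem (by omega) le_rfl hup
      have hne1 : (a1, j) ≠ (i, T'.shape.rowLen i) := by
        intro hh
        have := congrArg Prod.fst hh
        simp only at this
        omega
      rw [if_pos h2, if_neg hne1]
      have := entry_mem ((YoungDiagram.mem_cells _).mpr h1)
      omega

lemma addTop_shape (T' : SYT n) (i : ℕ) (h : Addable T'.shape i) :
    (addTop T' i h).shape = addBox T'.shape i := rfl

lemma addTop_entry (T' : SYT n) (i : ℕ) (h : Addable T'.shape i) (c : ℕ × ℕ) :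
    (addTop T' i h).entry c = if c = (i, T'.shape.rowLen i) then n + 1 else T'.entry c := rfl

lemma topCell_addTop (T' : SYT n) (i : ℕ) (h : Addable T'.shape i) :
    topCell (addTop T' i h) = (i, T'.shape.rowLen i) := by
  symm
  apply eq_topCell
  · rw [addTop_shape, YoungDiagram.mem_cells, mem_addBox h]
    right; rfl
  · rw [addTop_entry, if_pos rfl]

lemma delTop_addTop (T' : SYT n) (i : ℕ) (h : Addable T'.shape i) :
    delTop (addTop T' i h) = T' := by
  apply SYT.ext'
  funext c
  rw [delTop_entry, topCell_addTop, addTop_entry]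
  by_cases hc : c = (i, T'.shape.rowLen i)
  · rw [if_pos hc, hc]
    symm
    apply T'.zero_outside
    rw [YoungDiagram.mem_cells]
    exact new_not_mem T'.shape i
  · rw [if_neg hc, if_neg hc]

lemma rowIdx_addTop (T' : SYT n) (i : ℕ) (h : Addable T'.shape i) :
    rowIdx (addTop T' i h) = i := by
  rw [rowIdx_def, topCell_addTop]

lemma addTop_delTop (T : SYT (n + 1)) :
    addTop (delTop T) (rowIdx T) (addable_delTop T) = T := by
  apply SYT.ext'
  funext c
  rw [addTop_entry]
  have hnew : ((rowIdx T), (delTop T).shape.rowLen (rowIdx T)) = topCell T := by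
    rw [delTop_rowLen_top, rowIdx_def]
  rw [hnew, delTop_entry]
  by_cases hc : c = topCell T
  · rw [if_pos hc, hc, entry_topCell]
  · rw [if_neg hc, if_neg hc]

lemma sum_step (G : YoungDiagram → ℂ) :
    ∑ T : SYT (n + 1), G T.shape
      = ∑ T' : SYT n, ∑ i ∈ addables T'.shape, G (addBox T'.shape i) := by
  rw [Finset.sum_sigma' Finset.univ (fun T' : SYT n => addables T'.shape)
    (fun T' i => G (addBox T'.shape i))]
  symm
  apply Finset.sum_bij
    (i := fun (p : Σ _ : SYT n, ℕ) (hp : p ∈ (Finset.univ).sigma fun T' : SYT n => addables T'.shape)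
      => addTop p.1 p.2 (mem_addables.mp (Finset.mem_sigma.mp hp).2).1)
  · intro p hp
    exact Finset.mem_univ _
  · intro p hp q hq heq
    obtain ⟨T1, i1⟩ := p
    obtain ⟨T2, i2⟩ := q
    have h1 : T1 = T2 := by
      rw [← delTop_addTop T1 i1 (mem_addables.mp (Finset.mem_sigma.mp hp).2).1, heq,
        delTop_addTop]
    have h2 : i1 = i2 := by
      rw [← rowIdx_addTop T1 i1 (mem_addables.mp (Finset.mem_sigma.mp hp).2).1, heq,
        rowIdx_addTop]
    subst h1; subst h2; rfl
  · intro T _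
    refine ⟨⟨delTop T, rowIdx T⟩, ?_, ?_⟩
    · rw [Finset.mem_sigma]
      exact ⟨Finset.mem_univ _, rowIdx_mem_addables T⟩
    · exact addTop_delTop T
  · intro p hp
    rfl

theorem main_induction (N : ℕ) : ∀ n : ℕ,
    ∑ᶠ T : SYT n, fPoly T.shape N / (hookProd T.shape : ℂ) = (N : ℂ) ^ n := by
  intro n
  induction n with
  | zero =>
    rw [finsum_eq_sum_of_fintype]
    rw [Fintype.sum_unique]
    have hshape : (default : SYT 0).shape = (⊥ : YoungDiagram) := by
      apply YoungDiagram.ext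
      apply Finset.ext
      intro c
      rw [YoungDiagram.cells_bot]
      simp only [Finset.notMem_empty, iff_false]
      intro hc
      have := entry_mem hc
      omega
    rw [hshape]
    rw [fPoly, hookProd, YoungDiagram.cells_bot]
    simp
  | succ n ih =>
    rw [finsum_eq_sum_of_fintype] at ih ⊢
    rw [sum_step (fun μ => fPoly μ N / (hookProd μ : ℂ))]
    have : ∀ T' : SYT n, ∑ i ∈ addables T'.shape,
        fPoly (addBox T'.shape i) N / (hookProd (addBox T'.shape i) : ℂ)
        = N * (fPoly T'.shape N / (hookProd T'.shape : ℂ)) := fun T' => corner_sum _ N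
    rw [Finset.sum_congr rfl (fun T' _ => this T')]
    rw [← Finset.mul_sum, ih]
    ring

end

end SumDimAux

end AuxProofs

/-- **Completeness of dimensions.**  For every `n ≥ 1` and `N ≥ 1`, the dimensions of the
irreducible invariant subspaces sum to the full dimension:
`∑_{T ∈ SYT_n} f_T(N)/H(T) = N^n`.  (The sum is a `finsum`: there are only finitely
many standard Young tableaux with `n` boxes.) -/
theorem sum_dim_eq_pow {n N : ℕ} (hn : 1 ≤ n) (hN : 1 ≤ N) :
    ∑ᶠ T : SYT n, fPoly T.shape N / (hookProd T.shape : ℂ) = (N : ℂ) ^ n := by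
  exact SumDimAux.main_induction N n
end
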